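/- arXiv:1412.0231 — 10 statements merged into one kernel-verified Lean document; each statement's English description precedes it below -/
import Mathlib

section
/- Let (d_k, ..., d_0) be a 1089 (n,b)-palintiple (i.e., a symmetric (n,b)-palintiple with n+1 dividing b) with k+1 digits. Then for every integer b̂ with b̂ > n·b and b̂ ≡ n·b (mod b²−1), there exists an asymmetric (b, b̂)-palintiple with k+2 digits whose carries ĉ_0, ĉ_1, ..., ĉ_{k+2} satisfy ĉ_0 = 0, ĉ_j = d_{j−1} for 1 ≤ j ≤ k+1, and ĉ_{k+2} = 0; that is, its carry sequence is (d_k, d_{k−1}, ..., d_0, 0). -/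
open Finset Polynomial

/-- `d 0, ..., d k` are the `k+1` digits (least significant first) of an
`(n,b)`-palintiple. -/
def IsPalintiple (n b : ℤ) (k : ℕ) (d : ℕ → ℤ) : Prop :=
  1 < n ∧ n < b ∧ 1 ≤ k ∧
  (∀ j ≤ k, 0 ≤ d j ∧ d j ≤ b - 1) ∧ d k ≠ 0 ∧ d 0 ≠ 0 ∧
  (∑ j ∈ range (k + 1), d j * b ^ j) = n * ∑ j ∈ range (k + 1), d (k - j) * b ^ j

/-- `c 0, ..., c (k+1)` are the carries of the `(n,b)`-palintiple with digits
`d 0, ..., d k`. -/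
def IsCarries (n b : ℤ) (k : ℕ) (d c : ℕ → ℤ) : Prop :=
  c 0 = 0 ∧ ∀ j ≤ k, n * d (k - j) + c j = d j + b * c (j + 1)

/-- A palintiple with carries `c` is symmetric if `c j = c (k-j)`. -/
def IsSym (k : ℕ) (c : ℕ → ℤ) : Prop := ∀ j ≤ k, c j = c (k - j)

/-- A palintiple with carries `c` is shifted-symmetric if `c j = c (k-j+1)`. -/
def IsShiftedSym (k : ℕ) (c : ℕ → ℤ) : Prop := ∀ j ≤ k, c j = c (k - j + 1)

/-- A palintiple is asymmetric if it is neither symmetric nor shifted-symmetric. -/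
def IsAsym (k : ℕ) (c : ℕ → ℤ) : Prop := ¬ IsSym k c ∧ ¬ IsShiftedSym k c

lemma telescope_sum (n b : ℤ) (k : ℕ) (d c : ℕ → ℤ)
    (hrec : ∀ j ≤ k, n * d (k - j) + c j = d j + b * c (j + 1)) :
    n * ∑ j ∈ range (k + 1), d (k - j) * b ^ j =
      (∑ j ∈ range (k + 1), d j * b ^ j) + c (k + 1) * b ^ (k + 1) - c 0 := by
  have h1 : ∀ j ∈ range (k + 1),
      n * (d (k - j) * b ^ j)
        = d j * b ^ j + (c (j + 1) * b ^ (j + 1) - c j * b ^ j) := by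
    intro j hj
    have h := hrec j (Nat.lt_succ_iff.mp (mem_range.mp hj))
    linear_combination b ^ j * h
  calc n * ∑ j ∈ range (k + 1), d (k - j) * b ^ j
      = ∑ j ∈ range (k + 1), n * (d (k - j) * b ^ j) := by rw [mul_sum]
    _ = ∑ j ∈ range (k + 1),
        (d j * b ^ j + (c (j + 1) * b ^ (j + 1) - c j * b ^ j)) := sum_congr rfl h1
    _ = (∑ j ∈ range (k + 1), d j * b ^ j)
        + ∑ j ∈ range (k + 1), (c (j + 1) * b ^ (j + 1) - c j * b ^ j) :=
        sum_add_distrib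
    _ = _ := by
        rw [Finset.sum_range_sub (fun j => c j * b ^ j)]
        simp only [pow_zero, mul_one]
        ring

set_option maxHeartbeats 1000000 in
/-- **Theorem (singly-derived Hoey palintiples).** If `(d k, ..., d 0)` is a 1089
`(n,b)`-palintiple (symmetric with `n+1 ∣ b`), then for every `b̂ > n·b` with
`b̂ ≡ n·b (mod b²-1)` there is an asymmetric `(k+2)`-digit `(b,b̂)`-palintiple with
carry sequence `(d k, ..., d 0, 0)`. -/
theorem singly_derived_from_1089 (n b : ℤ) (k : ℕ) (d c : ℕ → ℤ)
    (hp : IsPalintiple n b k d) (hc : IsCarries n b k d c)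
    (hsym : IsSym k c) (hdvd : n + 1 ∣ b) :
    ∀ bh : ℤ, n * b < bh → bh ≡ n * b [ZMOD b ^ 2 - 1] →
      ∃ dh ch : ℕ → ℤ,
        IsPalintiple b bh (k + 1) dh ∧ IsCarries b bh (k + 1) dh ch ∧
        IsAsym (k + 1) ch ∧
        ch 0 = 0 ∧ (∀ j, 1 ≤ j → j ≤ k + 1 → ch j = d (j - 1)) ∧ ch (k + 2) = 0 := by
  intro bh hbh hcong
  obtain ⟨hn, hnb, hk, hd, hdk, hd0, hsum⟩ := hp
  obtain ⟨hc0, hrec⟩ := hc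
  have hbpos : (0:ℤ) < b := by linarith
  obtain ⟨t', ht'⟩ := hcong.dvd
  have ht : bh = n * b + (b ^ 2 - 1) * (-t') := by linear_combination -ht'
  set t : ℤ := -t' with htdef
  have hb21 : (0:ℤ) < b ^ 2 - 1 := by nlinarith
  have ht1 : 1 ≤ t := by
    by_contra hcon
    push_neg at hcon
    have htle : t ≤ 0 := by omega
    have : (b ^ 2 - 1) * t ≤ 0 := mul_nonpos_of_nonneg_of_nonpos hb21.le htle
    linarith
  subst ht
  -- carry bounds
  have hcb : ∀ j ≤ k + 1, 0 ≤ c j ∧ c j ≤ n - 1 := by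
    intro j
    induction j with
    | zero => intro _; rw [hc0]; constructor <;> linarith
    | succ j ih =>
      intro hj
      have hj' : j ≤ k := by omega
      obtain ⟨ih0, ih1⟩ := ih (by omega)
      have h := hrec j hj'
      have hdj := hd j hj'
      have hdkj := hd (k - j) (by omega)
      have h1 : 0 ≤ n * d (k - j) := mul_nonneg (by linarith) hdkj.1
      have h2 : n * d (k - j) ≤ n * (b - 1) := mul_le_mul_of_nonneg_left hdkj.2 (by linarith)
      constructor
      · by_contra hcon
        push_neg at hcon
        have hle : c (j + 1) ≤ -1 := by omega
        have : b * c (j + 1) ≤ b * (-1) := mul_le_mul_of_nonneg_left hle hbpos.le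
        nlinarith
      · by_contra hcon
        push_neg at hcon
        have hle : n ≤ c (j + 1) := by omega
        have : b * n ≤ b * c (j + 1) := mul_le_mul_of_nonneg_left hle hbpos.le
        nlinarith
  have htel := telescope_sum n b k d c hrec
  have hck1 : c (k + 1) = 0 := by
    rw [hc0] at htel
    have hmul : c (k + 1) * b ^ (k + 1) = 0 := by linarith
    exact (mul_eq_zero.mp hmul).resolve_right (pow_ne_zero _ (by linarith))
  have hck : c k = 0 := by
    have h := hsym 0 (Nat.zero_le k)
    rw [Nat.sub_zero, hc0] at h
    exact h.symm
  have hnd0 : n * d 0 = d k := by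
    have h := hrec k le_rfl
    rw [Nat.sub_self, hck, hck1] at h
    linarith
  have hd0' : 1 ≤ d 0 := by
    have := (hd 0 (by omega)).1
    omega
  have hdk' : 1 ≤ d k := by
    have := (hd k le_rfl).1
    omega
  have htb : (0:ℤ) < t * b + n := by nlinarith
  set dh : ℕ → ℤ := fun i =>
    if i = 0 then t * d 0
    else if i = k + 1 then (t * b + n) * d 0
    else if i ≤ k then t * d i + (t * b + n) * d (k + 1 - i) + c (i - 1)
    else 0 with hdhdef
  set ch : ℕ → ℤ := fun j => if j = 0 then 0 else if j ≤ k + 1 then d (j - 1) else 0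
    with hchdef
  have hch0 : ch 0 = 0 := by simp [hchdef]
  have hchj : ∀ j, 1 ≤ j → j ≤ k + 1 → ch j = d (j - 1) := by
    intro j h1 h2
    simp only [hchdef]
    rw [if_neg (by omega), if_pos h2]
  have hchtop : ch (k + 2) = 0 := by
    simp only [hchdef]
    rw [if_neg (by omega), if_neg (by omega)]
  have hdh0 : dh 0 = t * d 0 := by simp [hdhdef]
  have hdhtop : dh (k + 1) = (t * b + n) * d 0 := by
    simp [hdhdef]
  have hdhmid : ∀ i, 1 ≤ i → i ≤ k →
      dh i = t * d i + (t * b + n) * d (k + 1 - i) + c (i - 1) := by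
    intro i h1 h2
    simp only [hdhdef]
    rw [if_neg (by omega), if_neg (by omega), if_pos h2]
  clear_value t dh ch
  clear hcong ht' htdef
  have hrech : ∀ j ≤ k + 1,
      b * dh (k + 1 - j) + ch j = dh j + (n * b + (b ^ 2 - 1) * t) * ch (j + 1) := by
    intro j hj
    by_cases hj0 : j = 0
    · subst hj0
      rw [Nat.sub_zero, hdhtop, hch0, hdh0, hchj 1 (by omega) (by omega)]
      norm_num
      ring
    by_cases hjk : j = k + 1
    · subst hjk
      rw [Nat.sub_self, hdh0, hchj (k + 1) (by omega) le_rfl, hdhtop, hchtop,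
        Nat.add_sub_cancel]
      linear_combination (-1 : ℤ) * hnd0
    · have h1j : 1 ≤ j := by omega
      have hjk' : j ≤ k := by omega
      rw [hdhmid (k + 1 - j) (by omega) (by omega), hdhmid j h1j hjk',
        hchj j h1j (by omega), hchj (j + 1) (by omega) (by omega)]
      have e1 : k + 1 - (k + 1 - j) = j := by omega
      have e2 : k + 1 - j - 1 = k - j := by omega
      have e3 : j + 1 - 1 = j := by omega
      rw [e1, e2, e3]
      have hprev : n * d (k + 1 - j) + c (j - 1) = d (j - 1) + b * c j := by
        have h := hrec (j - 1) (by omega)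
        have e4 : k - (j - 1) = k + 1 - j := by omega
        have e5 : j - 1 + 1 = j := by omega
        rw [e4, e5] at h
        exact h
      have hs := hsym j hjk'
      linear_combination (-1 : ℤ) * hprev - b * hs
  refine ⟨dh, ch, ⟨by linarith, by nlinarith, by omega, ?_, ?_, ?_, ?_⟩,
    ⟨hch0, hrech⟩, ⟨?_, ?_⟩, hch0, hchj, hchtop⟩
  · -- digit bounds for dh
    intro j hj
    by_cases hj0 : j = 0
    · subst hj0
      rw [hdh0]
      constructor
      · exact mul_nonneg (by linarith) (by linarith)
      · have p1 : t * d 0 ≤ t * (b - 1) :=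
          mul_le_mul_of_nonneg_left (hd 0 (by omega)).2 (by linarith)
        nlinarith [mul_nonneg (by linarith : (0:ℤ) ≤ t) (by nlinarith : (0:ℤ) ≤ b ^ 2 - b)]
    by_cases hjk : j = k + 1
    · subst hjk
      rw [hdhtop]
      constructor
      · exact mul_nonneg htb.le (by linarith)
      · have p1 : (t * b + n) * d 0 ≤ (t * b + n) * (b - 1) :=
          mul_le_mul_of_nonneg_left (hd 0 (by omega)).2 htb.le
        nlinarith [mul_nonneg (by linarith : (0:ℤ) ≤ t) (by linarith : (0:ℤ) ≤ b - 1)]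
    · have h1j : 1 ≤ j := by omega
      have hjk' : j ≤ k := by omega
      rw [hdhmid j h1j hjk']
      have q1 := hd j hjk'
      have q2 := hd (k + 1 - j) (by omega)
      have q3 := hcb (j - 1) (by omega)
      constructor
      · have r1 : 0 ≤ t * d j := mul_nonneg (by linarith) q1.1
        have r2 : 0 ≤ (t * b + n) * d (k + 1 - j) := mul_nonneg htb.le q2.1
        linarith [q3.1]
      · have u1 : t * d j ≤ t * (b - 1) := mul_le_mul_of_nonneg_left q1.2 (by linarith)
        have u2 : (t * b + n) * d (k + 1 - j) ≤ (t * b + n) * (b - 1) :=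
          mul_le_mul_of_nonneg_left q2.2 htb.le
        nlinarith [q3.2]
  · -- dh (k+1) ≠ 0
    rw [hdhtop]
    exact (mul_pos htb (by linarith)).ne'
  · -- dh 0 ≠ 0
    rw [hdh0]
    exact (mul_pos (by linarith) (by linarith : (0:ℤ) < d 0)).ne'
  · -- the sum identity
    have h := telescope_sum b (n * b + (b ^ 2 - 1) * t) (k + 1) dh ch hrech
    rw [hchtop, hch0] at h
    linarith
  · -- not symmetric
    intro h
    have h0 := h 0 (Nat.zero_le _)
    rw [Nat.sub_zero, hch0, hchj (k + 1) (by omega) le_rfl, Nat.add_sub_cancel] at h0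
    exact hdk h0.symm
  · -- not shifted-symmetric
    intro h
    have hpal : ∀ i ≤ k, d i = d (k - i) := by
      intro i hi
      have hh := h (i + 1) (by omega)
      have e : k + 1 - (i + 1) + 1 = k - i + 1 := by omega
      rw [e, hchj (i + 1) (by omega) (by omega),
        hchj (k - i + 1) (by omega) (by omega)] at hh
      have e2 : k - i + 1 - 1 = k - i := by omega
      have e3 : i + 1 - 1 = i := by omega
      rw [e2, e3] at hh
      exact hh
    have hS : ∑ j ∈ range (k + 1), d (k - j) * b ^ j
        = ∑ j ∈ range (k + 1), d j * b ^ j := by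
      refine sum_congr rfl ?_
      intro j hj
      rw [← hpal j (Nat.lt_succ_iff.mp (mem_range.mp hj))]
    rw [hS] at hsum
    have hSpos : 0 < ∑ j ∈ range (k + 1), d j * b ^ j := by
      have hmem : k ∈ range (k + 1) := self_mem_range_succ k
      have hsle := Finset.single_le_sum (f := fun j => d j * b ^ j)
        (fun i hi => mul_nonneg (hd i (Nat.lt_succ_iff.mp (mem_range.mp hi))).1
          (pow_nonneg hbpos.le i)) hmem
      have hbk := pow_pos hbpos k
      replace hsle : d k * b ^ k ≤ ∑ j ∈ range (k + 1), d j * b ^ j := hsle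
      nlinarith
    nlinarith [mul_pos (show (0:ℤ) < n - 1 by linarith) hSpos]
end

section
/- Let (d_k, ..., d_0) be a 1089 (n,b)-palintiple (a symmetric (n,b)-palintiple with n+1 dividing b) with k+1 digits. Then there do not exist integers n̂, b̂ with 1 < n̂ < b̂ and a (k+3)-digit (n̂, b̂)-palintiple whose carries ĉ_0, ĉ_1, ..., ĉ_{k+3} satisfy ĉ_0 = 0, ĉ_j = d_{j−1} for 1 ≤ j ≤ k+1, and ĉ_{k+2} = 0 (i.e., no doubly-derived palintiple, with carry sequence (0, d_k, ..., d_0, 0), can be derived from a 1089 palintiple). -/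
open Finset Polynomial

/-- The final carry of any palintiple vanishes. -/
lemma carries_last (n b : ℤ) (k : ℕ) (d c : ℕ → ℤ)
    (hp : IsPalintiple n b k d) (hc : IsCarries n b k d c) : c (k + 1) = 0 := by
  obtain ⟨hn1, hnb, hk1, hd, hdk, hd0, hsum⟩ := hp
  obtain ⟨hc0, hrec⟩ := hc
  have hb1 : (1 : ℤ) < b := lt_trans hn1 hnb
  have tele : ∑ j ∈ range (k + 1), (c (j+1) * b ^ (j+1) - c j * b ^ j)
      = c (k+1) * b ^ (k+1) - c 0 * b ^ 0 :=
    Finset.sum_range_sub (fun j => c j * b ^ j) (k + 1)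
  have step : ∑ j ∈ range (k + 1), (c (j+1) * b ^ (j+1) - c j * b ^ j)
      = ∑ j ∈ range (k + 1), (n * d (k - j) * b ^ j - d j * b ^ j) := by
    refine Finset.sum_congr rfl (fun j hj => ?_)
    have hjk : j ≤ k := Nat.lt_succ_iff.mp (Finset.mem_range.mp hj)
    have e := hrec j hjk
    linear_combination (-(b : ℤ) ^ j) * e
  have hzero : ∑ j ∈ range (k + 1), (n * d (k - j) * b ^ j - d j * b ^ j) = 0 := by
    rw [Finset.sum_sub_distrib]
    have : ∑ j ∈ range (k + 1), n * d (k - j) * b ^ j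
        = n * ∑ j ∈ range (k + 1), d (k - j) * b ^ j := by
      rw [Finset.mul_sum]; exact Finset.sum_congr rfl (fun j _ => by ring)
    rw [this, ← hsum, sub_self]
  have : c (k+1) * b ^ (k+1) = 0 := by
    have := tele.symm.trans (step.trans hzero)
    simpa [hc0] using this.symm
  rcases mul_eq_zero.mp this with h | h
  · exact h
  · exact absurd h (pow_ne_zero _ (by linarith))

/-- Carries are bounded: `0 ≤ c j ≤ n - 1`. -/
lemma carries_bound (n b : ℤ) (k : ℕ) (d c : ℕ → ℤ)
    (hp : IsPalintiple n b k d) (hc : IsCarries n b k d c) :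
    ∀ j ≤ k + 1, 0 ≤ c j ∧ c j ≤ n - 1 := by
  obtain ⟨hn1, hnb, hk1, hd, hdk, hd0, hsum⟩ := hp
  obtain ⟨hc0, hrec⟩ := hc
  have hb1 : (1 : ℤ) < b := lt_trans hn1 hnb
  intro j
  induction j with
  | zero => intro _; rw [hc0]; constructor <;> linarith
  | succ i ih =>
    intro hij
    have hik : i ≤ k := by omega
    have hprev := ih (by omega)
    have e := hrec i hik
    have hdi := hd i hik
    have hdki := hd (k - i) (by omega)
    constructor
    · by_contra h
      push_neg at h
      have h1 : c (i + 1) ≤ -1 := by linarith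
      have h2 : b * c (i + 1) ≤ b * (-1) :=
        mul_le_mul_of_nonneg_left h1 (by linarith)
      nlinarith [hdki.1, hprev.1, hdi.2]
    · by_contra h
      push_neg at h
      have h1 : n ≤ c (i + 1) := by linarith
      have h2 : b * n ≤ b * c (i + 1) :=
        mul_le_mul_of_nonneg_left h1 (by linarith)
      nlinarith [hdki.2, hprev.2, hdi.1, hn1]

set_option maxHeartbeats 1000000 in
/-- **Theorem.** No doubly-derived palintiple (carry sequence `(0, d k, ..., d 0, 0)`)
can be derived from a 1089 palintiple. -/
theorem no_doubly_derived_from_1089 (n b : ℤ) (k : ℕ) (d c : ℕ → ℤ)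
    (hp : IsPalintiple n b k d) (hc : IsCarries n b k d c)
    (hsym : IsSym k c) (hdvd : n + 1 ∣ b) :
    ¬ ∃ (nh bh : ℤ) (dh ch : ℕ → ℤ),
        1 < nh ∧ nh < bh ∧
        IsPalintiple nh bh (k + 2) dh ∧ IsCarries nh bh (k + 2) dh ch ∧
        ch 0 = 0 ∧ (∀ j, 1 ≤ j → j ≤ k + 1 → ch j = d (j - 1)) ∧ ch (k + 2) = 0 := by
  rintro ⟨nh, bh, dh, ch, hnh1, hnhbh, hph, hch, hch0, hchd, hchk2⟩
  obtain ⟨hn1, hnb, hk1, hd, hdkne, hd0ne, hsum⟩ := hp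
  obtain ⟨hc0, hrec⟩ := hc
  have hck1 : c (k + 1) = 0 :=
    carries_last n b k d c ⟨hn1, hnb, hk1, hd, hdkne, hd0ne, hsum⟩ ⟨hc0, hrec⟩
  have hck : c k = 0 := by
    have := hsym 0 (Nat.zero_le k)
    simp only [Nat.sub_zero] at this
    rw [← this, hc0]
  -- d k = n * d 0
  have hdk : d k = n * d 0 := by
    have e := hrec k le_rfl
    rw [Nat.sub_self, hck, hck1] at e
    linarith
  have hq1 : 1 ≤ d 0 := by
    have := (hd 0 (Nat.zero_le k)).1
    rcases lt_or_eq_of_le this with h | h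
    · linarith
    · exact absurd h.symm hd0ne
  -- hat palintiple facts
  obtain ⟨hch0', hrech⟩ := hch
  have hchk3 : ch (k + 2 + 1) = 0 := carries_last nh bh (k + 2) dh ch hph ⟨hch0', hrech⟩
  have hbnd := carries_bound nh bh (k + 2) dh ch hph ⟨hch0', hrech⟩ (k + 1) (by omega)
  have hchk1 : ch (k + 1) = d k := by
    have := hchd (k + 1) (by omega) (by omega)
    simpa using this
  have hch1 : ch 1 = d 0 := by
    have := hchd 1 (by omega) (by omega)
    simpa using this
  have hch2 : ch 2 = d 1 := by
    have := hchd 2 (by omega) (by omega)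
    simpa using this
  -- nh ≥ n * d 0 + 1
  have hnq : n * d 0 + 1 ≤ nh := by
    have := hbnd.2
    rw [hchk1, hdk] at this
    linarith
  -- four edge recurrence instances
  have e1 := hrech 0 (by omega)
  rw [Nat.sub_zero, hch0', hch1] at e1
  have e2 := hrech 1 (by omega)
  have h21 : k + 2 - 1 = k + 1 := by omega
  rw [h21, hch1, hch2] at e2
  have e3 := hrech (k + 1) (by omega)
  have h31 : k + 2 - (k + 1) = 1 := by omega
  rw [h31, hchk1, hchk2, hdk] at e3
  have e4 := hrech (k + 2) (by omega)
  rw [Nat.sub_self, hchk2, hchk3] at e4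
  -- from e4 : nh * dh 0 + 0 = dh (k+2) + bh * 0
  have hP : dh (k + 2) = nh * dh 0 := by linarith
  have hQ : dh (k + 1) = nh * dh 1 + n * d 0 := by linarith
  have hA : (nh ^ 2 - 1) * dh 0 = bh * d 0 := by
    rw [hP] at e1; linear_combination e1
  have hB : (nh ^ 2 - 1) * dh 1 = bh * d 1 - nh * (n * d 0) - d 0 := by
    rw [hQ] at e2; linear_combination e2
  set s : ℤ := n * (d 1 * dh (k + 2) - d 0 * dh (k + 1)) - (d 1 * dh 0 - d 0 * dh 1) with hs
  have key : (nh ^ 2 - 1) * s = (d 0) ^ 2 * (n ^ 2 - 1) := by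
    rw [hs, hP, hQ]
    linear_combination (n * d 1 * nh - d 1) * hA + (d 0 - n * d 0 * nh) * hB
  have hnhpos : 0 < nh ^ 2 - 1 := sub_pos.mpr (one_lt_pow₀ hnh1 two_ne_zero)
  have hrhs : 0 < (d 0) ^ 2 * (n ^ 2 - 1) :=
    mul_pos (pow_pos (by linarith) 2) (sub_pos.mpr (one_lt_pow₀ hn1 two_ne_zero))
  have hs0 : 0 < s := by
    by_contra h
    push_neg at h
    have h2 : (nh ^ 2 - 1) * s ≤ 0 := mul_nonpos_of_nonneg_of_nonpos hnhpos.le h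
    rw [key] at h2
    exact absurd h2 (not_le.mpr hrhs)
  have hle : nh ^ 2 - 1 ≤ (d 0) ^ 2 * (n ^ 2 - 1) :=
    calc nh ^ 2 - 1 = (nh ^ 2 - 1) * 1 := (mul_one _).symm
      _ ≤ (nh ^ 2 - 1) * s := mul_le_mul_of_nonneg_left hs0 hnhpos.le
      _ = (d 0) ^ 2 * (n ^ 2 - 1) := key
  have hsq : (n * d 0 + 1) ^ 2 ≤ nh ^ 2 :=
    pow_le_pow_left₀ (by positivity) hnq 2
  have hexp1 : (n * d 0 + 1) ^ 2 = (n * d 0) ^ 2 + 2 * (n * d 0) + 1 := by ring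
  have hexp2 : (d 0) ^ 2 * (n ^ 2 - 1) = (n * d 0) ^ 2 - (d 0) ^ 2 := by ring
  have hm : 1 ≤ n * d 0 := one_le_mul_of_one_le_of_one_le (by linarith) hq1
  have hq2 : 0 ≤ (d 0) ^ 2 := sq_nonneg _
  linarith [hsq, hle, hexp1, hexp2, hm, hq2]
end

section
/- Let (d_1, d_0) be a 2-digit (n,b)-palintiple. If there exists an integer n̂ > max{d_0, d_1} such that (b−n) divides n̂(nb−1), with s = n̂(nb−1)/(b−n), and s·d_1 ≡ d_0 (mod n̂−1), then for every integer α ≥ 1 there exists an asymmetric 3-digit (n̂, b̂)-palintiple with b̂ = s + α(n̂²−1)/gcd(d_0, n̂²−1), whose carries ĉ_0, ĉ_1, ĉ_2, ĉ_3 satisfy ĉ_0 = 0, ĉ_1 = d_0, ĉ_2 = d_1, ĉ_3 = 0 (carry sequence (d_1, d_0, 0)). -/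
open Finset Polynomial

set_option maxHeartbeats 1000000 in
/-- **Corollary.** Asymmetric 3-digit palintiples derived from a 2-digit
`(n,b)`-palintiple `(d 1, d 0)`, with carry sequence `(d 1, d 0, 0)`. -/
theorem asym_existence_from_two_digit (n b : ℤ) (d : ℕ → ℤ)
    (hp : IsPalintiple n b 1 d)
    (nh : ℤ) (hnh : max (d 0) (d 1) < nh)
    (hdvd : b - n ∣ nh * (n * b - 1))
    (s : ℤ) (hs : s = nh * (n * b - 1) / (b - n))
    (hcong : s * d 1 ≡ d 0 [ZMOD nh - 1]) :
    ∀ α : ℤ, 1 ≤ α →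
      ∃ dh ch : ℕ → ℤ,
        IsPalintiple nh (s + α * ((nh ^ 2 - 1) / (Int.gcd (d 0) (nh ^ 2 - 1) : ℤ))) 2 dh ∧
        IsCarries nh (s + α * ((nh ^ 2 - 1) / (Int.gcd (d 0) (nh ^ 2 - 1) : ℤ))) 2 dh ch ∧
        IsAsym 2 ch ∧
        ch 0 = 0 ∧ ch 1 = d 0 ∧ ch 2 = d 1 ∧ ch 3 = 0 := by
  obtain ⟨hn1, hnb, -, hdig, hd1ne, hd0ne, hsum⟩ := hp
  intro α hα
  have hd0pos : 0 < d 0 := lt_of_le_of_ne (hdig 0 (by norm_num)).1 (Ne.symm hd0ne)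
  have hd1pos : 0 < d 1 := lt_of_le_of_ne (hdig 1 (by norm_num)).1 (Ne.symm hd1ne)
  have hkey : d 1 * (b - n) = d 0 * (n * b - 1) := by
    simp [Finset.sum_range_succ] at hsum
    linear_combination hsum
  have hbn : 0 < b - n := by linarith
  have hd01 : d 0 < d 1 := by
    have hfac : 0 < (n - 1) * (b + 1) := mul_pos (by linarith) (by linarith)
    have hlt1 : d 0 * (b - n) < d 0 * (n * b - 1) := by
      apply mul_lt_mul_of_pos_left _ hd0pos
      nlinarith [hfac]
    have hlt2 : d 0 * (b - n) < d 1 * (b - n) := lt_of_lt_of_eq hlt1 hkey.symm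
    exact lt_of_mul_lt_mul_right hlt2 (le_of_lt hbn)
  have hd0nh : d 0 < nh := lt_of_le_of_lt (le_max_left _ _) hnh
  have hd1nh : d 1 < nh := lt_of_le_of_lt (le_max_right _ _) hnh
  have hnh2 : 2 < nh := by linarith
  have hnhsq : nh < nh ^ 2 := by
    rw [pow_two]
    exact (lt_mul_iff_one_lt_left (by linarith)).mpr (by linarith)
  have hgpos' : 0 < Int.gcd (d 0) (nh ^ 2 - 1) := Int.gcd_pos_of_ne_zero_left _ hd0ne
  set g : ℤ := (Int.gcd (d 0) (nh ^ 2 - 1) : ℤ) with hgdef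
  have hgpos : 0 < g := by rw [hgdef]; exact_mod_cast hgpos'
  obtain ⟨q0, hq0⟩ : g ∣ d 0 := Int.gcd_dvd_left _ _
  obtain ⟨m, hm⟩ : g ∣ nh ^ 2 - 1 := Int.gcd_dvd_right _ _
  have hdivm : (nh ^ 2 - 1) / g = m := by
    rw [hm]; exact Int.mul_ediv_cancel_left _ (ne_of_gt hgpos)
  rw [hdivm]
  set bh := s + α * m with hbhdef
  have hs2 : s * (b - n) = nh * (n * b - 1) := by
    rw [hs]; exact Int.ediv_mul_cancel hdvd
  have hsd0 : s * d 0 = nh * d 1 := by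
    have h0 : (s * d 0 - nh * d 1) * (b - n) = 0 := by
      linear_combination d 0 * hs2 - nh * hkey
    rcases mul_eq_zero.mp h0 with h | h
    · linarith
    · linarith
  have hco : IsCoprime g nh := ⟨-m, nh, by linear_combination hm⟩
  obtain ⟨q1, hq1⟩ : g ∣ d 1 :=
    hco.dvd_of_dvd_mul_left ⟨s * q0, by linear_combination -hsd0 + s * hq0⟩
  obtain ⟨t, ht⟩ : (nh - 1) ∣ (d 0 - s * d 1) := hcong.dvd
  have hq0pos : 0 < q0 := by
    have h0 : 0 < g * q0 := by rw [← hq0]; exact hd0pos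
    rcases mul_pos_iff.mp h0 with ⟨_, h⟩ | ⟨h, _⟩
    · exact h
    · linarith
  have hq1pos : 0 < q1 := by
    have h0 : 0 < g * q1 := by rw [← hq1]; exact hd1pos
    rcases mul_pos_iff.mp h0 with ⟨_, h⟩ | ⟨h, _⟩
    · exact h
    · linarith
  have hmpos : 0 < m := by
    have h0 : 0 < g * m := by rw [← hm]; linarith
    rcases mul_pos_iff.mp h0 with ⟨_, h⟩ | ⟨h, _⟩
    · exact h
    · linarith
  have hsnh : nh < s := by
    have h1 : nh * d 0 < nh * d 1 := by
      apply mul_lt_mul_of_pos_left hd01; linarith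
    have h2 : nh * d 0 < s * d 0 := lt_of_lt_of_eq h1 hsd0.symm
    exact lt_of_mul_lt_mul_right h2 (le_of_lt hd0pos)
  have hbhnh : nh < bh := by
    have hαm : 0 < α * m := mul_pos (by linarith) hmpos
    linarith
  have hbhpos : 0 < bh := by linarith
  have hq0m : q0 < m := by
    have h1 : g * q0 < g * m := by
      rw [← hq0, ← hm]; linarith
    exact lt_of_mul_lt_mul_left h1 (le_of_lt hgpos)
  have h5 : nh * d 0 = g * (nh * q0) := by linear_combination nh * hq0
  have hnq0m : nh * q0 < m := by
    have h2 : nh * d 0 < nh ^ 2 - 1 := by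
      have h3 := mul_le_mul_of_nonneg_left (show d 0 ≤ nh - 1 by linarith)
        (show (0:ℤ) ≤ nh by linarith)
      have h4 : nh * (nh - 1) = nh ^ 2 - nh := by ring
      linarith
    have h4 : g * (nh * q0) < g * m := by rw [← h5, ← hm]; exact h2
    exact lt_of_mul_lt_mul_left h4 (le_of_lt hgpos)
  -- key equations
  have E1 : nh * (nh * (α * q0) + d 1) = α * q0 + bh * d 0 := by
    linear_combination (α * q0) * hm - (α * m) * hq0 - hsd0 - d 0 * hbhdef
  have E2 : nh * (-t + α * ((nh + 1) * q1)) + d 0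
      = (-t + α * ((nh + 1) * q1)) + bh * d 1 := by
    linear_combination ht + (α * q1) * hm - (α * m) * hq1 - d 1 * hbhdef
  have hE2' : (nh - 1) * (-t + α * ((nh + 1) * q1)) = bh * d 1 - d 0 := by
    linear_combination E2
  -- digit bounds
  have hdh0pos : 0 < α * q0 := mul_pos (by linarith) hq0pos
  have hdh0ub : α * q0 ≤ bh - 1 := by
    have h6 := mul_le_mul_of_nonneg_left (show q0 ≤ m - 1 by linarith)
      (show (0:ℤ) ≤ α by linarith)
    linarith
  have hdh2pos : 0 < nh * (α * q0) + d 1 := by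
    have := mul_pos (show (0:ℤ) < nh by linarith) hdh0pos
    linarith
  have hdh2ub : nh * (α * q0) + d 1 ≤ bh - 1 := by
    have h8 := mul_le_mul_of_nonneg_left (show nh * q0 ≤ m - 1 by linarith)
      (show (0:ℤ) ≤ α by linarith)
    linarith
  have hdh1pos : 0 < -t + α * ((nh + 1) * q1) := by
    have h9 : bh * 1 ≤ bh * d 1 := mul_le_mul_of_nonneg_left (by linarith) (le_of_lt hbhpos)
    have h10 : 0 < (nh - 1) * (-t + α * ((nh + 1) * q1)) := by
      rw [hE2']; linarith
    rcases mul_pos_iff.mp h10 with ⟨_, h⟩ | ⟨h, _⟩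
    · exact h
    · linarith
  have hdh1ub : -t + α * ((nh + 1) * q1) ≤ bh - 1 := by
    by_contra hcon
    push_neg at hcon
    have h12 : (nh - 1) * bh ≤ (nh - 1) * (-t + α * ((nh + 1) * q1)) :=
      mul_le_mul_of_nonneg_left (by linarith) (by linarith)
    rw [hE2'] at h12
    have h13 : d 1 * bh ≤ (nh - 1) * bh :=
      mul_le_mul_of_nonneg_right (by linarith) (le_of_lt hbhpos)
    linarith
  set dh : ℕ → ℤ := fun j =>
    if j = 0 then α * q0 else if j = 1 then -t + α * ((nh + 1) * q1)
    else if j = 2 then nh * (α * q0) + d 1 else 0 with hdhdef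
  set ch : ℕ → ℤ := fun j =>
    if j = 1 then d 0 else if j = 2 then d 1 else 0 with hchdef
  have hdh0 : dh 0 = α * q0 := by simp [hdhdef]
  have hdh1 : dh 1 = -t + α * ((nh + 1) * q1) := by simp [hdhdef]
  have hdh2 : dh 2 = nh * (α * q0) + d 1 := by simp [hdhdef]
  have hch0 : ch 0 = 0 := by simp [hchdef]
  have hch1 : ch 1 = d 0 := by simp [hchdef]
  have hch2 : ch 2 = d 1 := by simp [hchdef]
  have hch3 : ch 3 = 0 := by simp [hchdef]
  refine ⟨dh, ch, ⟨by linarith, by linarith, by norm_num, ?_, ?_, ?_, ?_⟩,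
    ⟨hch0, ?_⟩, ⟨?_, ?_⟩, hch0, hch1, hch2, hch3⟩
  · intro j hj
    interval_cases j
    · rw [hdh0]; exact ⟨le_of_lt hdh0pos, hdh0ub⟩
    · rw [hdh1]; exact ⟨le_of_lt hdh1pos, hdh1ub⟩
    · rw [hdh2]; exact ⟨le_of_lt hdh2pos, hdh2ub⟩
  · rw [hdh2]; exact ne_of_gt hdh2pos
  · rw [hdh0]; exact ne_of_gt hdh0pos
  · norm_num [Finset.sum_range_succ]
    rw [hdh0, hdh1, hdh2]
    linear_combination -E1 - bh * E2
  · intro j hj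
    interval_cases j
    · norm_num
      rw [hch0, hch1, hdh0, hdh2]
      linear_combination E1
    · norm_num
      rw [hch1, hch2, hdh1]
      linear_combination E2
    · norm_num
      rw [hch2, hch3, hdh0, hdh2]
      ring
  · intro hsymm
    have h := hsymm 0 (by norm_num)
    norm_num [hch0, hch2] at h
    exact hd1ne h.symm
  · intro hss
    have h := hss 1 (by norm_num)
    norm_num [hch1, hch2] at h
    exact absurd h (ne_of_lt hd01)
end

section
/- Let (d_k, ..., d_0) be a shifted-symmetric (n,b)-palintiple with carries c_0, ..., c_{k+1}, and let D = gcd(d_0, b²−1). Suppose n²−1 divides D·c_j for all 0 ≤ j ≤ k, and write q_j = D·c_j/(n²−1). Then for every integer α ≥ 1 such that D divides α(b·d_{k−j+2} + d_j) − (n·q_j + q_{j−1}) for all 0 ≤ j ≤ k (with the conventions d_m = 0 and q_m = 0 whenever m < 0 or m > k), there exists an asymmetric (k+3)-digit (b, b̂)-palintiple with b̂ = α(b²−1)/D, whose carries ĉ_0, ..., ĉ_{k+3} satisfy ĉ_0 = 0, ĉ_j = d_{j−1} for 1 ≤ j ≤ k+1, and ĉ_{k+2} = 0 (carry sequence (0,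 d_k, ..., d_0, 0)). -/
open Finset Polynomial

set_option maxHeartbeats 1600000 in
theorem part2 (n b bh : ℤ) (k : ℕ) (d c ch dh : ℕ → ℤ)
    (hn : 1 < n) (hnb : n < b) (hk : 1 ≤ k) (hb3 : 3 ≤ b)
    (hdig : ∀ j ≤ k, 0 ≤ d j ∧ d j ≤ b - 1) (hd0 : d 0 ≠ 0)
    (hsum : (∑ j ∈ range (k + 1), d j * b ^ j) = n * ∑ j ∈ range (k + 1), d (k - j) * b ^ j)
    (hck1 : c (k + 1) = 0)
    (hcb : ∀ j ≤ k + 1, 0 ≤ c j ∧ c j ≤ n - 1)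
    (hdform : ∀ m ≤ k, (n ^ 2 - 1) * d m = (b - n) * c (m + 1) + (n * b - 1) * c m)
    (hbhge : b + 1 ≤ bh)
    (hch0 : ch 0 = 0)
    (hchv : ∀ m, 1 ≤ m → m ≤ k + 1 → ch m = d (m - 1))
    (hchz : ∀ m, m = 0 ∨ k + 2 ≤ m → ch m = 0)
    (hchb : ∀ m, 0 ≤ ch m ∧ ch m ≤ b - 1)
    (hB0 : ∀ j, 1 ≤ j → j ≤ k + 1 →
      (n ^ 2 - 1) * (b * ch (k + 2 - j) + ch j) = (b ^ 2 - 1) * (n * c j + c (j - 1)))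
    (hkey : ∀ j ≤ k + 2, (b ^ 2 - 1) * dh j
      = bh * (b * ch (k + 3 - j) + ch (j + 1)) - (b * ch (k + 2 - j) + ch j))
    (hcar : ∀ j ≤ k + 2, b * dh (k + 2 - j) + ch j = dh j + bh * ch (j + 1)) :
    IsPalintiple b bh (k + 2) dh ∧ IsCarries b bh (k + 2) dh ch ∧ IsAsym (k + 2) ch := by
  have hbhpos : 0 < bh := by linarith
  have hb2pos : 0 < b ^ 2 - 1 := by nlinarith
  have hd0pos : 1 ≤ d 0 := by have := (hdig 0 (Nat.zero_le _)).1; omega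
  have hbexp : b * (b - 1) = b ^ 2 - b := by ring
  -- bounds on the combinations
  have hA : ∀ j : ℕ, 0 ≤ b * ch (k + 3 - j) + ch (j + 1) ∧
      b * ch (k + 3 - j) + ch (j + 1) ≤ b ^ 2 - 1 := by
    intro j
    obtain ⟨x1, x2⟩ := hchb (k + 3 - j)
    obtain ⟨y1, y2⟩ := hchb (j + 1)
    constructor
    · nlinarith
    · nlinarith
  have hBb : ∀ j : ℕ, 0 ≤ b * ch (k + 2 - j) + ch j ∧
      b * ch (k + 2 - j) + ch j ≤ b ^ 2 - 1 := by
    intro j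
    obtain ⟨x1, x2⟩ := hchb (k + 2 - j)
    obtain ⟨y1, y2⟩ := hchb j
    constructor
    · nlinarith
    · nlinarith
  -- digit bounds
  have hdbnd : ∀ j ≤ k + 2, 0 ≤ dh j ∧ dh j ≤ bh - 1 := by
    intro j hj
    have hkj := hkey j hj
    obtain ⟨hA1, hA2⟩ := hA j
    obtain ⟨hB1, hB2⟩ := hBb j
    constructor
    · -- lower bound
      have hgt : -(b ^ 2 - 1) < (b ^ 2 - 1) * dh j := by
        rw [hkj]
        rcases lt_or_eq_of_le hB2 with hlt | heq
        · have h0 : 0 ≤ bh * (b * ch (k + 3 - j) + ch (j + 1)) :=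
            mul_nonneg (le_of_lt hbhpos) hA1
          linarith
        · obtain ⟨u1, u2⟩ := hchb (k + 2 - j)
          obtain ⟨v1, v2⟩ := hchb j
          have hx : ch (k + 2 - j) = b - 1 := by
            have h1 : b * (b - 1) ≤ b * ch (k + 2 - j) := by linarith
            have h2 : b - 1 ≤ ch (k + 2 - j) := le_of_mul_le_mul_left h1 (by linarith)
            linarith
          have hy : ch j = b - 1 := by
            have : b * ch (k + 2 - j) = b * (b - 1) := by rw [hx]
            linarith
          have hj1 : 1 ≤ j ∧ j ≤ k + 1 := by
            by_contra hcon
            have h0 : ch j = 0 := hchz j (by omega)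
            omega
          have hBeq := hB0 j hj1.1 hj1.2
          rw [hx, hy] at hBeq
          obtain ⟨w1, w2⟩ := hcb j (by omega)
          obtain ⟨w3, w4⟩ := hcb (j - 1) (by omega)
          have h5 : n * c j + c (j - 1) = n ^ 2 - 1 := by
            apply mul_left_cancel₀ (show (b ^ 2 - 1 : ℤ) ≠ 0 by linarith)
            linear_combination (-1 : ℤ) * hBeq
          have hcj : c j = n - 1 := by
            by_contra hcon
            have h6 : c j ≤ n - 2 := by omega
            have h7 : n * c j ≤ n * (n - 2) := mul_le_mul_of_nonneg_left h6 (by linarith)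
            nlinarith
          have hjk : j ≤ k := by
            by_contra hcon
            have hj2 : j = k + 1 := by omega
            rw [hj2, hck1] at hcj
            omega
          have hdj := hdform j hjk
          obtain ⟨z1, z2⟩ := hcb (j + 1) (by omega)
          have t1 : 0 ≤ (b - n) * c (j + 1) := mul_nonneg (by linarith) z1
          have hnb1 : 1 ≤ n * b - 1 := by
            have h6 : (2:ℤ) * 3 ≤ n * b := by
              apply mul_le_mul (by linarith) (by linarith) (by linarith) (by linarith)
            linarith
          have hdjpos : 1 ≤ d j := by
            rw [hcj] at hdj
            have t3 : 0 < (n * b - 1) * (n - 1) := mul_pos (by linarith) (by linarith)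
            by_contra hcon
            push_neg at hcon
            have h7 : d j ≤ 0 := by omega
            have t4 : (n ^ 2 - 1) * d j ≤ 0 :=
              mul_nonpos_of_nonneg_of_nonpos (by nlinarith) h7
            linarith
          have hchj1 : ch (j + 1) = d j := by
            have h := hchv (j + 1) (by omega) (by omega)
            simpa using h
          have hA1' : 1 ≤ b * ch (k + 3 - j) + ch (j + 1) := by
            obtain ⟨x1, _⟩ := hchb (k + 3 - j)
            rw [hchj1]
            have : 0 ≤ b * ch (k + 3 - j) := mul_nonneg (by linarith) x1
            linarith
          have h2 : bh ≤ bh * (b * ch (k + 3 - j) + ch (j + 1)) :=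
            le_mul_of_one_le_right (le_of_lt hbhpos) hA1'
          linarith
      by_contra hneg
      push_neg at hneg
      have h1 : dh j ≤ -1 := by omega
      have h2 : (b ^ 2 - 1) * dh j ≤ (b ^ 2 - 1) * (-1) :=
        mul_le_mul_of_nonneg_left h1 (by linarith)
      linarith
    · -- upper bound
      have hlt : (b ^ 2 - 1) * dh j < (b ^ 2 - 1) * bh := by
        rw [hkj]
        rcases lt_or_eq_of_le hA2 with hlt' | heq
        · have h1 : bh * (b * ch (k + 3 - j) + ch (j + 1)) ≤ bh * (b ^ 2 - 2) :=
            mul_le_mul_of_nonneg_left (by linarith) (le_of_lt hbhpos)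
          nlinarith
        · obtain ⟨u1, u2⟩ := hchb (k + 3 - j)
          obtain ⟨v1, v2⟩ := hchb (j + 1)
          have hx : ch (k + 3 - j) = b - 1 := by
            have h1 : b * (b - 1) ≤ b * ch (k + 3 - j) := by linarith
            have h2 : b - 1 ≤ ch (k + 3 - j) := le_of_mul_le_mul_left h1 (by linarith)
            linarith
          have hy : ch (j + 1) = b - 1 := by
            have : b * ch (k + 3 - j) = b * (b - 1) := by rw [hx]
            linarith
          have hj2 : 2 ≤ j := by
            by_contra hcon
            have h0 : ch (k + 3 - j) = 0 := hchz _ (by omega)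
            omega
          have hjk : j ≤ k := by
            by_contra hcon
            have h0 : ch (j + 1) = 0 := hchz _ (by omega)
            omega
          have hdj : d j = b - 1 := by
            have h := hchv (j + 1) (by omega) (by omega)
            simp only [Nat.add_sub_cancel] at h
            rw [h] at hy
            exact hy
          have hdfj := hdform j hjk
          obtain ⟨w1, w2⟩ := hcb j (by omega)
          obtain ⟨z1, z2⟩ := hcb (j + 1) (by omega)
          have hnb1 : 1 ≤ n * b - 1 := by
            have h6 : (2:ℤ) * 3 ≤ n * b := by
              apply mul_le_mul (by linarith) (by linarith) (by linarith) (by linarith)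
            linarith
          have hcjpos : 1 ≤ c j := by
            by_contra hcon
            push_neg at hcon
            have hc0' : c j ≤ 0 := by omega
            have t1 : (b - n) * c (j + 1) ≤ (b - n) * (n - 1) :=
              mul_le_mul_of_nonneg_left z2 (by linarith)
            have t2 : (n * b - 1) * c j ≤ 0 :=
              mul_nonpos_of_nonneg_of_nonpos (by linarith) hc0'
            rw [hdj] at hdfj
            nlinarith
          obtain ⟨w3, w4⟩ := hcb (j - 1) (by omega)
          have hBeq := hB0 j (by omega) (by omega)
          have hBpos : 1 ≤ b * ch (k + 2 - j) + ch j := by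
            have t5 : n * 1 ≤ n * c j := mul_le_mul_of_nonneg_left hcjpos (by linarith)
            have t6 : (b ^ 2 - 1) * n ≤ (b ^ 2 - 1) * (n * c j + c (j - 1)) :=
              mul_le_mul_of_nonneg_left (by linarith) (by linarith)
            have t7 : 0 < (b ^ 2 - 1) * n := mul_pos hb2pos (by linarith)
            by_contra hcon
            push_neg at hcon
            have hB0' : b * ch (k + 2 - j) + ch j ≤ 0 := by omega
            have t8 : (n ^ 2 - 1) * (b * ch (k + 2 - j) + ch j) ≤ 0 :=
              mul_nonpos_of_nonneg_of_nonpos (by nlinarith) hB0'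
            linarith
          rw [heq]
          linarith
      have hlt2 : dh j < bh := lt_of_mul_lt_mul_left hlt (by linarith)
      omega
  -- positivity of the end digits
  have hdh0pos : 1 ≤ dh 0 := by
    have h := hkey 0 (Nat.zero_le _)
    rw [Nat.sub_zero, Nat.sub_zero, hchz (k + 3) (Or.inr (by omega)),
      hchz (k + 2) (Or.inr (by omega)), hch0, hchv 1 (by omega) (by omega)] at h
    norm_num at h
    by_contra hcon
    push_neg at hcon
    have h1 : dh 0 ≤ 0 := by omega
    have h2 : (b ^ 2 - 1) * dh 0 ≤ 0 := mul_nonpos_of_nonneg_of_nonpos (by linarith) h1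
    nlinarith [mul_pos hbhpos (show (0:ℤ) < d 0 by omega)]
  have hdhk2pos : 1 ≤ dh (k + 2) := by
    have h := hkey (k + 2) le_rfl
    have i1 : k + 3 - (k + 2) = 1 := by omega
    have i2 : k + 2 - (k + 2) = 0 := by omega
    rw [i1, i2, hchz (k + 2 + 1) (Or.inr (by omega)), hchz (k + 2) (Or.inr (by omega)),
      hch0, hchv 1 (by omega) (by omega)] at h
    norm_num at h
    by_contra hcon
    push_neg at hcon
    have h1 : dh (k + 2) ≤ 0 := by omega
    have h2 : (b ^ 2 - 1) * dh (k + 2) ≤ 0 := mul_nonpos_of_nonneg_of_nonpos (by linarith) h1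
    nlinarith [mul_pos hbhpos (mul_pos (show (0:ℤ) < b by linarith) (show (0:ℤ) < d 0 by omega))]
  -- the sum identity
  have hsum2 : (∑ j ∈ range (k + 2 + 1), dh j * bh ^ j)
      = b * ∑ j ∈ range (k + 2 + 1), dh (k + 2 - j) * bh ^ j := by
    have h1 : ∀ j ∈ range (k + 2 + 1), dh j * bh ^ j
        = b * (dh (k + 2 - j) * bh ^ j) + (ch j * bh ^ j - ch (j + 1) * bh ^ (j + 1)) := by
      intro j hjm
      have hj : j ≤ k + 2 := by have := mem_range.mp hjm; omega
      have h := hcar j hj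
      linear_combination (-(bh ^ j)) * h
    rw [Finset.sum_congr rfl h1, Finset.sum_add_distrib]
    have htel : (∑ j ∈ range (k + 2 + 1), (ch j * bh ^ j - ch (j + 1) * bh ^ (j + 1)))
        = ch 0 * bh ^ 0 - ch (k + 2 + 1) * bh ^ (k + 2 + 1) :=
      Finset.sum_range_sub' (fun m => ch m * bh ^ m) (k + 2 + 1)
    rw [htel, hch0, hchz (k + 2 + 1) (Or.inr (by omega)), Finset.mul_sum]
    ring
  refine ⟨⟨by linarith, by linarith, by omega, hdbnd, by omega, by omega, hsum2⟩,
    ⟨hch0, hcar⟩, ?_, ?_⟩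
  · -- not symmetric
    intro hsym
    have hpal : ∀ m ≤ k, d m = d (k - m) := by
      intro m hm
      have h := hsym (m + 1) (by omega)
      have i : k + 2 - (m + 1) = k + 1 - m := by omega
      rw [i, hchv (m + 1) (by omega) (by omega), hchv (k + 1 - m) (by omega) (by omega)] at h
      have i2 : m + 1 - 1 = m := by omega
      have i3 : k + 1 - m - 1 = k - m := by omega
      rw [i2, i3] at h
      exact h
    have hTeq : (∑ j ∈ range (k + 1), d j * b ^ j) = ∑ j ∈ range (k + 1), d (k - j) * b ^ j := by
      apply Finset.sum_congr rfl
      intro j hjm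
      rw [hpal j (by have := mem_range.mp hjm; omega)]
    have hTpos : 1 ≤ ∑ j ∈ range (k + 1), d j * b ^ j := by
      have hle := Finset.single_le_sum (f := fun j => d j * b ^ j)
        (fun i hi => mul_nonneg (hdig i (by have := mem_range.mp hi; omega)).1
          (pow_nonneg (by linarith) i))
        (mem_range.mpr (show 0 < k + 1 by omega))
      simp only [pow_zero, mul_one] at hle
      linarith
    have hcopy := hsum
    rw [← hTeq] at hcopy
    have h2T : 2 * (∑ j ∈ range (k + 1), d j * b ^ j)
        ≤ n * (∑ j ∈ range (k + 1), d j * b ^ j) :=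
      mul_le_mul_of_nonneg_right (by linarith) (by linarith)
    linarith
  · -- not shifted symmetric
    intro hssym
    have h := hssym 1 (by omega)
    have i : k + 2 - 1 + 1 = k + 2 := by omega
    rw [i, hchv 1 (by omega) (by omega), hchz (k + 2) (Or.inr le_rfl)] at h
    norm_num at h
    exact hd0 h

set_option maxHeartbeats 1600000 in
/-- **Theorem (Pudwell palintiples).** Doubly-derived palintiples constructed from a
shifted-symmetric `(n,b)`-palintiple, with carry sequence `(0, d k, ..., d 0, 0)`. -/
theorem doubly_derived_from_shifted_symmetric (n b : ℤ) (k : ℕ) (d c : ℕ → ℤ)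
    (hp : IsPalintiple n b k d) (hc : IsCarries n b k d c)
    (hss : IsShiftedSym k c)
    (D : ℤ) (hD : D = Int.gcd (d 0) (b ^ 2 - 1))
    (hdvd : ∀ j ≤ k, n ^ 2 - 1 ∣ D * c j)
    (q : ℕ → ℤ) (hq : ∀ j ≤ k, q j = D * c j / (n ^ 2 - 1)) :
    ∀ α : ℤ, 1 ≤ α →
      (∀ j ≤ k, D ∣ α * (b * (if 2 ≤ j then d (k - j + 2) else 0) + d j)
        - (n * q j + q (j - 1))) →
      ∃ dh ch : ℕ → ℤ,
        IsPalintiple b (α * ((b ^ 2 - 1) / D)) (k + 2) dh ∧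
        IsCarries b (α * ((b ^ 2 - 1) / D)) (k + 2) dh ch ∧
        IsAsym (k + 2) ch ∧
        ch 0 = 0 ∧ (∀ j, 1 ≤ j → j ≤ k + 1 → ch j = d (j - 1)) ∧ ch (k + 2) = 0 := by
  intro α hα hαdvd
  obtain ⟨hn, hnb, hk, hdig, hdk, hd0, hsum⟩ := hp
  obtain ⟨hc0, hrec⟩ := hc
  have hb3 : 3 ≤ b := by omega
  have hck1 : c (k + 1) = 0 := by
    have h := hss 0 (Nat.zero_le _)
    rw [Nat.sub_zero] at h
    rw [← h, hc0]
  have hd0pos : 1 ≤ d 0 := by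
    have := (hdig 0 (Nat.zero_le _)).1; omega
  have hdkpos : 1 ≤ d k := by
    have := (hdig k le_rfl).1; omega
  -- carry bounds
  have hcb : ∀ j, j ≤ k + 1 → 0 ≤ c j ∧ c j ≤ n - 1 := by
    intro j
    induction j with
    | zero => intro _; rw [hc0]; omega
    | succ m ih =>
      intro hm
      have hm' : m ≤ k := by omega
      have ihm := ih (by omega)
      have e := hrec m hm'
      have hd1 := hdig (k - m) (Nat.sub_le _ _)
      have hd2 := hdig m hm'
      have hnd : 0 ≤ n * d (k - m) := mul_nonneg (by linarith) hd1.1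
      have hbc : b * c (m + 1) = n * d (k - m) + c m - d m := by linarith
      constructor
      · by_contra hneg
        push_neg at hneg
        have h1 : c (m + 1) ≤ -1 := by omega
        have h2 : b * c (m + 1) ≤ b * (-1) := mul_le_mul_of_nonneg_left h1 (by linarith)
        linarith [hd2.2]
      · by_contra hneg
        push_neg at hneg
        have h1 : n ≤ c (m + 1) := by omega
        have h2 : b * n ≤ b * c (m + 1) := mul_le_mul_of_nonneg_left h1 (by linarith)
        have h3 : n * d (k - m) ≤ n * (b - 1) := mul_le_mul_of_nonneg_left hd1.2 (by linarith)
        linarith [hd2.1, ihm.2]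
  -- digit formula
  have hdform : ∀ m ≤ k, (n ^ 2 - 1) * d m = (b - n) * c (m + 1) + (n * b - 1) * c m := by
    intro m hm
    have e1 := hrec m hm
    have e2 := hrec (k - m) (Nat.sub_le _ _)
    rw [Nat.sub_sub_self hm] at e2
    have s1 := hss m hm
    have s2 := hss (k - m) (Nat.sub_le _ _)
    rw [Nat.sub_sub_self hm] at s2
    rw [s2, ← s1] at e2
    linear_combination n * e2 + e1
  -- D facts
  have hb2pos : 0 < b ^ 2 - 1 := by nlinarith
  have hDd0 : D ∣ d 0 := by rw [hD]; exact Int.gcd_dvd_left _ _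
  have hDb2 : D ∣ b ^ 2 - 1 := by rw [hD]; exact Int.gcd_dvd_right _ _
  have hDpos : 0 < D := by
    rcases (lt_or_eq_of_le (by rw [hD]; exact Int.natCast_nonneg _ : (0:ℤ) ≤ D)) with h | h
    · exact h
    · exfalso
      rw [hD] at h
      have : Int.gcd (d 0) (b ^ 2 - 1) = 0 := by exact_mod_cast h.symm
      exact hd0 (Int.gcd_eq_zero_iff.mp this).1
  set E := (b ^ 2 - 1) / D with hE
  have hED : E * D = b ^ 2 - 1 := Int.ediv_mul_cancel hDb2
  have hDle : D ≤ b - 1 := le_trans (Int.le_of_dvd (by omega) hDd0) (hdig 0 (Nat.zero_le _)).2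
  have hEge : b + 1 ≤ E := by
    by_contra h
    push_neg at h
    have h1 : E * D ≤ b * D := mul_le_mul_of_nonneg_right (by omega) (le_of_lt hDpos)
    have h2 : b * D ≤ b * (b - 1) := mul_le_mul_of_nonneg_left hDle (by linarith)
    nlinarith
  set bh := α * E with hbhdef
  have hbhge : b + 1 ≤ bh := by
    have h1 : E ≤ α * E := le_mul_of_one_le_left (by linarith) hα
    linarith
  have hbhpos : 0 < bh := by linarith
  have hn2pos : 0 < n ^ 2 - 1 := by nlinarith
  have hq' : ∀ j ≤ k, (n ^ 2 - 1) * q j = D * c j := by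
    intro j hj
    rw [hq j hj]
    exact Int.mul_ediv_cancel' (hdvd j hj)
  have hq0 : q 0 = 0 := by
    have h := hq' 0 (Nat.zero_le _)
    rw [hc0, mul_zero] at h
    rcases mul_eq_zero.mp h with h' | h'
    · exfalso; omega
    · exact h'
  -- the derived digits and carries
  set ch : ℕ → ℤ := fun m => if 1 ≤ m ∧ m ≤ k + 1 then d (m - 1) else 0 with hch
  set g : ℕ → ℤ := fun j =>
    (α * (b * ch (k + 3 - j) + ch (j + 1)) - (n * q j + q (j - 1))) / D with hg
  set dh : ℕ → ℤ := fun j =>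
    if j ≤ k then g j else if j = k + 1 then b * g 1 + d k else b * g 0 with hdh
  have hch0 : ch 0 = 0 := by simp [hch]
  have hchv : ∀ m, 1 ≤ m → m ≤ k + 1 → ch m = d (m - 1) := by
    intro m h1 h2
    simp only [hch]
    rw [if_pos ⟨h1, h2⟩]
  have hchz : ∀ m, m = 0 ∨ k + 2 ≤ m → ch m = 0 := by
    intro m hm
    simp only [hch]
    rw [if_neg (by omega)]
  have hchb : ∀ m, 0 ≤ ch m ∧ ch m ≤ b - 1 := by
    intro m
    simp only [hch]
    split
    · next h => exact hdig (m - 1) (by omega)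
    · constructor <;> linarith
  -- formula for B in terms of the original carries
  have hB0 : ∀ j, 1 ≤ j → j ≤ k + 1 →
      (n ^ 2 - 1) * (b * ch (k + 2 - j) + ch j) = (b ^ 2 - 1) * (n * c j + c (j - 1)) := by
    intro j h1 h2
    rw [hchv (k + 2 - j) (by omega) (by omega), hchv j h1 h2]
    have hi1 : k + 2 - j - 1 = k + 1 - j := by omega
    rw [hi1]
    have e1 := hdform (k + 1 - j) (by omega)
    have hi2 : k + 1 - j + 1 = k + 2 - j := by omega
    rw [hi2] at e1
    have e2 := hdform (j - 1) (by omega)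
    have hi3 : j - 1 + 1 = j := by omega
    rw [hi3] at e2
    have s1 := hss (j - 1) (by omega)
    have hi4 : k - (j - 1) + 1 = k + 2 - j := by omega
    rw [hi4] at s1
    have s2 : c (k + 1 - j) = c j := by
      rcases Nat.lt_or_ge j (k + 1) with h | h
      · have h' := hss j (by omega)
        have hi5 : k - j + 1 = k + 1 - j := by omega
        rw [hi5] at h'
        exact h'.symm
      · have hj : j = k + 1 := by omega
        subst hj
        have hi6 : k + 1 - (k + 1) = 0 := by omega
        rw [hi6, hc0, hck1]
    rw [← s1, s2] at e1
    linear_combination b * e1 + e2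
  -- the defining divisibility for g
  have hgD : ∀ j ≤ k, D * g j = α * (b * ch (k + 3 - j) + ch (j + 1)) - (n * q j + q (j - 1)) := by
    intro j hj
    have hch1 : ch (j + 1) = d j := by
      have h := hchv (j + 1) (by omega) (by omega)
      simpa using h
    have hch2 : ch (k + 3 - j) = if 2 ≤ j then d (k - j + 2) else 0 := by
      rcases Nat.lt_or_ge j 2 with h | h
      · rw [if_neg (by omega)]
        exact hchz _ (Or.inr (by omega))
      · rw [if_pos h, hchv (k + 3 - j) (by omega) (by omega)]
        congr 1
        omega
    simp only [hg]
    rw [hch1, hch2]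
    exact Int.mul_ediv_cancel' (hαdvd j hj)
  -- B in terms of q
  have hBE : ∀ j ≤ k, b * ch (k + 2 - j) + ch j = E * (n * q j + q (j - 1)) := by
    intro j hj
    rcases Nat.eq_zero_or_pos j with h | h
    · subst h
      rw [hchz (k + 2 - 0) (Or.inr (by omega)), hch0]
      simp [hq0]
    · have hB := hB0 j h (by omega)
      have hq1 := hq' j hj
      have hq2 := hq' (j - 1) (by omega)
      apply mul_left_cancel₀ (show (n ^ 2 - 1 : ℤ) ≠ 0 by linarith)
      rw [hB]
      linear_combination (-(E * n)) * hq1 - E * hq2 - (n * c j + c (j - 1)) * hED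
  -- key identity for g on 0..k
  have hkey0 : ∀ j ≤ k, (b ^ 2 - 1) * g j
      = bh * (b * ch (k + 3 - j) + ch (j + 1)) - (b * ch (k + 2 - j) + ch j) := by
    intro j hj
    calc (b ^ 2 - 1) * g j = E * (D * g j) := by rw [← hED]; ring
      _ = E * (α * (b * ch (k + 3 - j) + ch (j + 1)) - (n * q j + q (j - 1))) := by
          rw [hgD j hj]
      _ = bh * (b * ch (k + 3 - j) + ch (j + 1)) - E * (n * q j + q (j - 1)) := by
          rw [hbhdef]; ring
      _ = bh * (b * ch (k + 3 - j) + ch (j + 1)) - (b * ch (k + 2 - j) + ch j) := by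
          rw [hBE j hj]
  -- key identity for dh on 0..k+2
  have hkey : ∀ j ≤ k + 2, (b ^ 2 - 1) * dh j
      = bh * (b * ch (k + 3 - j) + ch (j + 1)) - (b * ch (k + 2 - j) + ch j) := by
    intro j hj
    rcases Nat.lt_or_ge j (k + 1) with h | h
    · have hj' : j ≤ k := by omega
      have hval : dh j = g j := by simp only [hdh]; rw [if_pos hj']
      rw [hval]
      exact hkey0 j hj'
    rcases (show j = k + 1 ∨ j = k + 2 by omega) with h1 | h1
    · subst h1
      have hval : dh (k + 1) = b * g 1 + d k := by
        simp only [hdh]; rw [if_neg (by omega)]; norm_num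
      rw [hval]
      have h1 := hkey0 1 hk
      have i1 : k + 3 - 1 = k + 2 := by omega
      have i2 : k + 2 - 1 = k + 1 := by omega
      rw [i1, i2] at h1
      have i3 : k + 3 - (k + 1) = 2 := by omega
      have i4 : k + 2 - (k + 1) = 1 := by omega
      rw [i3, i4]
      rw [hchz (k + 2) (Or.inr le_rfl)] at h1 ⊢
      rw [hchv (k + 1) (by omega) le_rfl] at h1 ⊢
      have i5 : k + 1 - 1 = k := by omega
      rw [i5] at h1 ⊢
      linear_combination b * h1
    · subst h1
      have hval : dh (k + 2) = b * g 0 := by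
        simp only [hdh]; rw [if_neg (by omega), if_neg (by omega)]
      rw [hval]
      have h0 := hkey0 0 (Nat.zero_le _)
      rw [Nat.sub_zero, Nat.sub_zero] at h0
      have i1 : k + 3 - (k + 2) = 1 := by omega
      have i2 : k + 2 - (k + 2) = 0 := by omega
      rw [i1, i2]
      rw [hchz (k + 3) (Or.inr (by omega)), hchz (k + 2) (Or.inr le_rfl), hch0] at h0 ⊢
      linear_combination b * h0
  -- the carry recurrence for the new palintiple
  have hcar : ∀ j ≤ k + 2, b * dh (k + 2 - j) + ch j = dh j + bh * ch (j + 1) := by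
    intro j hj
    have h1 := hkey j hj
    have h2 := hkey (k + 2 - j) (by omega)
    have i1 : k + 3 - (k + 2 - j) = j + 1 := by omega
    have i2 : k + 2 - (k + 2 - j) = j := by omega
    have i3 : k + 2 - j + 1 = k + 3 - j := by omega
    rw [i1, i2, i3] at h2
    apply mul_left_cancel₀ (show (b ^ 2 - 1 : ℤ) ≠ 0 by linarith)
    linear_combination b * h2 - h1
  obtain ⟨P1, P2, P3⟩ := part2 n b bh k d c ch dh hn hnb hk hb3 hdig hd0 hsum hck1 hcb
    hdform hbhge hch0 hchv hchz hchb hB0 hkey hcar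
  exact ⟨dh, ch, P1, P2, P3, hch0, hchv, hchz (k + 2) (Or.inr le_rfl)⟩
end

section
/- Let (d_1, d_0) be a 2-digit (n,b)-palintiple with nonzero carry c (so its carries are (c_2, c_1, c_0) = (0, c, 0) with c ≠ 0), and let D = gcd(d_0, b²−1). If n²−1 divides D·c, with quotient q = D·c/(n²−1), and gcd(d_1, D) divides q, then there exist an integer α ≥ 1 and an asymmetric 4-digit (b, b̂)-palintiple with b̂ = α(b²−1)/D whose carries ĉ_0, ..., ĉ_4 satisfy ĉ_0 = 0, ĉ_1 = d_0, ĉ_2 = d_1, ĉ_3 = 0, ĉ_4 = 0 (carry sequence (0, d_1, d_0, 0)). -/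
open Finset Polynomial

set_option maxHeartbeats 1000000 in
/-- **Corollary.** Asymmetric 4-digit palintiples doubly-derived from a 2-digit
`(n,b)`-palintiple `(d 1, d 0)` with nonzero carry `c 1`, carry sequence
`(0, d 1, d 0, 0)`. -/
theorem asym_existence_doubly_derived (n b : ℤ) (d c : ℕ → ℤ)
    (hp : IsPalintiple n b 1 d) (hc : IsCarries n b 1 d c)
    (hcne : c 1 ≠ 0) (hc2 : c 2 = 0)
    (D : ℤ) (hD : D = Int.gcd (d 0) (b ^ 2 - 1))
    (hdvd : n ^ 2 - 1 ∣ D * c 1)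
    (q : ℤ) (hq : q = D * c 1 / (n ^ 2 - 1))
    (hgcd : (Int.gcd (d 1) D : ℤ) ∣ q) :
    ∃ α : ℤ, 1 ≤ α ∧
      ∃ dh ch : ℕ → ℤ,
        IsPalintiple b (α * ((b ^ 2 - 1) / D)) 3 dh ∧
        IsCarries b (α * ((b ^ 2 - 1) / D)) 3 dh ch ∧
        IsAsym 3 ch ∧
        ch 0 = 0 ∧ ch 1 = d 0 ∧ ch 2 = d 1 ∧ ch 3 = 0 ∧ ch 4 = 0 := by
  obtain ⟨hn1, hnb, -, hdig, hd1ne, hd0ne, -⟩ := hp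
  obtain ⟨hc0, hrec⟩ := hc
  have hb3 : 3 ≤ b := by linarith only [hn1, hnb]
  have hd0b := hdig 0 (by norm_num)
  have hd1b := hdig 1 le_rfl
  have hd0pos : 0 < d 0 := lt_of_le_of_ne hd0b.1 (Ne.symm hd0ne)
  have hd1pos : 0 < d 1 := lt_of_le_of_ne hd1b.1 (Ne.symm hd1ne)
  have hd1ge1 : (1:ℤ) ≤ d 1 := hd1pos
  have E1 : n * d 1 = d 0 + b * c 1 := by
    have h := hrec 0 (by norm_num)
    simp only [Nat.sub_zero, hc0] at h
    linarith only [h]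
  have E2 : n * d 0 + c 1 = d 1 := by
    have h := hrec 1 le_rfl
    norm_num [hc2] at h
    linarith only [h]
  have hA : d 1 * (n ^ 2 - 1) = c 1 * (n * b - 1) := by linear_combination n * E1 + E2
  have hB2 : d 0 * (n ^ 2 - 1) = c 1 * (b - n) := by linear_combination E1 + n * E2
  have hn2 : (0 : ℤ) < n ^ 2 - 1 := by
    have h := mul_pos (show (0:ℤ) < n - 1 by linarith only [hn1])
      (show (0:ℤ) < n + 1 by linarith only [hn1])
    linarith only [h]
  have hc1pos : 0 < c 1 := by
    rcases lt_or_gt_of_ne hcne with hneg | hpos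
    · exfalso
      have h1 := mul_pos hd0pos hn2
      have h2 := mul_neg_of_neg_of_pos hneg (show (0:ℤ) < b - n by linarith only [hnb])
      linarith only [hB2, h1, h2]
    · exact hpos
  have hd01 : d 0 < d 1 := by
    have h := mul_pos (show (0:ℤ) < n - 1 by linarith only [hn1]) hd0pos
    linarith only [E2, hc1pos, h]
  have hDpos : 0 < D := by
    rw [hD]
    have hne : Int.gcd (d 0) (b ^ 2 - 1) ≠ 0 := by
      simp [Int.gcd_eq_zero_iff, hd0ne]
    exact_mod_cast Nat.pos_of_ne_zero hne
  have hDne : D ≠ 0 := ne_of_gt hDpos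
  have hD1 : (1:ℤ) ≤ D := hDpos
  have hDd0 : D ∣ d 0 := hD ▸ Int.gcd_dvd_left _ _
  have hDb2 : D ∣ b ^ 2 - 1 := hD ▸ Int.gcd_dvd_right _ _
  have hq' : q * (n ^ 2 - 1) = D * c 1 := by
    rw [hq]; exact Int.ediv_mul_cancel hdvd
  have hqpos : 0 < q := by
    by_contra h
    push_neg at h
    have h1 := mul_nonpos_of_nonpos_of_nonneg h hn2.le
    have h2 := mul_pos hDpos hc1pos
    linarith only [hq', h1, h2]
  have hq1 : (1:ℤ) ≤ q := hqpos
  have hnq : (2:ℤ) ≤ n * q := by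
    have h := mul_le_mul (show (2:ℤ) ≤ n by linarith only [hn1]) hq1 zero_le_one
      (by linarith only [hn1])
    linarith only [h]
  have hne2 : (n ^ 2 - 1) ≠ 0 := ne_of_gt hn2
  have hqd1 : q * (n * b - 1) = D * d 1 := by
    apply mul_right_cancel₀ hne2
    linear_combination (n * b - 1) * hq' - D * hA
  have hqd0 : q * (b - n) = D * d 0 := by
    apply mul_right_cancel₀ hne2
    linear_combination (b - n) * hq' - D * hB2
  -- choose α with D ∣ α * d 1 - n * q, and α large enough
  obtain ⟨α, hα1, hαM, w, hw⟩ :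
      ∃ α : ℤ, 1 ≤ α ∧ D + n * q ≤ α ∧ ∃ w : ℤ, α * d 1 - n * q = D * w := by
    have hgne : ((Int.gcd (d 1) D : ℤ)) ≠ 0 := by
      intro h
      have h' : Int.gcd (d 1) D = 0 := by exact_mod_cast h
      rw [Int.gcd_eq_zero_iff] at h'
      exact hd1ne h'.1
    obtain ⟨q2, hq2⟩ := hgcd
    have hgpos : 0 < Int.gcd (d 1) D := by
      rcases Nat.eq_zero_or_pos (Int.gcd (d 1) D) with h | h
      · exact absurd (by exact_mod_cast h) hgne
      · exact h
    set g : ℤ := (Int.gcd (d 1) D : ℤ) with hgdef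
    set d1' : ℤ := d 1 / g with hd1'def
    set D' : ℤ := D / g with hD'def
    have hd1' : g * d1' = d 1 := Int.mul_ediv_cancel' (Int.gcd_dvd_left _ _)
    have hD' : g * D' = D := Int.mul_ediv_cancel' (Int.gcd_dvd_right _ _)
    have hcop : IsCoprime d1' D' := by
      rw [Int.isCoprime_iff_gcd_eq_one]
      exact Int.gcd_div_gcd_div_gcd hgpos
    obtain ⟨u, v, huv⟩ := hcop
    set α0 : ℤ := u * (n * q2) with hα0def
    set t : ℤ := |α0| + (D + n * q) with htdef
    have hkey : α0 * d 1 - n * q = D * (-(n * q2 * v)) := by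
      linear_combination (-(u * n * q2)) * hd1' - n * hq2 - (n * q2 * v) * hD'
        + (g * n * q2) * huv
    have htnn : 0 ≤ t := by
      have h := abs_nonneg α0
      have := hnq
      linarith only [h, htdef, hD1, hnq]
    have h4 : t * 1 ≤ t * D := mul_le_mul_of_nonneg_left hD1 htnn
    refine ⟨α0 + t * D, ?_, ?_, -(n * q2 * v) + t * d1' * g, ?_⟩
    · linarith only [neg_abs_le α0, h4, htdef, hD1, hnq]
    · linarith only [neg_abs_le α0, h4, htdef, hD1, hnq]
    · linear_combination hkey - (t * D) * hd1'
  have hα0 : 0 < α := by linarith only [hα1]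
  obtain ⟨e0, he0⟩ := hDd0
  obtain ⟨B, hB'⟩ := hDb2
  have hBdiv : (b ^ 2 - 1) / D = B := by
    rw [hB']; exact Int.mul_ediv_cancel_left _ hDne
  simp only [hBdiv]
  have hb2pos : (0:ℤ) < b ^ 2 - 1 := by
    have h := mul_pos (show (0:ℤ) < b - 1 by linarith only [hb3])
      (show (0:ℤ) < b + 1 by linarith only [hb3])
    linarith only [h]
  -- positivity helpers
  have hpos : ∀ x : ℤ, 0 < D * x → 0 < x := by
    intro x hx
    rcases mul_pos_iff.mp hx with ⟨_, h⟩ | ⟨h, _⟩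
    · exact h
    · exact absurd h (not_lt.mpr hDpos.le)
  have hnn : ∀ x : ℤ, 0 ≤ D * x → 0 ≤ x := by
    intro x hx
    by_contra h
    push_neg at h
    have := mul_pos hDpos (neg_pos.mpr h)
    linarith only [hx, this]
  have he0pos : 0 < e0 := hpos _ (he0 ▸ hd0pos)
  have hBpos : 0 < B := hpos _ (hB' ▸ hb2pos)
  have hDled0 : D ≤ d 0 := Int.le_of_dvd hd0pos ⟨e0, he0⟩
  have hBb : b + 1 ≤ B := by
    have h1 := mul_le_mul_of_nonneg_right hDled0 hBpos.le
    have h2 := mul_le_mul_of_nonneg_right hd0b.2 hBpos.le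
    have h3 : (b - 1) * (b + 1) ≤ (b - 1) * B := by
      have : (b - 1) * (b + 1) = b ^ 2 - 1 := by ring
      rw [this]
      calc b ^ 2 - 1 = D * B := hB'
        _ ≤ d 0 * B := h1
        _ ≤ (b - 1) * B := h2
    exact le_of_mul_le_mul_left h3 (by linarith only [hb3])
  have hr : α * (b * d 1) - q = D * (b * w + d 1) := by
    linear_combination b * hw + hqd1
  -- the two nontrivial carry equations
  have eq0 : b * (b * (α * e0)) = α * e0 + (α * B) * d 0 := by
    apply mul_left_cancel₀ hDne
    linear_combination (-(b ^ 2 * α - α)) * he0 + (α * d 0) * hB'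
  have eq1 : b * (b * w + d 1) + d 0 = w + (α * B) * d 1 := by
    apply mul_left_cancel₀ hDne
    linear_combination (-(b ^ 2 - 1)) * hw + (α * d 1) * hB' - hqd0 - b * hqd1
  -- digit bounds
  have hwnn : 0 ≤ w := by
    apply hnn
    rw [← hw]
    have h := mul_le_mul_of_nonneg_left hd1ge1 hα0.le
    linarith only [h, hαM, hD1]
  have hrnn : 0 ≤ b * w + d 1 := by
    apply hnn
    rw [← hr]
    have hbd1 : (1:ℤ) ≤ b * d 1 := by
      have h := mul_le_mul (show (1:ℤ) ≤ b by linarith only [hb3]) hd1ge1 zero_le_one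
        (by linarith only [hb3])
      linarith only [h]
    have h1 := mul_le_mul_of_nonneg_left hbd1 hα0.le
    have h2 := mul_le_mul_of_nonneg_right (show (1:ℤ) ≤ n by linarith only [hn1]) hqpos.le
    linarith only [h1, h2, hαM, hD1]
  have hub0 : α * e0 + 1 ≤ α * B := by
    have h1 : 0 < D * (B - e0) := by
      have heq : D * (B - e0) = (b ^ 2 - 1) - d 0 := by
        linear_combination (-1) * hB' + he0
      rw [heq]
      have h := mul_pos (show (0:ℤ) < b by linarith only [hb3])
        (show (0:ℤ) < b - 1 by linarith only [hb3])
      linarith only [hd0b.2, h]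
    have h2 : 1 ≤ B - e0 := hpos _ h1
    linarith only [mul_le_mul_of_nonneg_left h2 hα0.le, hα1]
  have hub1 : w + 1 ≤ α * B := by
    have h1 : D * (α * B - w) = α * (b ^ 2 - 1 - d 1) + n * q := by
      linear_combination (-α) * hB' + hw
    have h2 : 0 < α * B - w := by
      apply hpos
      rw [h1]
      have hin : (0:ℤ) < b ^ 2 - 1 - d 1 := by
        have h := mul_pos (show (0:ℤ) < b by linarith only [hb3])
          (show (0:ℤ) < b - 1 by linarith only [hb3])
        linarith only [h, hd1b.2]
      linarith only [mul_pos hα0 hin, hnq]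
    linarith only [h2]
  have hub2 : (b * w + d 1) + 1 ≤ α * B := by
    have h1 : D * (α * B - (b * w + d 1)) = α * (b ^ 2 - 1 - b * d 1) + q := by
      linear_combination (-α) * hB' + hr
    have h2 : 0 < α * B - (b * w + d 1) := by
      apply hpos
      rw [h1]
      have hbd := mul_le_mul_of_nonneg_left hd1b.2 (show (0:ℤ) ≤ b by linarith only [hb3])
      have hin : (0:ℤ) < b ^ 2 - 1 - b * d 1 := by linarith only [hbd, hb3]
      linarith only [mul_pos hα0 hin, hq1]
    linarith only [h2]
  have hub3 : b * (α * e0) + 1 ≤ α * B := by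
    have h1 : D * (α * B - b * (α * e0)) = α * (b ^ 2 - 1 - b * d 0) := by
      linear_combination (-α) * hB' + (α * b) * he0
    have h2 : 0 < α * B - b * (α * e0) := by
      apply hpos
      rw [h1]
      have hbd := mul_le_mul_of_nonneg_left hd0b.2 (show (0:ℤ) ≤ b by linarith only [hb3])
      have hin : (0:ℤ) < b ^ 2 - 1 - b * d 0 := by linarith only [hbd, hb3]
      exact mul_pos hα0 hin
    linarith only [h2]
  have hαe0pos : 0 < α * e0 := mul_pos hα0 he0pos
  have hbαe0pos : 0 < b * (α * e0) :=
    mul_pos (show (0:ℤ) < b by linarith only [hb3]) hαe0pos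
  have hbB : b < α * B := by
    have h1 : 1 * B ≤ α * B := mul_le_mul_of_nonneg_right hα1 hBpos.le
    linarith only [h1, hBb]
  refine ⟨α, hα1,
    (fun j => if j = 0 then α * e0 else if j = 1 then w else if j = 2 then b * w + d 1
      else if j = 3 then b * (α * e0) else 0),
    (fun j => if j = 1 then d 0 else if j = 2 then d 1 else 0),
    ⟨by linarith only [hb3], hbB, by norm_num, ?_, ?_, ?_, ?_⟩, ⟨by norm_num, ?_⟩,
    ⟨?_, ?_⟩, by norm_num, by norm_num, by norm_num, by norm_num, by norm_num⟩
  · -- digit bounds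
    intro j hj
    interval_cases j
    · norm_num
      exact ⟨hαe0pos.le, by linarith only [hub0]⟩
    · norm_num
      exact ⟨hwnn, by linarith only [hub1]⟩
    · norm_num
      exact ⟨hrnn, by linarith only [hub2]⟩
    · norm_num
      exact ⟨hbαe0pos.le, by linarith only [hub3]⟩
  · -- dh 3 ≠ 0
    exact ne_of_gt hbαe0pos
  · -- dh 0 ≠ 0
    exact ne_of_gt hαe0pos
  · -- sum equation
    simp only [Finset.sum_range_succ, Finset.sum_range_zero]
    norm_num
    linear_combination (-1 : ℤ) * eq0 - (α * B) * eq1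
  · -- carry recurrence
    intro j hj
    interval_cases j
    · norm_num
      linarith only [eq0]
    · norm_num
      linarith only [eq1]
    · norm_num
    · norm_num
  · -- not symmetric
    intro h
    have h1 := h 1 (by norm_num)
    norm_num at h1
    linarith only [h1, hd01]
  · -- not shifted-symmetric
    intro h
    have h1 := h 1 (by norm_num)
    norm_num at h1
    exact hd0ne h1
end

section
/- Let (d_k, ..., d_0) be a 1089 (n,b)-palintiple (a symmetric (n,b)-palintiple with n+1 dividing b) such that gcd(n, b²−1) = 1. Let m be the multiplicative inverse of n modulo b²−1, and let ℓ be the least non-negative residue of m·b modulo b²−1. Then for every integer b̂ with b̂ > ℓ and b̂ ≡ ℓ (mod b²−1), there exists an asymmetric (k+2)-digit (b, b̂)-palintiple whose carries ĉ_0, ..., ĉ_{k+2} satisfy ĉ_0 = 0, ĉ_j = d_{k−j+1} for 1 ≤ j ≤ k+1, and ĉ_{k+2} = 0 (carry sequence (d_0, d_1, ..., d_k, 0)). -/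
open Finset Polynomial

/-- Carries of the derived palintiple: `(0, d k, d (k-1), ..., d 0, 0)`. -/
def chD (k : ℕ) (d : ℕ → ℤ) (j : ℕ) : ℤ :=
  if j = 0 then 0 else if j ≤ k + 1 then d (k + 1 - j) else 0

/-- Numerator of the derived digits. -/
def ND (b bh : ℤ) (k : ℕ) (d : ℕ → ℤ) (j : ℕ) : ℤ :=
  b * (bh * chD k d (k + 2 - j) - chD k d (k + 1 - j)) + bh * chD k d (j + 1) - chD k d j

/-- Digits of the derived palintiple. -/
def dhD (b bh : ℤ) (k : ℕ) (d : ℕ → ℤ) (j : ℕ) : ℤ := ND b bh k d j / (b ^ 2 - 1)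

lemma chD_zero (k : ℕ) (d : ℕ → ℤ) : chD k d 0 = 0 := by simp [chD]

lemma chD_eq (k : ℕ) (d : ℕ → ℤ) {j : ℕ} (h1 : 1 ≤ j) (h2 : j ≤ k + 1) :
    chD k d j = d (k + 1 - j) := by
  unfold chD
  rw [if_neg (by omega), if_pos h2]

lemma chD_top (k : ℕ) (d : ℕ → ℤ) : chD k d (k + 2) = 0 := by
  unfold chD
  rw [if_neg (by omega), if_neg (by omega)]

lemma ND_zero (b bh : ℤ) (k : ℕ) (d : ℕ → ℤ) : ND b bh k d 0 = bh * d k - b * d 0 := by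
  unfold ND
  rw [show k + 2 - 0 = k + 2 from rfl, show k + 1 - 0 = k + 1 from rfl,
    show (0:ℕ) + 1 = 1 from rfl]
  rw [chD_top, chD_zero, chD_eq k d (j := k + 1) (by omega) le_rfl,
    chD_eq k d (j := 1) le_rfl (by omega)]
  rw [show k + 1 - (k + 1) = 0 from by omega, show k + 1 - 1 = k from by omega]
  ring

lemma ND_top (b bh : ℤ) (k : ℕ) (d : ℕ → ℤ) : ND b bh k d (k + 1) = b * (bh * d k) - d 0 := by
  unfold ND
  rw [show k + 2 - (k + 1) = 1 from by omega, show k + 1 - (k + 1) = 0 from by omega]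
  rw [chD_zero, chD_top, chD_eq k d (j := 1) le_rfl (by omega),
    chD_eq k d (j := k + 1) (by omega) le_rfl]
  rw [show k + 1 - (k + 1) = 0 from by omega, show k + 1 - 1 = k from by omega]
  ring

lemma ND_mid (b bh : ℤ) (k : ℕ) (d : ℕ → ℤ) {j : ℕ} (h1 : 1 ≤ j) (h2 : j ≤ k) :
    ND b bh k d j = b * (bh * d (j - 1) - d j) + bh * d (k - j) - d (k + 1 - j) := by
  unfold ND
  rw [chD_eq k d (j := k + 2 - j) (by omega) (by omega),
      chD_eq k d (j := k + 1 - j) (by omega) (by omega),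
      chD_eq k d (j := j + 1) (by omega) (by omega),
      chD_eq k d h1 (by omega)]
  rw [show k + 1 - (k + 2 - j) = j - 1 from by omega,
      show k + 1 - (k + 1 - j) = j from by omega,
      show k + 1 - (j + 1) = k - j from by omega]

lemma ND_refl (b bh : ℤ) (k : ℕ) (d : ℕ → ℤ) {j : ℕ} (hj : j ≤ k + 1) :
    ND b bh k d (k + 1 - j) = b * (bh * chD k d (j + 1) - chD k d j)
      + bh * chD k d (k + 2 - j) - chD k d (k + 1 - j) := by
  unfold ND
  rw [show k + 2 - (k + 1 - j) = j + 1 from by omega,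
      show k + 1 - (k + 1 - j) = j from by omega,
      show k + 1 - j + 1 = k + 2 - j from by omega]

set_option maxHeartbeats 2000000 in
/-- **Theorem (ρ-Hoey palintiples).** Singly-ρ-derived palintiples constructed from a
1089 `(n,b)`-palintiple with `gcd(n, b²-1) = 1`, with carry sequence
`(d 0, d 1, ..., d k, 0)`. -/
theorem singly_rho_derived_from_1089 (n b : ℤ) (k : ℕ) (d c : ℕ → ℤ)
    (hp : IsPalintiple n b k d) (hc : IsCarries n b k d c)
    (hsym : IsSym k c) (hdvd : n + 1 ∣ b)
    (hgcd : Int.gcd n (b ^ 2 - 1) = 1)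
    (m : ℤ) (hm : n * m ≡ 1 [ZMOD b ^ 2 - 1])
    (l : ℤ) (hl : l = m * b % (b ^ 2 - 1)) :
    ∀ bh : ℤ, l < bh → bh ≡ l [ZMOD b ^ 2 - 1] →
      ∃ dh ch : ℕ → ℤ,
        IsPalintiple b bh (k + 1) dh ∧ IsCarries b bh (k + 1) dh ch ∧
        IsAsym (k + 1) ch ∧
        ch 0 = 0 ∧ (∀ j, 1 ≤ j → j ≤ k + 1 → ch j = d (k + 1 - j)) ∧ ch (k + 2) = 0 := by
  obtain ⟨hn1, hnb, hk1, hdig, hdk, hd0, hsum⟩ := hp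
  obtain ⟨hc0, hrec⟩ := hc
  intro bh hlbh hbhm
  have hb3 : 3 ≤ b := by omega
  have hE : (0:ℤ) < b ^ 2 - 1 := by nlinarith only [hb3]
  have hl0 : 0 ≤ l := by rw [hl]; exact Int.emod_nonneg _ (by omega)
  -- bh ≥ l + (b^2 - 1)
  have hbhe : l + (b ^ 2 - 1) ≤ bh := by
    have h1 : (b ^ 2 - 1) ∣ bh - l := hbhm.symm.dvd
    have h2 : 0 < bh - l := by omega
    have := Int.le_of_dvd h2 h1
    omega
  have hbbh : b < bh := by nlinarith only [hbhe, hl0, hb3]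
  -- the key congruence : b^2 - 1 ∣ n * bh - b
  have hkey : (b ^ 2 - 1) ∣ n * bh - b := by
    have h1 : l ≡ m * b [ZMOD b ^ 2 - 1] := by
      show l % _ = _ % _
      rw [hl]
      exact Int.emod_emod_of_dvd _ dvd_rfl
    have h2 : n * bh ≡ n * (m * b) [ZMOD b ^ 2 - 1] := (hbhm.trans h1).mul_left n
    have h3 : n * (m * b) ≡ 1 * b [ZMOD b ^ 2 - 1] := by
      have := hm.mul_right b
      calc n * (m * b) = n * m * b := by ring
        _ ≡ 1 * b [ZMOD b ^ 2 - 1] := this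
    have h4 : n * bh ≡ b [ZMOD b ^ 2 - 1] := (h2.trans h3).trans (by rw [one_mul])
    have := h4.symm.dvd
    exact this
  have hco : IsCoprime ((b:ℤ) ^ 2 - 1) n :=
    (Int.isCoprime_iff_gcd_eq_one.mpr hgcd).symm
  -- carry bounds
  have hcb : ∀ j, j ≤ k + 1 → 0 ≤ c j ∧ c j ≤ n - 1 := by
    intro j
    induction j with
    | zero => intro _; rw [hc0]; omega
    | succ i ih =>
      intro hij
      have hik : i ≤ k := by omega
      have h1 := hrec i hik
      have h2 := hdig i hik
      have h3 := hdig (k - i) (by omega)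
      have h4 := ih (by omega)
      constructor
      · by_contra hcon
        push_neg at hcon
        have hc1 : c (i + 1) ≤ -1 := by omega
        have : b * c (i + 1) ≤ b * (-1) := by
          apply mul_le_mul_of_nonneg_left hc1 (by omega)
        linarith only [h1, this, h2.2, h4.1,
          mul_nonneg (show (0:ℤ) ≤ n by omega) h3.1]
      · by_contra hcon
        push_neg at hcon
        have hc1 : n ≤ c (i + 1) := by omega
        have : b * n ≤ b * c (i + 1) := by
          apply mul_le_mul_of_nonneg_left hc1 (by omega)
        linarith only [h1, this, h2.1, h4.2,
          mul_le_mul_of_nonneg_left h3.2 (show (0:ℤ) ≤ n by omega)]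
  -- c k = 0
  have hck : c k = 0 := by
    have := hsym 0 (Nat.zero_le k)
    simp only [Nat.sub_zero] at this
    omega
  -- c (k+1) = 0  via telescoping
  have hck1 : c (k + 1) = 0 := by
    have htel := Finset.sum_range_sub' (fun j => c j * b ^ j) (k + 1)
    have hz : ∑ j ∈ range (k + 1), ((fun j => c j * b ^ j) j - (fun j => c j * b ^ j) (j + 1))
        = ∑ j ∈ range (k + 1), (d j * b ^ j - n * (d (k - j) * b ^ j)) := by
      apply Finset.sum_congr rfl
      intro j hj
      have hj' : j ≤ k := by
        have := Finset.mem_range.mp hj; omega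
      simp only
      linear_combination (b:ℤ) ^ j * hrec j hj'
    rw [hz] at htel
    rw [Finset.sum_sub_distrib, ← Finset.mul_sum, hsum] at htel
    simp only [sub_self, hc0, zero_mul, pow_zero] at htel
    have hbp : (0:ℤ) < b ^ (k + 1) := by positivity
    have := htel.symm
    have h0 : c (k + 1) * b ^ (k + 1) = 0 := by linarith
    rcases mul_eq_zero.mp h0 with h | h
    · exact h
    · exact absurd h (by positivity)
  -- d k = n * d 0
  have hdkn : d k = n * d 0 := by
    have := hrec k le_rfl
    rw [Nat.sub_self, hck, hck1] at this
    linarith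
  -- symmetric recurrence
  have hstar : ∀ j, 1 ≤ j → j ≤ k → n * d j + c j = d (k - j) + b * c (j - 1) := by
    intro j h1 h2
    have h3 := hrec (k - j) (by omega)
    rw [show k - (k - j) = j from by omega] at h3
    have h4 : c (k - j) = c j := (hsym j h2).symm
    have h5 : c (k - j + 1) = c (j - 1) := by
      have := hsym (j - 1) (by omega)
      rw [show k - (j - 1) = k - j + 1 from by omega] at this
      exact this.symm
    rw [h4, h5] at h3
    exact h3
  -- introduce the derived carries and digits as opaque data
  obtain ⟨ch, hch0, hchj, hchtop, hchN⟩ :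
      ∃ ch : ℕ → ℤ, ch 0 = 0 ∧ (∀ j, 1 ≤ j → j ≤ k + 1 → ch j = d (k + 1 - j)) ∧
        ch (k + 2) = 0 ∧ ∀ j, b * (bh * ch (k + 2 - j) - ch (k + 1 - j))
          + bh * ch (j + 1) - ch j = ND b bh k d j :=
    ⟨chD k d, chD_zero k d, fun j h1 h2 => chD_eq k d h1 h2, chD_top k d, fun j => rfl⟩
  -- divisibility of the numerators
  have hNdvd : ∀ j, j ≤ k + 1 → (b ^ 2 - 1) ∣ ND b bh k d j := by
    intro j hj
    apply hco.dvd_of_dvd_mul_left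
    rcases Nat.eq_or_lt_of_le hj with hje | hlt
    · -- j = k + 1
      rw [hje, ND_top]
      have : n * (b * (bh * d k) - d 0) = (n * d 0) * (b * (n * bh - b) + (b ^ 2 - 1)) := by
        linear_combination (n * b * bh) * hdkn
      rw [this]
      exact Dvd.dvd.mul_left (dvd_add (Dvd.dvd.mul_left hkey b) dvd_rfl) _
    · rcases Nat.eq_zero_or_pos j with hj0 | hj1
      · rw [hj0, ND_zero]
        have : n * (bh * d k - b * d 0) = (n * d 0) * (n * bh - b) := by
          linear_combination (bh * n) * hdkn
        rw [this]
        exact Dvd.dvd.mul_left hkey _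
      · have hjk : j ≤ k := by omega
        rw [ND_mid b bh k d hj1 hjk]
        have hE1 := hrec (j - 1) (by omega)
        rw [show k - (j - 1) = k + 1 - j from by omega,
            show j - 1 + 1 = j from by omega] at hE1
        have hE2 := hstar j hj1 hjk
        have : n * (b * (bh * d (j - 1) - d j) + bh * d (k - j) - d (k + 1 - j))
            = (n * bh - b) * (b * d (j - 1) + d (k - j))
              + (b ^ 2 - 1) * (d (j - 1) - c (j - 1)) := by
          linear_combination (-1 : ℤ) * hE1 + (-b) * hE2
        rw [this]
        exact dvd_add (hkey.mul_right _) (dvd_mul_right _ _)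
  -- the derived digits
  obtain ⟨dh, hdhval⟩ : ∃ dh : ℕ → ℤ, ∀ j, j ≤ k + 1 →
      ND b bh k d j = (b ^ 2 - 1) * dh j := by
    refine ⟨fun j => ND b bh k d j / (b ^ 2 - 1), fun j hj => ?_⟩
    exact (Int.mul_ediv_cancel' (hNdvd j hj)).symm
  have hNval : ∀ j, j ≤ k + 1 →
      b * (bh * ch (k + 2 - j) - ch (k + 1 - j)) + bh * ch (j + 1) - ch j
        = (b ^ 2 - 1) * dh j := by
    intro j hj
    rw [hchN j]
    exact hdhval j hj
  -- recurrence for the derived palintiple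
  have hrech : ∀ j, j ≤ k + 1 → b * dh (k + 1 - j) + ch j = dh j + bh * ch (j + 1) := by
    intro j hj
    have hA := hNval j hj
    have hB := hNval (k + 1 - j) (by omega)
    rw [show k + 2 - (k + 1 - j) = j + 1 from by omega,
        show k + 1 - (k + 1 - j) = j from by omega,
        show k + 1 - j + 1 = k + 2 - j from by omega] at hB
    have hEne : (b ^ 2 - 1 : ℤ) ≠ 0 := by omega
    apply mul_left_cancel₀ hEne
    linear_combination hA - b * hB
  -- digit bounds
  have hbh1 : (1:ℤ) ≤ bh := by omega
  have hbh0 : (0:ℤ) < bh := by omega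
  -- positivity facts for the extreme digits
  have hd1 : 1 ≤ d k := by have := hdig k le_rfl; omega
  have hdk2 := hdig k le_rfl
  have hd02 := hdig 0 (Nat.zero_le k)
  have hVtop : 0 < b * (bh * d k) - d 0 := by
    have e1 : b * bh * 1 ≤ b * bh * d k := by
      apply mul_le_mul_of_nonneg_left hd1 (by positivity)
    have e2 : b * 1 ≤ b * bh := by
      apply mul_le_mul_of_nonneg_left hbh1 (by omega)
    have e3 : b * (bh * d k) = b * bh * d k := by ring
    linarith
  have hV0 : 0 < bh * d k - b * d 0 := by
    have e1 : bh * 1 ≤ bh * d k := mul_le_mul_of_nonneg_left hd1 (by omega)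
    have e2 : b * d 0 ≤ b * (b - 1) := mul_le_mul_of_nonneg_left hd02.2 (by omega)
    have e3 : b * (b - 1) = b ^ 2 - b := by ring
    linarith
  have hbbsmall : 0 ≤ b * bh - b - 1 := by
    have e1 : 0 ≤ (b - 1) * (bh - 1) := mul_nonneg (by omega) (by omega)
    linarith only [e1, hbbh, hb3]
  have hbound : ∀ j, j ≤ k + 1 → 0 ≤ dh j ∧ dh j ≤ bh - 1 := by
    intro j hj
    have hA := hdhval j hj
    rcases Nat.eq_or_lt_of_le hj with hje | hlt
    · -- j = k+1
      subst hje
      rw [ND_top] at hA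
      constructor
      · by_contra hcon
        push_neg at hcon
        have h2 : (b ^ 2 - 1) * dh (k + 1) ≤ (b ^ 2 - 1) * 0 :=
          mul_le_mul_of_nonneg_left (le_of_lt hcon) (le_of_lt hE)
        rw [mul_zero] at h2
        linarith
      · have e3 : b * (bh * d k) ≤ b * bh * (b - 1) := by
          have := mul_le_mul_of_nonneg_left hdk2.2 (show (0:ℤ) ≤ b * bh by positivity)
          linarith [this, (show b * (bh * d k) = b * bh * d k by ring)]
        have e4 : 0 ≤ (b - 1) * (bh - b - 1) := by
          apply mul_nonneg (by omega)
          nlinarith only [hbhe, hl0, hb3]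
        have h2 : (b ^ 2 - 1) * dh (k + 1) ≤ (b ^ 2 - 1) * (bh - 1) := by
          linarith only [hA, e3, e4, hd02.1]
        exact le_of_mul_le_mul_left h2 hE
    · rcases Nat.eq_zero_or_pos j with hj0 | hj1
      · subst hj0
        rw [ND_zero] at hA
        constructor
        · by_contra hcon
          push_neg at hcon
          have h2 : (b ^ 2 - 1) * dh 0 ≤ (b ^ 2 - 1) * 0 :=
            mul_le_mul_of_nonneg_left (le_of_lt hcon) (le_of_lt hE)
          rw [mul_zero] at h2
          linarith
        · have e3 : bh * d k ≤ bh * (b - 1) := mul_le_mul_of_nonneg_left hdk2.2 (by omega)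
          have e4 : 0 ≤ (b - 1) * (b * bh - b - 1) := mul_nonneg (by omega) hbbsmall
          have h2 : (b ^ 2 - 1) * dh 0 ≤ (b ^ 2 - 1) * (bh - 1) := by
            linarith only [hA, e3, e4, mul_nonneg (show (0:ℤ) ≤ b by omega) hd02.1]
          exact le_of_mul_le_mul_left h2 hE
      · have hjk : j ≤ k := by omega
        rw [ND_mid b bh k d hj1 hjk] at hA
        have h1 := hdig (j - 1) (by omega)
        have h2 := hdig j hjk
        have h3 := hdig (k - j) (by omega)
        have h4 := hdig (k + 1 - j) (by omega)
        have hS := hstar j hj1 hjk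
        have hc1 := hcb j (by omega)
        have hc2 := hcb (j - 1) (by omega)
        have hA' : bh * (b * d (j - 1) + d (k - j)) - (b * d j + d (k + 1 - j))
            = (b ^ 2 - 1) * dh j := by linear_combination hA
        have hS0 : 0 ≤ b * d (j - 1) + d (k - j) := by
          have := mul_nonneg (show (0:ℤ) ≤ b by omega) h1.1
          linarith
        have hS1 : b * d (j - 1) + d (k - j) ≤ b ^ 2 - 1 := by
          have := mul_le_mul_of_nonneg_left h1.2 (show (0:ℤ) ≤ b by omega)
          linarith only [this, h3.2]
        have hT0 : 0 ≤ b * d j + d (k + 1 - j) := by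
          have := mul_nonneg (show (0:ℤ) ≤ b by omega) h2.1
          linarith
        have hT1 : b * d j + d (k + 1 - j) ≤ b ^ 2 - 1 := by
          have := mul_le_mul_of_nonneg_left h2.2 (show (0:ℤ) ≤ b by omega)
          linarith only [this, h4.2]
        constructor
        · by_contra hcon
          push_neg at hcon
          have hq : dh j ≤ -1 := by omega
          have hle : (b ^ 2 - 1) * dh j ≤ (b ^ 2 - 1) * (-1) :=
            mul_le_mul_of_nonneg_left hq (le_of_lt hE)
          -- bh * S ≤ T - (b^2-1) ≤ 0
          have hbhS : bh * (b * d (j - 1) + d (k - j)) ≤ 0 := by linarith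
          have hSz : b * d (j - 1) + d (k - j) = 0 := by
            by_contra hSnz
            have hSge : 1 ≤ b * d (j - 1) + d (k - j) := by omega
            have := mul_le_mul_of_nonneg_left hSge (le_of_lt hbh0)
            rw [mul_one] at this
            linarith
          have hz1 : d (j - 1) = 0 := by
            have hb0 : 0 ≤ b * d (j - 1) := mul_nonneg (by omega) h1.1
            have : b * d (j - 1) = 0 := by linarith
            rcases mul_eq_zero.mp this with h | h
            · omega
            · exact h
          have hz2 : d (k - j) = 0 := by
            rw [hz1, mul_zero] at hSz
            linarith
          have hTz : b * d j + d (k + 1 - j) = b ^ 2 - 1 := by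
            rw [hSz, mul_zero] at hA'
            linarith
          have hdj : d j = b - 1 := by
            by_contra hdjne
            have : d j ≤ b - 2 := by omega
            have := mul_le_mul_of_nonneg_left this (show (0:ℤ) ≤ b by omega)
            linarith only [this, hTz, h4.2, hb3]
          -- contradiction with carry bounds via hstar
          rw [hdj, hz2] at hS
          have : b * c (j - 1) ≤ b * (n - 1) :=
            mul_le_mul_of_nonneg_left hc2.2 (by omega)
          linarith only [hS, this, hc1.1, hnb]
        · by_contra hcon
          push_neg at hcon
          have hq : bh ≤ dh j := by omega
          have hge : (b ^ 2 - 1) * bh ≤ (b ^ 2 - 1) * dh j :=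
            mul_le_mul_of_nonneg_left hq (le_of_lt hE)
          -- bh * (S - (b^2-1)) ≥ T ≥ 0 while S ≤ b^2-1
          have h5 : bh * (b * d (j - 1) + d (k - j) - (b ^ 2 - 1)) ≥ 0 := by
            linarith only [hge, hA', hT0]
          have h6 : bh * (b * d (j - 1) + d (k - j) - (b ^ 2 - 1)) ≤ 0 := by
            apply mul_nonpos_of_nonneg_of_nonpos (by omega)
            linarith
          have hSE : b * d (j - 1) + d (k - j) = b ^ 2 - 1 := by
            have h7 : bh * (b * d (j - 1) + d (k - j) - (b ^ 2 - 1)) = 0 := le_antisymm h6 h5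
            rcases mul_eq_zero.mp h7 with h | h
            · omega
            · linarith
          have hTz : b * d j + d (k + 1 - j) = 0 := by
            have h9 : bh * (b * d (j - 1) + d (k - j)) = bh * (b ^ 2 - 1) := by rw [hSE]
            linarith only [h9, hA', hge, hT0]
          have hdj : d j = 0 := by
            have hb0 : 0 ≤ b * d j := mul_nonneg (by omega) h2.1
            have : b * d j = 0 := by linarith
            rcases mul_eq_zero.mp this with h | h
            · omega
            · exact h
          have hz2 : d (k - j) = b - 1 := by
            by_contra hne
            have hlt2 : d (k - j) ≤ b - 2 ∨ b - 1 < d (k - j) := by omega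
            rcases hlt2 with h | h
            · have h8 : b * d (j - 1) ≤ b * (b - 1) :=
                mul_le_mul_of_nonneg_left h1.2 (by omega)
              linarith only [h, h8, hSE]
            · linarith [h3.2]
          rw [hdj, hz2] at hS
          have : 0 ≤ b * c (j - 1) := mul_nonneg (by omega) hc2.1
          linarith only [hS, this, hc1.2, hnb]
  -- sum equation for derived palintiple
  have hsum2 : (∑ j ∈ range (k + 1 + 1), dh j * bh ^ j)
      = b * ∑ j ∈ range (k + 1 + 1), dh (k + 1 - j) * bh ^ j := by
    have htel := Finset.sum_range_sub' (fun j => ch j * bh ^ j) (k + 2)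
    have hz : ∑ j ∈ range (k + 2), ((fun j => ch j * bh ^ j) j - (fun j => ch j * bh ^ j) (j + 1))
        = ∑ j ∈ range (k + 2), (dh j * bh ^ j - b * (dh (k + 1 - j) * bh ^ j)) := by
      apply Finset.sum_congr rfl
      intro j hj
      have hj' : j ≤ k + 1 := by
        have := Finset.mem_range.mp hj; omega
      simp only
      linear_combination (bh:ℤ) ^ j * hrech j hj'
    rw [hz] at htel
    rw [Finset.sum_sub_distrib, ← Finset.mul_sum] at htel
    rw [hch0, hchtop] at htel
    simp only [zero_mul, sub_zero] at htel
    have : (∑ j ∈ range (k + 2), dh j * bh ^ j)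
        - b * ∑ j ∈ range (k + 2), dh (k + 1 - j) * bh ^ j = 0 := by linarith
    have h2 : (∑ j ∈ range (k + 2), dh j * bh ^ j)
        = b * ∑ j ∈ range (k + 2), dh (k + 1 - j) * bh ^ j := by linarith
    simpa using h2
  refine ⟨dh, ch, ?_, ⟨hch0, fun j hj => hrech j hj⟩, ?_, hch0, hchj, hchtop⟩
  · -- IsPalintiple
    have hdh0 : dh 0 ≠ 0 := by
      have hA := hdhval 0 (Nat.zero_le _)
      rw [ND_zero] at hA
      intro h
      rw [h, mul_zero] at hA
      linarith
    have hdhtop : dh (k + 1) ≠ 0 := by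
      have hA := hdhval (k + 1) le_rfl
      rw [ND_top] at hA
      intro h
      rw [h, mul_zero] at hA
      linarith
    exact ⟨by omega, hbbh, by omega, fun j hj => hbound j hj, hdhtop, hdh0, hsum2⟩
  · -- IsAsym
    constructor
    · intro h
      have h1 := h 0 (Nat.zero_le _)
      rw [Nat.sub_zero, hch0, hchj (k + 1) (by omega) le_rfl] at h1
      rw [show k + 1 - (k + 1) = 0 from by omega] at h1
      exact hd0 h1.symm
    · intro h
      have hpal : ∀ i, i ≤ k → d i = d (k - i) := by
        intro i hi
        have h1 := h (k + 1 - i) (by omega)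
        rw [show k + 1 - (k + 1 - i) + 1 = i + 1 from by omega] at h1
        rw [hchj (k + 1 - i) (by omega) (by omega),
            hchj (i + 1) (by omega) (by omega)] at h1
        rw [show k + 1 - (k + 1 - i) = i from by omega,
            show k + 1 - (i + 1) = k - i from by omega] at h1
        exact h1
      have hsame : ∑ j ∈ range (k + 1), d (k - j) * b ^ j
          = ∑ j ∈ range (k + 1), d j * b ^ j := by
        apply Finset.sum_congr rfl
        intro j hj
        have hj' : j ≤ k := by have := Finset.mem_range.mp hj; omega
        rw [(hpal j hj').symm]
      rw [hsame] at hsum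
      have hpos : 0 < ∑ j ∈ range (k + 1), d j * b ^ j := by
        apply Finset.sum_pos'
        · intro i hi
          have hi' : i ≤ k := by have := Finset.mem_range.mp hi; omega
          have := hdig i hi'
          exact mul_nonneg this.1 (by positivity)
        · refine ⟨0, Finset.mem_range.mpr (by omega), ?_⟩
          have h1 := hdig 0 (by omega)
          have h2 : (0:ℤ) < d 0 := by omega
          simpa using h2
      have h2 : 2 * (∑ j ∈ range (k + 1), d j * b ^ j)
          ≤ n * (∑ j ∈ range (k + 1), d j * b ^ j) :=
        mul_le_mul_of_nonneg_right (by omega) (le_of_lt hpos)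
      linarith only [hsum, hpos, h2]
end

section
/- Let (d_1, d_0) be a 2-digit (n,b)-palintiple. If there exists an integer n̂ > max{d_0, d_1} such that (nb−1) divides n̂(b−n), with s = n̂(b−n)/(nb−1), and s·d_0 ≡ d_1 (mod n̂−1), then for every integer α ≥ 1 there exists an asymmetric 3-digit (n̂, b̂)-palintiple with b̂ = s + α(n̂²−1)/gcd(d_1, n̂²−1), whose carries ĉ_0, ĉ_1, ĉ_2, ĉ_3 satisfy ĉ_0 = 0, ĉ_1 = d_1, ĉ_2 = d_0, ĉ_3 = 0 (carry sequence (d_0, d_1, 0)). -/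
open Finset Polynomial

set_option maxHeartbeats 1000000 in
/-- **Corollary.** Asymmetric 3-digit palintiples singly-ρ-derived from a 2-digit
`(n,b)`-palintiple `(d 1, d 0)`, with carry sequence `(d 0, d 1, 0)`. -/
theorem asym_existence_rho_from_two_digit (n b : ℤ) (d : ℕ → ℤ)
    (hp : IsPalintiple n b 1 d)
    (nh : ℤ) (hnh : max (d 0) (d 1) < nh)
    (hdvd : n * b - 1 ∣ nh * (b - n))
    (s : ℤ) (hs : s = nh * (b - n) / (n * b - 1))
    (hcong : s * d 0 ≡ d 1 [ZMOD nh - 1]) :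
    ∀ α : ℤ, 1 ≤ α →
      ∃ dh ch : ℕ → ℤ,
        IsPalintiple nh (s + α * ((nh ^ 2 - 1) / (Int.gcd (d 1) (nh ^ 2 - 1) : ℤ))) 2 dh ∧
        IsCarries nh (s + α * ((nh ^ 2 - 1) / (Int.gcd (d 1) (nh ^ 2 - 1) : ℤ))) 2 dh ch ∧
        IsAsym 2 ch ∧
        ch 0 = 0 ∧ ch 1 = d 1 ∧ ch 2 = d 0 ∧ ch 3 = 0 := by
  intro α hα
  obtain ⟨hn1, hnb, -, hdig, hd1ne, hd0ne, hsum⟩ := hp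
  simp [Finset.sum_range_succ] at hsum
  have hd0pos : 0 < d 0 := lt_of_le_of_ne (hdig 0 (by norm_num)).1 (Ne.symm hd0ne)
  have hd1pos : 0 < d 1 := lt_of_le_of_ne (hdig 1 le_rfl).1 (Ne.symm hd1ne)
  have hd1n : d 1 < nh := lt_of_le_of_lt (le_max_right _ _) hnh
  have hd0n : d 0 < nh := lt_of_le_of_lt (le_max_left _ _) hnh
  have hn2 : 2 ≤ nh := by linarith
  have hsb : s * (n * b - 1) = nh * (b - n) := by rw [hs]; exact Int.ediv_mul_cancel hdvd
  have hnbpos : 0 < n * b - 1 := by nlinarith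
  have hkey : nh * d 0 = s * d 1 := by
    have h2 : (n * b - 1) * (nh * d 0 - s * d 1) = 0 := by
      linear_combination (- (d 1)) * hsb - nh * hsum
    have := mul_eq_zero.mp h2
    rcases this with h | h
    · exact absurd h (by linarith)
    · linarith
  have hspos : 0 < s := by nlinarith
  have hsn : s < nh := by
    by_contra hc; push_neg at hc
    nlinarith [mul_le_mul_of_nonneg_right hc hnbpos.le,
      mul_pos (show (0:ℤ) < nh by linarith)
        (mul_pos (show (0:ℤ) < n - 1 by linarith) (show (0:ℤ) < b + 1 by linarith))]
  have hd01 : d 0 < d 1 := by nlinarith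
  have hsd0 : d 0 < s := by nlinarith
  have hgd1 : ((Int.gcd (d 1) (nh ^ 2 - 1) : ℤ)) ∣ d 1 := Int.gcd_dvd_left _ _
  have hgM : ((Int.gcd (d 1) (nh ^ 2 - 1) : ℤ)) ∣ nh ^ 2 - 1 := Int.gcd_dvd_right _ _
  have hgpos : (0 : ℤ) < (Int.gcd (d 1) (nh ^ 2 - 1) : ℤ) := by
    exact_mod_cast Int.gcd_pos_iff.mpr (Or.inl hd1ne)
  set G : ℤ := (Int.gcd (d 1) (nh ^ 2 - 1) : ℤ) with hGdef
  have hd1dvd : d 1 ∣ nh * d 0 := ⟨s, by linear_combination hkey⟩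
  have hcop : IsCoprime G nh := by
    have h : IsCoprime (nh ^ 2 - 1) nh := ⟨-1, nh, by ring⟩
    exact h.of_isCoprime_of_dvd_left hgM
  have hGd0 : G ∣ d 0 := hcop.dvd_of_dvd_mul_left (hgd1.trans hd1dvd)
  obtain ⟨e0, he0⟩ := hGd0
  obtain ⟨e1, he1⟩ := hgd1
  obtain ⟨M, hM⟩ := hgM
  have hgne : G ≠ 0 := ne_of_gt hgpos
  have hMdiv : (nh ^ 2 - 1) / G = M := by rw [hM]; exact Int.mul_ediv_cancel_left _ hgne
  rw [hGdef] at hMdiv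
  rw [hMdiv]
  have hdvd1 : nh - 1 ∣ d 1 - s * d 0 := Int.ModEq.dvd hcong
  have he0pos : 0 < e0 := by by_contra hc; push_neg at hc; nlinarith
  have he1pos : 0 < e1 := by by_contra hc; push_neg at hc; nlinarith
  have hMpos : 0 < M := by nlinarith [sq_nonneg nh]
  have hGle : G ≤ d 1 := Int.le_of_dvd hd1pos (by exact ⟨e1, he1⟩)
  have hMn : nh + 1 ≤ M := by
    by_contra hc; push_neg at hc
    nlinarith [mul_le_mul_of_nonneg_left (show M ≤ nh from by linarith) (le_of_lt hgpos)]
  have hMe1 : nh * e1 + 1 ≤ M := by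
    by_contra hc; push_neg at hc
    nlinarith [mul_le_mul_of_nonneg_left (show M ≤ nh * e1 from by linarith) (le_of_lt hgpos),
      mul_le_mul_of_nonneg_left (show d 1 ≤ nh - 1 by linarith) (show (0:ℤ) ≤ nh by linarith)]
  set bh : ℤ := s + α * M with hbhdef
  have hbh : nh < bh := by nlinarith [mul_nonneg (show (0:ℤ) ≤ α - 1 by linarith) (le_of_lt hMpos)]
  have hbhpos : 0 < bh := by linarith
  have hq : nh - 1 ∣ bh * d 0 - d 1 := by
    have hrw : bh * d 0 - d 1 = (α * e0) * (nh ^ 2 - 1) - (d 1 - s * d 0) := by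
      rw [hbhdef]; linear_combination (α * M) * he0 - (α * e0) * hM
    rw [hrw]
    exact dvd_sub ⟨α * e0 * (nh + 1), by ring⟩ hdvd1
  set q1 : ℤ := (bh * d 0 - d 1) / (nh - 1) with hq1def
  have hq1 : q1 * (nh - 1) = bh * d 0 - d 1 := Int.ediv_mul_cancel hq
  have he1M : e1 < M := by nlinarith
  -- bounds
  have hq1pos : 0 < q1 := by
    by_contra hc; push_neg at hc
    nlinarith [mul_nonneg (le_of_lt hbhpos) (show (0:ℤ) ≤ d 0 - 1 by linarith),
      mul_le_mul_of_nonneg_right hc (show (0:ℤ) ≤ nh - 1 by linarith)]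
  have hq1ub : q1 ≤ bh - 1 := by
    by_contra hc; push_neg at hc
    nlinarith [mul_le_mul_of_nonneg_left (show d 0 ≤ nh - 2 by linarith) (le_of_lt hbhpos),
      mul_le_mul_of_nonneg_right (show bh ≤ q1 by linarith) (show (0:ℤ) ≤ nh - 1 by linarith)]
  have hae1pos : 0 < α * e1 := mul_pos (by linarith) he1pos
  have hd2ub : nh * (α * e1) + d 0 ≤ bh - 1 := by
    have h1 : α * (nh * e1 + 1) ≤ α * M := mul_le_mul_of_nonneg_left hMe1 (by linarith)
    rw [hbhdef]; nlinarith
  have hd0ub : α * e1 ≤ bh - 1 := by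
    have h1 : α * e1 ≤ α * M := mul_le_mul_of_nonneg_left (le_of_lt he1M) (by linarith)
    rw [hbhdef]; linarith
  -- carry equations
  have eq0 : nh * (nh * (α * e1) + d 0) + 0 = α * e1 + bh * d 1 := by
    rw [hbhdef]; linear_combination hkey + (α * e1) * hM - (α * M) * he1
  have eq1 : nh * q1 + d 1 = q1 + bh * d 0 := by linear_combination hq1
  refine ⟨fun j => if j = 0 then α * e1 else if j = 1 then q1 else nh * (α * e1) + d 0,
    fun j => if j = 1 then d 1 else if j = 2 then d 0 else 0, ?_, ?_, ?_, ?_, ?_, ?_, ?_⟩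
  · refine ⟨by linarith, hbh, by norm_num, ?_, ?_, ?_, ?_⟩
    · intro j hj
      interval_cases j
      · simp only [if_pos rfl]
        exact ⟨le_of_lt hae1pos, hd0ub⟩
      · norm_num
        exact ⟨le_of_lt hq1pos, by linarith⟩
      · norm_num
        constructor
        · nlinarith
        · linarith
    · norm_num
      intro hc
      nlinarith
    · simp only [if_pos rfl]
      exact ne_of_gt hae1pos
    · simp only [Finset.sum_range_succ]
      norm_num
      linear_combination -eq0 - bh * eq1
  · constructor
    · norm_num
    · intro j hj
      interval_cases j
      · norm_num
        linear_combination eq0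
      · norm_num
        linear_combination eq1
      · norm_num
  · constructor
    · intro h
      have := h 0 (by norm_num)
      norm_num at this
      exact absurd this.symm (by exact ne_of_gt hd0pos)
    · intro h
      have := h 1 (by norm_num)
      norm_num at this
      linarith
  · norm_num
  · norm_num
  · norm_num
  · norm_num
end

section
/- Let (d_k, ..., d_0) be a shifted-symmetric (n,b)-palintiple with carries c_0, ..., c_{k+1}, and let D = gcd(d_k, b²−1). Suppose n²−1 divides D·c_j for all 0 ≤ j ≤ k, and write q_j = D·c_j/(n²−1). Then for every integer α ≥ 1 such that D divides α(b·d_{j−2} + d_{k−j}) − (q_j + n·q_{j−1}) for all 0 ≤ j ≤ k (with the conventions d_m = 0 and q_m = 0 whenever m < 0 or m > k), there exists an asymmetric (k+3)-digit (b, b̂)-palintiple with b̂ = α(b²−1)/D, whose carries ĉ_0, ..., ĉ_{k+3} satisfy ĉ_0 = 0, ĉ_j = d_{k−j+1} for 1 ≤ j ≤ k+1, and ĉ_{k+2} = 0 (carry sequence (0, d_0, d_1, ..., d_k, 0)). -/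
open Finset Polynomial

/-- Truncation of a sequence to integer indices: `0` outside `[0,k]`. -/
def truncZ (k : ℕ) (f : ℕ → ℤ) (m : ℤ) : ℤ :=
  if 0 ≤ m ∧ m ≤ (k : ℤ) then f m.toNat else 0

lemma truncZ_coe (k : ℕ) (f : ℕ → ℤ) (j : ℕ) (h : j ≤ k) :
    truncZ k f (j : ℤ) = f j := by
  simp [truncZ, Int.ofNat_nonneg, h]

lemma truncZ_out (k : ℕ) (f : ℕ → ℤ) (m : ℤ) (h : m < 0 ∨ (k : ℤ) < m) :
    truncZ k f m = 0 := by
  unfold truncZ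
  rw [if_neg]
  omega

set_option maxHeartbeats 2000000 in
/-- **Theorem (ρ-Pudwell palintiples).** Doubly-ρ-derived palintiples constructed from
a shifted-symmetric `(n,b)`-palintiple, with carry sequence
`(0, d 0, d 1, ..., d k, 0)`. -/
theorem doubly_rho_derived_from_shifted_symmetric (n b : ℤ) (k : ℕ) (d c : ℕ → ℤ)
    (hp : IsPalintiple n b k d) (hc : IsCarries n b k d c)
    (hss : IsShiftedSym k c)
    (D : ℤ) (hD : D = Int.gcd (d k) (b ^ 2 - 1))
    (hdvd : ∀ j ≤ k, n ^ 2 - 1 ∣ D * c j)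
    (q : ℕ → ℤ) (hq : ∀ j ≤ k, q j = D * c j / (n ^ 2 - 1)) :
    ∀ α : ℤ, 1 ≤ α →
      (∀ j ≤ k, D ∣ α * (b * (if 2 ≤ j then d (j - 2) else 0) + d (k - j))
        - (q j + n * q (j - 1))) →
      ∃ dh ch : ℕ → ℤ,
        IsPalintiple b (α * ((b ^ 2 - 1) / D)) (k + 2) dh ∧
        IsCarries b (α * ((b ^ 2 - 1) / D)) (k + 2) dh ch ∧
        IsAsym (k + 2) ch ∧
        ch 0 = 0 ∧ (∀ j, 1 ≤ j → j ≤ k + 1 → ch j = d (k + 1 - j)) ∧ ch (k + 2) = 0 := by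
  intro α hα hαd
  obtain ⟨hn1, hnb, hk1, hdig, hdk, hd0, hsum⟩ := hp
  obtain ⟨hc0, hrec⟩ := hc
  have hb1 : (1:ℤ) < b := hn1.trans hnb
  have hn0 : (0:ℤ) < n := by linarith
  have hnn : (0:ℤ) < n ^ 2 - 1 := by nlinarith
  set K : ℤ := (k : ℤ) with hK
  -- carry bounds
  have hcb : ∀ j, j ≤ k + 1 → 0 ≤ c j ∧ c j ≤ n - 1 := by
    intro j hj
    induction j with
    | zero => rw [hc0]; constructor <;> linarith
    | succ m ih =>
      have hmk : m ≤ k := by omega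
      have h1 := hrec m hmk
      have hd1 := hdig m hmk
      have hd2 := hdig (k - m) (Nat.sub_le k m)
      have hcm := ih (by omega)
      have t1 : 0 ≤ n * d (k - m) := mul_nonneg hn0.le hd2.1
      have t3 : n * d (k - m) ≤ n * (b - 1) := mul_le_mul_of_nonneg_left hd2.2 hn0.le
      constructor
      · by_contra hcon
        push_neg at hcon
        have h2 : c (m + 1) ≤ -1 := by omega
        have t2 : b * c (m + 1) ≤ b * (-1) := mul_le_mul_of_nonneg_left h2 (by linarith)
        linarith
      · by_contra hcon
        push_neg at hcon
        have h2 : n ≤ c (m + 1) := by omega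
        have t2 : b * n ≤ b * c (m + 1) := mul_le_mul_of_nonneg_left h2 (by linarith)
        nlinarith
  have hck1 : c (k + 1) = 0 := by
    have h := hss 0 (Nat.zero_le k)
    simp only [Nat.sub_zero] at h
    rw [hc0] at h
    exact h.symm
  have hq0 : q 0 = 0 := by
    rw [hq 0 (Nat.zero_le k), hc0, mul_zero, Int.zero_ediv]
  have hqe : ∀ j ≤ k, (n ^ 2 - 1) * q j = D * c j := by
    intro j hj
    rw [hq j hj]
    exact Int.mul_ediv_cancel' (hdvd j hj)
  have hCid : ∀ j ≤ k, (n ^ 2 - 1) * d j = (n * b - 1) * c j + (b - n) * c (j + 1) := by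
    intro j hj
    have e1 := hrec j hj
    have e2 := hrec (k - j) (Nat.sub_le k j)
    rw [Nat.sub_sub_self hj] at e2
    have s1 := hss j hj
    have s2 := hss (k - j) (Nat.sub_le k j)
    rw [Nat.sub_sub_self hj] at s2
    rw [s2, ← s1] at e2
    linear_combination e1 + n * e2
  have hbnc : ∀ j ≤ k + 1, (n ^ 2 - 1) ∣ (b - n) * c j := by
    intro j hj
    induction j with
    | zero => rw [hc0]; simp
    | succ m ih =>
      have hmk : m ≤ k := by omega
      have h1 := hCid m hmk
      have h2 := ih (by omega)
      have key : (b - n) * c (m + 1)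
          = (n ^ 2 - 1) * (d m - c m) - n * ((b - n) * c m) := by
        linear_combination -h1
      rw [key]
      exact dvd_sub (dvd_mul_right _ _) (h2.mul_left n)
  -- basic facts about D
  have hDdk : D ∣ d k := by rw [hD]; exact Int.gcd_dvd_left _ _
  have hDb2 : D ∣ b ^ 2 - 1 := by rw [hD]; exact Int.gcd_dvd_right _ _
  have hdkpos : 0 < d k := lt_of_le_of_ne (hdig k le_rfl).1 (Ne.symm hdk)
  have hDnn : 0 ≤ D := by rw [hD]; exact Int.ofNat_nonneg _
  have hD0 : 0 < D := by
    rcases hDnn.lt_or_eq with h | h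
    · exact h
    · exfalso; exact hdk (zero_dvd_iff.mp (h ▸ hDdk))
  have hDle : D ≤ b - 1 := le_trans (Int.le_of_dvd hdkpos hDdk) (hdig k le_rfl).2
  have hDbh : D * (α * ((b ^ 2 - 1) / D)) = α * (b ^ 2 - 1) := by
    rw [mul_comm α, ← mul_assoc, Int.mul_ediv_cancel' hDb2, mul_comm]
  set bh : ℤ := α * ((b ^ 2 - 1) / D) with hbh
  have hbhb : b < bh := by
    have h1 : b + 1 ≤ (b ^ 2 - 1) / D := by
      rw [Int.le_ediv_iff_mul_le hD0]
      nlinarith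
    have h2 : (b ^ 2 - 1) / D ≤ bh := by
      rw [hbh]
      exact le_mul_of_one_le_left (by linarith) hα
    linarith
  -- integer-indexed sequences
  set dZ : ℤ → ℤ := truncZ k d with hdZ
  set qZ : ℤ → ℤ := truncZ k q with hqZ
  have dZ_coe : ∀ j : ℕ, j ≤ k → dZ (j : ℤ) = d j := fun j hj => truncZ_coe k d j hj
  have qZ_coe : ∀ j : ℕ, j ≤ k → qZ (j : ℤ) = q j := fun j hj => truncZ_coe k q j hj
  have dZ_out : ∀ m : ℤ, m < 0 ∨ K < m → dZ m = 0 := fun m hm => truncZ_out k d m hm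
  have qZ_out : ∀ m : ℤ, m < 0 ∨ K < m → qZ m = 0 := fun m hm => truncZ_out k q m hm
  have dZ_bdd : ∀ m : ℤ, 0 ≤ dZ m ∧ dZ m ≤ b - 1 := by
    intro m
    rw [hdZ]
    unfold truncZ
    split
    · next h => exact hdig m.toNat (by omega)
    · constructor <;> linarith
  have qZ_nonneg : ∀ m : ℤ, 0 ≤ qZ m := by
    intro m
    rw [hqZ]
    unfold truncZ
    split
    · next h =>
      rw [hq m.toNat (by omega)]
      exact Int.ediv_nonneg (mul_nonneg hDnn (hcb m.toNat (by omega)).1) hnn.le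
    · exact le_refl 0
  have qZ_le : ∀ m : ℤ, (n + 1) * qZ m ≤ D := by
    intro m
    rw [hqZ]
    unfold truncZ
    split
    · next h =>
      have h1 := hqe m.toNat (by omega)
      have h2 := hcb m.toNat (by omega)
      have h3 : D * c m.toNat ≤ D * (n - 1) := mul_le_mul_of_nonneg_left h2.2 hDnn
      nlinarith [qZ_nonneg m, hq m.toNat (by omega : m.toNat ≤ k)]
    · simpa using hD0.le
  -- Key identity I : D * dZ m = (n*b-1) * qZ m + (b-n) * qZ (m+1)
  have hI : ∀ m : ℤ, D * dZ m = (n * b - 1) * qZ m + (b - n) * qZ (m + 1) := by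
    intro m
    by_cases h0 : 0 ≤ m ∧ m ≤ K
    · set j : ℕ := m.toNat with hjdef
      have hjk : j ≤ k := by omega
      have hm : m = (j : ℤ) := by omega
      rw [hm, dZ_coe j hjk, qZ_coe j hjk]
      rcases eq_or_lt_of_le hjk with hjk' | hjk'
      · -- j = k : last index, qZ (K+1) = 0
        subst hjk'
        have hz : qZ ((j : ℤ) + 1) = 0 := qZ_out _ (by omega)
        rw [hz, mul_zero, add_zero]
        have big : (n ^ 2 - 1) * (D * d j) = (n ^ 2 - 1) * ((n * b - 1) * q j) := by
          have h1 := hCid j le_rfl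
          have h2 := hqe j le_rfl
          rw [hck1] at h1
          linear_combination D * h1 - (n * b - 1) * h2
        exact mul_left_cancel₀ (by linarith) big
      · have hjk2 : j + 1 ≤ k := hjk'
        have hz : qZ ((j : ℤ) + 1) = q (j + 1) := by
          rw [show ((j : ℤ) + 1) = ((j + 1 : ℕ) : ℤ) by push_cast; ring]
          exact qZ_coe (j + 1) hjk2
        rw [hz]
        have big : (n ^ 2 - 1) * (D * d j)
            = (n ^ 2 - 1) * ((n * b - 1) * q j + (b - n) * q (j + 1)) := by
          have h1 := hCid j hjk
          have h2 := hqe j hjk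
          have h3 := hqe (j + 1) hjk2
          linear_combination D * h1 - (n * b - 1) * h2 - (b - n) * h3
        exact mul_left_cancel₀ (by linarith) big
    · have hd' : dZ m = 0 := dZ_out m (by omega)
      have hq' : qZ m = 0 := qZ_out m (by omega)
      have hq2 : qZ (m + 1) = 0 := by
        by_cases h1 : m = -1
        · subst h1
          rw [show (-1 : ℤ) + 1 = ((0 : ℕ) : ℤ) by norm_num, qZ_coe 0 (Nat.zero_le k), hq0]
        · exact qZ_out _ (by omega)
      rw [hd', hq', hq2]
      ring
  -- Key identity II : symmetry of qZ
  have hII : ∀ m : ℤ, qZ m = qZ (K + 1 - m) := by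
    intro m
    by_cases h0 : 1 ≤ m ∧ m ≤ K
    · set j : ℕ := m.toNat with hjdef
      have hjk : j ≤ k := by omega
      have hj1 : 1 ≤ j := by omega
      have hm : m = (j : ℤ) := by omega
      have harg : K + 1 - m = ((k + 1 - j : ℕ) : ℤ) := by omega
      rw [harg, hm, qZ_coe j hjk, qZ_coe (k + 1 - j) (by omega)]
      rw [hq j hjk, hq (k + 1 - j) (by omega)]
      have hcsym := hss j hjk
      rw [show k - j + 1 = k + 1 - j by omega] at hcsym
      rw [hcsym]
    · have hz0 : qZ (0 : ℤ) = 0 := by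
        have h' := qZ_coe 0 (Nat.zero_le k)
        simpa [hq0] using h'
      by_cases h1 : m = 0
      · subst h1
        rw [hz0, qZ_out (K + 1 - 0) (by omega)]
      · rcases (by omega : m < 0 ∨ K < m) with h | h
        · rw [qZ_out m (Or.inl h), qZ_out (K + 1 - m) (by omega)]
        · by_cases h2 : m = K + 1
          · subst h2
            rw [qZ_out (K + 1) (by omega)]
            rw [show K + 1 - (K + 1) = (0 : ℤ) by ring, hz0]
          · rw [qZ_out m (by omega), qZ_out (K + 1 - m) (by omega)]
  -- vanishing of q when a digit vanishes
  have hq_of_d : ∀ m : ℤ, dZ m = 0 → qZ m = 0 ∧ qZ (m + 1) = 0 := by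
    intro m hm
    have h := hI m
    rw [hm, mul_zero] at h
    have t2 : 0 ≤ (n * b - 2) * qZ m := mul_nonneg (by nlinarith) (qZ_nonneg m)
    have t3 : 0 ≤ (b - n) * qZ (m + 1) := mul_nonneg (by linarith) (qZ_nonneg (m + 1))
    have t4 : 0 ≤ (b - n - 1) * qZ (m + 1) := mul_nonneg (by linarith) (qZ_nonneg (m + 1))
    have hqm : qZ m = 0 := by
      have h5 := qZ_nonneg m
      linarith
    have hqm1 : qZ (m + 1) = 0 := by
      rw [hqm, mul_zero, zero_add] at h
      have h5 := qZ_nonneg (m + 1)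
      linarith
    exact ⟨hqm, hqm1⟩
  -- the new digits (times D)
  set X : ℤ → ℤ := fun j => α * (b * dZ (j - 2) + dZ (K - j)) - (qZ j + n * qZ (j - 1))
    with hXdef
  have hXval : ∀ j : ℤ,
      X j = α * (b * dZ (j - 2) + dZ (K - j)) - (qZ j + n * qZ (j - 1)) := fun j => rfl
  -- the master recurrence identity
  have hR : ∀ j : ℤ, X j + (α * (b ^ 2 - 1)) * dZ (K - j)
      = b * X (K + 2 - j) + D * dZ (K + 1 - j) := by
    intro j
    have e1 : qZ (K + 2 - j) = qZ (j - 1) := by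
      have h := hII (K + 2 - j)
      rw [show K + 1 - (K + 2 - j) = j - 1 by ring] at h
      exact h
    have e2 : qZ (K + 1 - j) = qZ j := (hII j).symm
    have i1 := hI (K + 1 - j)
    rw [show K + 1 - j + 1 = K + 2 - j by ring, e1, e2] at i1
    rw [hXval j, hXval (K + 2 - j)]
    rw [show K + 2 - j - 2 = K - j by ring, show K - (K + 2 - j) = j - 2 by ring,
        show K + 2 - j - 1 = K + 1 - j by ring, e1, e2]
    linear_combination -i1
  -- bounds on the q-part
  have hQb : ∀ j : ℤ, 0 ≤ qZ j + n * qZ (j - 1) ∧ qZ j + n * qZ (j - 1) ≤ D := by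
    intro j
    have a1 := qZ_nonneg j
    have a2 := qZ_nonneg (j - 1)
    have c1 := qZ_le j
    have c2 := qZ_le (j - 1)
    have t1 : 0 ≤ n * qZ (j - 1) := mul_nonneg hn0.le a2
    have t2 : n * ((n + 1) * qZ (j - 1)) ≤ n * D := mul_le_mul_of_nonneg_left c2 hn0.le
    constructor
    · linarith
    · have t3 : (n + 1) * (qZ j + n * qZ (j - 1)) ≤ (n + 1) * D := by linarith [t2, c1]
      exact le_of_mul_le_mul_left t3 (by linarith)
  -- bounds on the digit-part
  have hA : ∀ j : ℤ, 0 ≤ b * dZ (j - 2) + dZ (K - j)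
      ∧ b * dZ (j - 2) + dZ (K - j) ≤ b ^ 2 - 1 := by
    intro j
    obtain ⟨u1, u2⟩ := dZ_bdd (j - 2)
    obtain ⟨v1, v2⟩ := dZ_bdd (K - j)
    have t1 : 0 ≤ b * dZ (j - 2) := mul_nonneg (by linarith) u1
    have t2 : b * dZ (j - 2) ≤ b * (b - 1) := mul_le_mul_of_nonneg_left u2 (by linarith)
    constructor
    · linarith
    · linarith [t2, v2]
  -- divisibility of X by D
  have hXdvd : ∀ j : ℤ, D ∣ X j := by
    intro j
    rw [hXval j]
    by_cases h0 : 0 ≤ j ∧ j ≤ K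
    · set i : ℕ := j.toNat with hidef
      have hik : i ≤ k := by omega
      have hj : j = (i : ℤ) := by omega
      have h := hαd i hik
      have e1 : dZ (j - 2) = (if 2 ≤ i then d (i - 2) else 0) := by
        by_cases h2 : 2 ≤ i
        · rw [if_pos h2, show j - 2 = ((i - 2 : ℕ) : ℤ) by omega]
          exact dZ_coe (i - 2) (by omega)
        · rw [if_neg h2]
          exact dZ_out _ (by omega)
      have e2 : dZ (K - j) = d (k - i) := by
        rw [show K - j = ((k - i : ℕ) : ℤ) by omega]
        exact dZ_coe (k - i) (by omega)
      have e3 : qZ j = q i := by rw [hj]; exact qZ_coe i hik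
      have e4 : qZ (j - 1) = q (i - 1) := by
        by_cases h2 : 1 ≤ i
        · rw [show j - 1 = ((i - 1 : ℕ) : ℤ) by omega]
          exact qZ_coe (i - 1) (by omega)
        · have hi0 : i = 0 := by omega
          rw [hi0, qZ_out (j - 1) (by omega)]
          simp [hq0]
      rw [e1, e2, e3, e4]
      exact h
    · rcases (by omega : j < 0 ∨ j = K + 1 ∨ j = K + 2 ∨ K + 2 < j) with h | h | h | h
      · rw [dZ_out (j - 2) (by omega), dZ_out (K - j) (by omega), qZ_out j (by omega),
            qZ_out (j - 1) (by omega)]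
        simp
      · subst h
        rw [show K + 1 - 2 = K - 1 by ring, show K - (K + 1) = -1 by ring,
            show K + 1 - 1 = K by ring]
        rw [dZ_out (-1) (by omega), qZ_out (K + 1) (by omega)]
        have e5 : dZ (K - 1) = d (k - 1) := by
          rw [show K - 1 = ((k - 1 : ℕ) : ℤ) by omega]
          exact dZ_coe (k - 1) (by omega)
        have e6 : qZ K = q 1 := by
          have h := hII 1
          rw [show K + 1 - 1 = K by ring] at h
          rw [← h, show (1 : ℤ) = ((1 : ℕ) : ℤ) by norm_num]
          exact qZ_coe 1 hk1
        rw [e5, e6]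
        have h1 := hαd 1 hk1
        rw [if_neg (by omega)] at h1
        norm_num [hq0] at h1
        obtain ⟨t, ht⟩ := hbnc 1 (by omega)
        have h3 : (b - n) * q 1 = D * t := by
          apply mul_left_cancel₀ (by linarith : (n ^ 2 - 1) ≠ 0)
          calc (n ^ 2 - 1) * ((b - n) * q 1) = (b - n) * ((n ^ 2 - 1) * q 1) := by ring
          _ = (b - n) * (D * c 1) := by rw [hqe 1 hk1]
          _ = D * ((b - n) * c 1) := by ring
          _ = (n ^ 2 - 1) * (D * t) := by rw [ht]; ring
        obtain ⟨s, hs⟩ := h1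
        refine ⟨b * s + t, ?_⟩
        linear_combination b * hs + h3
      · subst h
        rw [show K + 2 - 2 = K by ring]
        rw [dZ_out (K - (K + 2)) (by omega), qZ_out (K + 2) (by omega),
            qZ_out (K + 2 - 1) (by omega)]
        have e5 : dZ K = d k := dZ_coe k le_rfl
        rw [e5]
        obtain ⟨s, hs⟩ := hDdk
        exact ⟨α * b * s, by rw [hs]; ring⟩
      · rw [dZ_out (j - 2) (by omega), dZ_out (K - j) (by omega), qZ_out j (by omega),
            qZ_out (j - 1) (by omega)]
        simp
  -- nonnegativity of X
  have hXnn : ∀ j : ℤ, 0 ≤ X j := by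
    intro j
    by_cases hA0 : b * dZ (j - 2) + dZ (K - j) = 0
    · have u1 := (dZ_bdd (j - 2)).1
      have v1 := (dZ_bdd (K - j)).1
      have hdz1 : dZ (j - 2) = 0 := by
        by_contra hne
        have hx : 1 ≤ dZ (j - 2) := by omega
        have : b * 1 ≤ b * dZ (j - 2) := mul_le_mul_of_nonneg_left hx (by linarith)
        linarith
      have hdz2 : dZ (K - j) = 0 := by
        rw [hdz1, mul_zero, zero_add] at hA0
        exact hA0
      have hq1 : qZ (j - 1) = 0 := by
        have h := (hq_of_d (j - 2) hdz1).2
        rwa [show j - 2 + 1 = j - 1 by ring] at h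
      have hq2 : qZ j = 0 := by
        have h := (hq_of_d (K - j) hdz2).2
        rw [show K - j + 1 = K + 1 - j by ring] at h
        rw [hII j]
        exact h
      rw [hXval j, hA0, hq1, hq2]
      norm_num
    · have hA1 : 0 < b * dZ (j - 2) + dZ (K - j) := lt_of_le_of_ne (hA j).1 (Ne.symm hA0)
      have hA1' := Int.lt_iff_add_one_le.mp hA1
      have hQ := (hQb j).2
      have hXge : 1 - D ≤ X j := by
        rw [hXval j]
        have h5 : α * 1 ≤ α * (b * dZ (j - 2) + dZ (K - j)) :=
          mul_le_mul_of_nonneg_left (by linarith) (by linarith)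
        linarith
      obtain ⟨t, ht⟩ := hXdvd j
      rw [ht] at hXge ⊢
      have h6 : 0 ≤ t := by
        by_contra hcon
        push_neg at hcon
        have h7 : t ≤ -1 := by omega
        have h8 : D * t ≤ D * (-1) := mul_le_mul_of_nonneg_left h7 hD0.le
        linarith
      exact mul_nonneg hD0.le h6
  -- upper bound on X
  have hXub : ∀ j : ℤ, X j ≤ D * (bh - 1) := by
    intro j
    have key : X j < α * (b ^ 2 - 1) := by
      by_cases hAe : b * dZ (j - 2) + dZ (K - j) = b ^ 2 - 1
      · obtain ⟨u1, u2⟩ := dZ_bdd (j - 2)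
        obtain ⟨v1, v2⟩ := dZ_bdd (K - j)
        have hdz1 : dZ (j - 2) = b - 1 := le_antisymm u2 (by nlinarith [hAe, v2, hb1, u1, u2])
        have hdz2 : dZ (K - j) = b - 1 := by
          have h5 : b * (b - 1) + dZ (K - j) = b ^ 2 - 1 := by rw [← hdz1]; exact hAe
          nlinarith [h5]
        have hQpos : 1 ≤ qZ j + n * qZ (j - 1) := by
          by_contra hcon
          push_neg at hcon
          have a1 := qZ_nonneg j
          have a2 := qZ_nonneg (j - 1)
          have t1 : 0 ≤ n * qZ (j - 1) := mul_nonneg hn0.le a2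
          have hqj : qZ j = 0 := by linarith
          have i := hI (K - j)
          rw [show K - j + 1 = K + 1 - j by ring, ← hII j, hqj, hdz2] at i
          have i' : D * (b - 1) = (n * b - 1) * qZ (K - j) := by linarith [i]
          have a4 := qZ_le (K - j)
          have i2 : (n + 1) * (D * (b - 1)) = (n * b - 1) * ((n + 1) * qZ (K - j)) := by
            linear_combination (n + 1) * i'
          have hmul : (n * b - 1) * ((n + 1) * qZ (K - j)) ≤ (n * b - 1) * D :=
            mul_le_mul_of_nonneg_left a4 (by nlinarith)
          have hfin : D * (b - n) ≤ 0 := by nlinarith [i2, hmul]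
          nlinarith [mul_pos hD0 (show (0 : ℤ) < b - n by linarith), hfin]
        rw [hXval j, hAe]
        linarith
      · have h2 : b * dZ (j - 2) + dZ (K - j) < b ^ 2 - 1 := lt_of_le_of_ne (hA j).2 hAe
        have hQ := (hQb j).1
        rw [hXval j]
        have h5 : α * (b * dZ (j - 2) + dZ (K - j)) ≤ α * (b ^ 2 - 1 - 1) :=
          mul_le_mul_of_nonneg_left (by linarith) (by linarith)
        linarith
    obtain ⟨t, ht⟩ := hXdvd j
    rw [ht] at key ⊢
    rw [← hDbh] at key
    have h1 : t < bh := lt_of_mul_lt_mul_left key hD0.le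
    have h2 : t ≤ bh - 1 := by omega
    exact mul_le_mul_of_nonneg_left h2 hD0.le
  -- helpers for the construction
  have hdh : ∀ j : ℤ, D * (X j / D) = X j := fun j => Int.mul_ediv_cancel' (hXdvd j)
  have hqz0 : qZ (0 : ℤ) = 0 := by
    have h' := qZ_coe 0 (Nat.zero_le k)
    simpa [hq0] using h'
  have ch0 : dZ (K + 1 - ((0 : ℕ) : ℤ)) = 0 := dZ_out _ (by omega)
  have chk2 : dZ (K + 1 - ((k + 2 : ℕ) : ℤ)) = 0 := dZ_out _ (by omega)
  have chk3 : dZ (K + 1 - ((k + 3 : ℕ) : ℤ)) = 0 := dZ_out _ (by omega)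
  have hX0pos : 0 < X ((0 : ℕ) : ℤ) := by
    rw [hXval]
    rw [show ((0 : ℕ) : ℤ) - 2 = -2 by norm_num, show K - ((0 : ℕ) : ℤ) = K by norm_num,
        show ((0 : ℕ) : ℤ) - 1 = -1 by norm_num]
    rw [dZ_out (-2) (by omega), qZ_out (-1) (by omega)]
    have e5 : dZ K = d k := dZ_coe k le_rfl
    rw [e5, show ((0 : ℕ) : ℤ) = (0 : ℤ) by norm_num, hqz0]
    have h5 : 0 < α * d k := mul_pos (by linarith) hdkpos
    linarith
  have hXk2pos : 0 < X (((k + 2 : ℕ)) : ℤ) := by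
    have hcast : (((k + 2 : ℕ)) : ℤ) = K + 2 := by omega
    rw [hcast, hXval, show K + 2 - 2 = K by ring]
    rw [dZ_out (K - (K + 2)) (by omega), qZ_out (K + 2) (by omega),
        qZ_out (K + 2 - 1) (by omega)]
    have e5 : dZ K = d k := dZ_coe k le_rfl
    rw [e5]
    have h5 : 0 < α * (b * d k) := mul_pos (by linarith) (mul_pos (by linarith) hdkpos)
    linarith
  -- the recurrence for the new palintiple
  have hrec2 : ∀ j : ℕ, j ≤ k + 2 →
      b * (X (((k + 2 - j : ℕ) : ℤ)) / D) + dZ (K + 1 - (j : ℤ))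
        = X (j : ℤ) / D + bh * dZ (K + 1 - ((j + 1 : ℕ) : ℤ)) := by
    intro j hj
    have hcast : ((k + 2 - j : ℕ) : ℤ) = K + 2 - (j : ℤ) := by omega
    rw [hcast]
    apply mul_left_cancel₀ hD0.ne'
    have l1 : D * (b * (X (K + 2 - (j : ℤ)) / D) + dZ (K + 1 - (j : ℤ)))
        = b * X (K + 2 - (j : ℤ)) + D * dZ (K + 1 - (j : ℤ)) := by
      rw [mul_add]
      congr 1
      rw [← mul_assoc, mul_comm D b, mul_assoc, hdh]
    have l2 : D * (X (j : ℤ) / D + bh * dZ (K + 1 - ((j + 1 : ℕ) : ℤ)))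
        = X (j : ℤ) + (α * (b ^ 2 - 1)) * dZ (K - (j : ℤ)) := by
      rw [show ((j + 1 : ℕ) : ℤ) = (j : ℤ) + 1 by push_cast; ring,
          show K + 1 - ((j : ℤ) + 1) = K - (j : ℤ) by ring]
      rw [mul_add, hdh, ← mul_assoc, hDbh]
    rw [l1, l2]
    linarith [hR (j : ℤ)]
  refine ⟨fun j => X (j : ℤ) / D, fun j => dZ (K + 1 - (j : ℤ)), ?_, ?_, ?_, ?_, ?_, ?_⟩
  · -- IsPalintiple
    refine ⟨hb1, hbhb, by omega, ?_, ?_, ?_, ?_⟩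
    · intro j hj
      constructor
      · exact Int.ediv_nonneg (hXnn (j : ℤ)) hD0.le
      · have h1 := hXub (j : ℤ)
        have h2 := hdh (j : ℤ)
        have h3 : D * (X (j : ℤ) / D) ≤ D * (bh - 1) := by rw [h2]; exact h1
        exact le_of_mul_le_mul_left h3 hD0
    · intro hcon
      have hcon' : X (((k + 2 : ℕ)) : ℤ) / D = 0 := hcon
      have h := hdh (((k + 2 : ℕ)) : ℤ)
      rw [hcon', mul_zero] at h
      linarith [hXk2pos]
    · intro hcon
      have hcon' : X ((0 : ℕ) : ℤ) / D = 0 := hcon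
      have h := hdh ((0 : ℕ) : ℤ)
      rw [hcon', mul_zero] at h
      linarith [hX0pos]
    · -- the palintiple sum identity
      have tele : ∀ j ∈ range (k + 2 + 1),
          X (j : ℤ) / D * bh ^ j - b * (X (((k + 2 - j : ℕ)) : ℤ) / D * bh ^ j)
            = dZ (K + 1 - (j : ℤ)) * bh ^ j
              - dZ (K + 1 - ((j + 1 : ℕ) : ℤ)) * bh ^ (j + 1) := by
        intro j hj
        have hj' : j ≤ k + 2 := by
          have := mem_range.mp hj
          omega
        have h := hrec2 j hj'
        linear_combination (-(bh ^ j)) * h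
      have hsplit : (∑ j ∈ range (k + 2 + 1), X (j : ℤ) / D * bh ^ j)
          - b * ∑ j ∈ range (k + 2 + 1), X (((k + 2 - j : ℕ)) : ℤ) / D * bh ^ j = 0 := by
        rw [Finset.mul_sum, ← Finset.sum_sub_distrib]
        rw [Finset.sum_congr rfl tele]
        rw [Finset.sum_range_sub' (fun j => dZ (K + 1 - (j : ℤ)) * bh ^ j) (k + 2 + 1)]
        rw [show k + 2 + 1 = k + 3 by omega] at *
        rw [ch0, chk3]
        ring
      linarith [hsplit]
  · -- IsCarries
    exact ⟨ch0, hrec2⟩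
  · -- IsAsym
    constructor
    · intro hsym
      have hpal : ∀ m : ℕ, m ≤ k → d m = d (k - m) := by
        intro m hm
        have h := hsym (m + 1) (by omega)
        rw [show k + 2 - (m + 1) = k + 1 - m by omega] at h
        simp only [] at h
        have e1 : dZ (K + 1 - ((m + 1 : ℕ) : ℤ)) = d (k - m) := by
          rw [show K + 1 - ((m + 1 : ℕ) : ℤ) = ((k - m : ℕ) : ℤ) by omega]
          exact dZ_coe (k - m) (by omega)
        have e2 : dZ (K + 1 - ((k + 1 - m : ℕ) : ℤ)) = d m := by
          rw [show K + 1 - ((k + 1 - m : ℕ) : ℤ) = ((m : ℕ) : ℤ) by omega]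
          exact dZ_coe m hm
        rw [e1, e2] at h
        exact h.symm
      have hsum2 : (∑ j ∈ range (k + 1), d j * b ^ j)
          = ∑ j ∈ range (k + 1), d (k - j) * b ^ j := by
        refine Finset.sum_congr rfl (fun j hj => ?_)
        have hjk : j ≤ k := by
          have := mem_range.mp hj
          omega
        rw [hpal j hjk]
      rw [hsum2] at hsum
      have hgt : 1 ≤ ∑ j ∈ range (k + 1), d (k - j) * b ^ j := by
        have h1 : d (k - 0) * b ^ 0 ≤ ∑ j ∈ range (k + 1), d (k - j) * b ^ j := by
          refine Finset.single_le_sum (f := fun j => d (k - j) * b ^ j) ?_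
            (mem_range.mpr (by omega))
          intro i hi
          exact mul_nonneg (hdig (k - i) (by omega)).1 (pow_nonneg (by linarith) i)
        simp only [Nat.sub_zero, pow_zero, mul_one] at h1
        linarith [hdkpos]
      nlinarith [hsum, hgt, hn1,
        mul_le_mul_of_nonneg_left hgt (by linarith : (0 : ℤ) ≤ n - 1)]
    · intro hshift
      have h := hshift 1 (by omega)
      rw [show k + 2 - 1 + 1 = k + 2 by omega] at h
      simp only [] at h
      have e1 : dZ (K + 1 - ((1 : ℕ) : ℤ)) = d k := by
        rw [show K + 1 - ((1 : ℕ) : ℤ) = ((k : ℕ) : ℤ) by omega]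
        exact dZ_coe k le_rfl
      rw [e1, chk2] at h
      exact hdk h
  · exact ch0
  · intro j h1 h2
    show dZ (K + 1 - (j : ℤ)) = d (k + 1 - j)
    rw [show K + 1 - (j : ℤ) = ((k + 1 - j : ℕ) : ℤ) by omega]
    exact dZ_coe (k + 1 - j) (by omega)
  · exact chk2
end

section
/- Let (d_1, d_0) be a 2-digit (n,b)-palintiple with nonzero carry c (so its carries are (c_2, c_1, c_0) = (0, c, 0) with c ≠ 0), and let D = gcd(d_1, b²−1). If n²−1 divides D·c, with quotient q = D·c/(n²−1), and gcd(d_0, D) divides q, then there exist an integer α ≥ 1 and an asymmetric 4-digit (b, b̂)-palintiple with b̂ = α(b²−1)/D whose carries ĉ_0, ..., ĉ_4 satisfy ĉ_0 = 0, ĉ_1 = d_1, ĉ_2 = d_0, ĉ_3 = 0, ĉ_4 = 0 (carry sequence (0, d_0, d_1, 0)). -/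
open Finset Polynomial

private lemma aux_bh (b e α : ℤ) (hb : 1 < b) (he : b + 1 ≤ e) (hα : 1 ≤ α) :
    b < α * e := by nlinarith

private lemma aux_neq (n d0 c1 : ℤ) (hn : 1 < n) (hd0 : 1 ≤ d0) (hc1 : 1 ≤ c1)
    (hk : n * d0 + c1 = d0) : False := by nlinarith

private lemma aux_dh0ub (b e α m D : ℤ) (hb : 1 < b) (hα : 1 ≤ α) (hm : 1 ≤ m)
    (hD1 : 1 ≤ D) (hd1le : D * m ≤ b - 1) (he : b + 1 ≤ e) :
    α * m ≤ α * e - 1 := by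
  have hme : m + 2 ≤ e := by nlinarith
  nlinarith [mul_le_mul_of_nonneg_left hme (show (0:ℤ) ≤ α by linarith)]

private lemma aux_dh3ub (b e α m D : ℤ) (hb : 1 < b) (hα : 1 ≤ α) (hm : 1 ≤ m)
    (hD1 : 1 ≤ D) (hDle : D ≤ b - 1) (hd1le : D * m ≤ b - 1) (hDe : D * e = b ^ 2 - 1) :
    b * (α * m) ≤ α * e - 1 := by
  have hDe' : α * (D * e) = α * (b ^ 2 - 1) := by rw [hDe]
  have h1 : D * (b * (α * m)) ≤ D * (α * e - 1) := by
    nlinarith [mul_le_mul_of_nonneg_left hd1le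
        (show (0:ℤ) ≤ α * b by positivity),
      mul_nonneg (show (0:ℤ) ≤ α - 1 by linarith) (show (0:ℤ) ≤ b - 1 by linarith)]
  exact le_of_mul_le_mul_left h1 (by linarith)

private lemma aux_dh2ub (b e α q d0 w1 D : ℤ) (hb : 1 < b) (hD1 : 1 ≤ D)
    (hd0pos : 1 ≤ d0) (hd0le : d0 ≤ b - 1) (hq : 1 ≤ q) (hα : 1 ≤ α)
    (hα2 : D * d0 + D ≤ α) (hDe : D * e = b ^ 2 - 1) (hw1 : α * d0 - q = D * w1) :
    b * w1 + d0 ≤ α * e - 1 := by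
  have hDe' : α * (D * e) = α * (b ^ 2 - 1) := by rw [hDe]
  have hw1' : b * (α * d0 - q) = b * (D * w1) := by rw [hw1]
  have h1 : D * (b * w1 + d0) ≤ D * (α * e - 1) := by
    nlinarith [mul_le_mul_of_nonneg_left hd0le
        (show (0:ℤ) ≤ α * b by positivity),
      mul_nonneg (show (0:ℤ) ≤ b by linarith) (show (0:ℤ) ≤ q - 1 by linarith),
      mul_nonneg (show (0:ℤ) ≤ α by linarith) (show (0:ℤ) ≤ b - 2 by linarith)]
  exact le_of_mul_le_mul_left h1 (by linarith)

private lemma aux_dh1ub (b e α d0 w1 : ℤ) (hb : 1 < b) (hw1 : 0 ≤ w1) (hd0 : 1 ≤ d0)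
    (h2 : b * w1 + d0 ≤ α * e - 1) : w1 ≤ α * e - 1 := by
  nlinarith [mul_nonneg (show (0:ℤ) ≤ b - 1 by linarith) hw1]

private lemma aux_dh2pos (b d0 w1 : ℤ) (hb : 1 < b) (hw1 : 0 ≤ w1) (hd0 : 1 ≤ d0) :
    0 ≤ b * w1 + d0 := by nlinarith [mul_nonneg (show (0:ℤ) ≤ b by linarith) hw1]

private lemma aux_c1pos (n b d0 c1 : ℤ) (hn : 1 < n) (hnb : n < b) (hd0 : 1 ≤ d0)
    (hF : (n ^ 2 - 1) * d0 = (b - n) * c1) : 1 ≤ c1 := by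
  by_contra hcon
  push_neg at hcon
  have h1 : (0:ℤ) ≤ (b - n) * (-c1) := mul_nonneg (by linarith) (by linarith)
  have h2 : (0:ℤ) ≤ (n ^ 2 - 1) * (d0 - 1) := mul_nonneg (by nlinarith) (by linarith)
  nlinarith [hF, h1, h2, sq_nonneg (n - 1)]

private lemma aux_qpos (n q D c1 : ℤ) (hn : 1 < n) (hD : 1 ≤ D) (hc1 : 1 ≤ c1)
    (hqE : q * (n ^ 2 - 1) = D * c1) : 1 ≤ q := by
  by_contra hcon
  push_neg at hcon
  have h1 : (0:ℤ) ≤ (-q) * (n ^ 2 - 1) := mul_nonneg (by linarith) (by nlinarith)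
  have h2 : (0:ℤ) ≤ (D - 1) * (c1 - 1) := mul_nonneg (by linarith) (by linarith)
  nlinarith [hqE, h1, h2]

private lemma aux_m1 (D m d1 : ℤ) (hD : 1 ≤ D) (hd1 : 1 ≤ d1) (hm : d1 = D * m) :
    1 ≤ m := by nlinarith

private lemma aux_e (b D e : ℤ) (hb : 1 < b) (hD1 : 1 ≤ D) (hDle : D ≤ b - 1)
    (hDe : D * e = b ^ 2 - 1) : b + 1 ≤ e := by nlinarith

set_option maxHeartbeats 1000000 in
/-- **Corollary.** Asymmetric 4-digit palintiples doubly-ρ-derived from a 2-digit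
`(n,b)`-palintiple `(d 1, d 0)` with nonzero carry `c 1`, carry sequence
`(0, d 0, d 1, 0)`. -/
theorem asym_existence_doubly_rho_derived (n b : ℤ) (d c : ℕ → ℤ)
    (hp : IsPalintiple n b 1 d) (hc : IsCarries n b 1 d c)
    (hcne : c 1 ≠ 0) (hc2 : c 2 = 0)
    (D : ℤ) (hD : D = Int.gcd (d 1) (b ^ 2 - 1))
    (hdvd : n ^ 2 - 1 ∣ D * c 1)
    (q : ℤ) (hq : q = D * c 1 / (n ^ 2 - 1))
    (hgcd : (Int.gcd (d 0) D : ℤ) ∣ q) :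
    ∃ α : ℤ, 1 ≤ α ∧
      ∃ dh ch : ℕ → ℤ,
        IsPalintiple b (α * ((b ^ 2 - 1) / D)) 3 dh ∧
        IsCarries b (α * ((b ^ 2 - 1) / D)) 3 dh ch ∧
        IsAsym 3 ch ∧
        ch 0 = 0 ∧ ch 1 = d 1 ∧ ch 2 = d 0 ∧ ch 3 = 0 ∧ ch 4 = 0 := by

  obtain ⟨hn, hnb, -, hdig, hd1ne, hd0ne, hsum⟩ := hp
  obtain ⟨hc0, hrec⟩ := hc
  have key1 : n * d 1 = d 0 + b * c 1 := by
    have := hrec 0 (by norm_num); simpa [hc0] using this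
  have key2 : n * d 0 + c 1 = d 1 := by
    have := hrec 1 (by norm_num); simpa [hc2] using this
  have hd0pos : 1 ≤ d 0 := by
    have := (hdig 0 (by norm_num)).1; omega
  have hd1pos : 1 ≤ d 1 := by
    have := (hdig 1 (by norm_num)).1; omega
  have hd0le : d 0 ≤ b - 1 := (hdig 0 (by norm_num)).2
  have hd1le : d 1 ≤ b - 1 := (hdig 1 (by norm_num)).2
  have hF : (n ^ 2 - 1) * d 0 = (b - n) * c 1 := by linear_combination key1 + n * key2
  have hc1pos : 1 ≤ c 1 := aux_c1pos n b (d 0) (c 1) hn hnb hd0pos hF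
  have hT : (n ^ 2 - 1) * (b * d 0 + d 1) = (b ^ 2 - 1) * c 1 := by
    linear_combination (b + n) * key1 + (n * b + 1) * key2
  have hn2 : (0:ℤ) < n ^ 2 - 1 := by nlinarith
  have hD1 : 1 ≤ D := by
    have h0 : 0 < Int.gcd (d 1) (b ^ 2 - 1) := Int.gcd_pos_iff.mpr (Or.inl hd1ne)
    rw [hD]; exact_mod_cast h0
  have hDd1 : D ∣ d 1 := by rw [hD]; exact Int.gcd_dvd_left _ _
  have hDb2 : D ∣ b ^ 2 - 1 := by rw [hD]; exact Int.gcd_dvd_right _ _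
  have hDe : D * ((b ^ 2 - 1) / D) = b ^ 2 - 1 := Int.mul_ediv_cancel' hDb2
  obtain ⟨e, he_def⟩ : ∃ e : ℤ, e = (b ^ 2 - 1) / D := ⟨_, rfl⟩
  rw [← he_def] at hDe ⊢
  obtain ⟨m, hm⟩ := hDd1
  have hm1 : 1 ≤ m := aux_m1 D m (d 1) hD1 hd1pos hm
  have hDle : D ≤ b - 1 := le_trans (Int.le_of_dvd (by omega) ⟨m, hm⟩) hd1le
  have he : b + 1 ≤ e := aux_e b D e (by omega) hD1 hDle hDe
  have hqE : q * (n ^ 2 - 1) = D * c 1 := by rw [hq]; exact Int.ediv_mul_cancel hdvd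
  have hqpos : 1 ≤ q := aux_qpos n q D (c 1) hn hD1 hc1pos hqE
  -- solve α * d 0 ≡ q (mod D)
  obtain ⟨w, hw⟩ := hgcd
  have hgd : (↑(Int.gcd (d 0) D) : ℤ) = d 0 * Int.gcdA (d 0) D + D * Int.gcdB (d 0) D :=
    Int.gcd_eq_gcd_ab _ _
  obtain ⟨x, hx_def⟩ : ∃ x : ℤ, x = Int.gcdA (d 0) D * w := ⟨_, rfl⟩
  have hx : D ∣ x * d 0 - q :=
    ⟨-(Int.gcdB (d 0) D * w), by rw [hx_def]; linear_combination (-w) * hgd - hw⟩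
  obtain ⟨t, ht_def⟩ : ∃ t : ℤ, t = 1 + |x| + |q| + |D * d 0 + D| := ⟨_, rfl⟩
  have ht0 : 0 ≤ t := by rw [ht_def]; positivity
  have htD : t ≤ t * D := le_mul_of_one_le_right ht0 hD1
  obtain ⟨α, hα_def⟩ : ∃ a : ℤ, a = x + t * D := ⟨_, rfl⟩
  have hα1 : 1 ≤ α := by
    linarith [neg_abs_le x, abs_nonneg q, abs_nonneg (D * d 0 + D), hα_def, ht_def, htD]
  have hαq : q ≤ α := by
    linarith [neg_abs_le x, le_abs_self q, abs_nonneg (D * d 0 + D), hα_def, ht_def, htD]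
  have hα2 : D * d 0 + D ≤ α := by
    linarith [neg_abs_le x, abs_nonneg q, le_abs_self (D * d 0 + D), hα_def, ht_def, htD]
  have hαd : D ∣ α * d 0 - q := by
    have h : α * d 0 - q = (x * d 0 - q) + D * (t * d 0) := by rw [hα_def]; ring
    rw [h]; exact dvd_add hx ⟨t * d 0, rfl⟩
  obtain ⟨w1, hw1⟩ := hαd
  have hαd0 : α ≤ α * d 0 := le_mul_of_one_le_right (by omega) hd0pos
  have hDw1 : D * 0 ≤ D * w1 := by linarith
  have hw1pos : 0 ≤ w1 := le_of_mul_le_mul_left hDw1 (by omega)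
  have hDne : (D : ℤ) ≠ 0 := by omega
  have hbd : D * (b * d 0 + d 1) = (b ^ 2 - 1) * q := by
    have h1 : (n ^ 2 - 1) * (D * (b * d 0 + d 1)) = (n ^ 2 - 1) * ((b ^ 2 - 1) * q) := by
      linear_combination D * hT - (b ^ 2 - 1) * hqE
    exact mul_left_cancel₀ (ne_of_gt hn2) h1
  -- the key carry equations
  have hE0 : b * (b * (α * m)) = α * m + (α * e) * d 1 := by
    have h1 : D * (b * (b * (α * m))) = D * (α * m + (α * e) * d 1) := by
      linear_combination (-(α * e * D)) * hm + (-(α * m * D)) * hDe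
    exact mul_left_cancel₀ hDne h1
  have hE1 : b * (b * w1 + d 0) + d 1 = w1 + (α * e) * d 0 := by
    have h1 : D * (b * (b * w1 + d 0) + d 1) = D * (w1 + (α * e) * d 0) := by
      linear_combination (-(b ^ 2 - 1)) * hw1 + hbd - (α * d 0) * hDe
    exact mul_left_cancel₀ hDne h1
  -- bounds
  have hbh : b < α * e := aux_bh b e α (by omega) he hα1
  have hd1neq : d 1 ≠ d 0 := by
    intro h; rw [h] at key2; exact aux_neq n (d 0) (c 1) hn hd0pos hc1pos key2
  have hdh0pos : 0 < α * m := mul_pos (by omega) (by omega)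
  have hdh3pos : 0 < b * (α * m) := mul_pos (by omega) hdh0pos
  have hdh0ub : α * m ≤ α * e - 1 :=
    aux_dh0ub b e α m D (by omega) hα1 hm1 hD1 (hm ▸ hd1le) he
  have hdh3ub : b * (α * m) ≤ α * e - 1 :=
    aux_dh3ub b e α m D (by omega) hα1 hm1 hD1 hDle (hm ▸ hd1le) hDe
  have hdh2ub : b * w1 + d 0 ≤ α * e - 1 :=
    aux_dh2ub b e α q (d 0) w1 D (by omega) hD1 hd0pos hd0le hqpos hα1 hα2 hDe hw1
  have hdh1ub : w1 ≤ α * e - 1 := aux_dh1ub b e α (d 0) w1 (by omega) hw1pos hd0pos hdh2ub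
  have hdh2pos : 0 ≤ b * w1 + d 0 := aux_dh2pos b (d 0) w1 (by omega) hw1pos hd0pos
  refine ⟨α, hα1,
    (fun j => if j = 0 then α * m else if j = 1 then w1 else
      if j = 2 then b * w1 + d 0 else if j = 3 then b * (α * m) else 0),
    (fun j => if j = 1 then d 1 else if j = 2 then d 0 else 0),
    ⟨by omega, hbh, by norm_num, ?_, by norm_num; exact ⟨by omega, by omega, by omega⟩,
      by norm_num; exact ⟨by omega, by omega⟩, ?_⟩,
    ⟨by norm_num, ?_⟩, ⟨?_, ?_⟩, by norm_num, by norm_num, by norm_num, by norm_num, by norm_num⟩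
  · -- digit bounds
    intro j hj
    interval_cases j <;> norm_num
    · exact ⟨le_of_lt hdh0pos, by omega⟩
    · exact ⟨hw1pos, by omega⟩
    · exact ⟨hdh2pos, by omega⟩
    · exact ⟨le_of_lt hdh3pos, by omega⟩
  · -- sum equation
    simp only [Finset.sum_range_succ, Finset.sum_range_zero]
    norm_num
    linear_combination (-1 : ℤ) * hE0 - (α * e) * hE1
  · -- carries recurrence
    intro j hj
    interval_cases j <;> norm_num
    · linear_combination hE0
    · linear_combination hE1
  · -- not symmetric
    intro h
    have := h 1 (by norm_num)
    norm_num at this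
    exact hd1neq this
  · -- not shifted-symmetric
    intro h
    have := h 1 (by norm_num)
    norm_num at this
    omega
end

section
/- Let (d_k, ..., d_0) be a 1089 (n,b)-palintiple (a symmetric (n,b)-palintiple with n+1 dividing b). Then its palinomial Pal(X) = Σ_{j=0}^{k} (d_j − n·d_{k−j})·X^j has at least one root on the complex unit circle: there exists z ∈ ℂ with |z| = 1 and Pal(z) = 0. -/
open Finset Polynomial

/-- Auxiliary Chebyshev-like integer sequence: `P 0 = 0`, `P 1 = 1`,
`P (r+2) = P (r+1) - m^2 * P r`. -/
private def auxP (m : ℤ) : ℕ → ℤ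
  | 0 => 0
  | 1 => 1
  | (r+2) => auxP m (r+1) - m^2 * auxP m r

private lemma auxP_mod (m : ℤ) : ∀ r : ℕ, ∃ s : ℤ, auxP m (r+1) = 1 + m^2 * s := by
  intro r
  induction r using Nat.strong_induction_on with
  | _ r ih =>
    match r with
    | 0 => exact ⟨0, by simp [auxP]⟩
    | (r+1) =>
      obtain ⟨s, hs⟩ := ih r (by omega)
      refine ⟨s - auxP m r, ?_⟩
      have : auxP m (r+2) = auxP m (r+1) - m^2 * auxP m r := rfl
      rw [this, hs]; ring


private lemma expSum_ne (N : ℕ) (Mz : ℤ) (h0 : Mz ≠ 0) (h1 : -(N:ℤ) < Mz) (h2 : Mz < (N:ℤ)) :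
    ∑ t ∈ range N, Complex.exp ((2*Real.pi*(Mz:ℝ)*(t:ℝ)/(N:ℝ) : ℝ) * Complex.I) = 0 := by
  have hN : 0 < N := by omega
  have hNR : (0:ℝ) < (N:ℝ) := by exact_mod_cast hN
  have hNne : (N:ℝ) ≠ 0 := ne_of_gt hNR
  have hπ := Real.pi_pos
  set z : ℂ := Complex.exp ((2*Real.pi*(Mz:ℝ)/(N:ℝ) : ℝ) * Complex.I) with hzdef
  have hterm : ∀ t : ℕ, Complex.exp ((2*Real.pi*(Mz:ℝ)*(t:ℝ)/(N:ℝ) : ℝ) * Complex.I) = z ^ t := by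
    intro t
    rw [hzdef, ← Complex.exp_nat_mul]
    congr 1
    push_cast
    ring
  have hzN : z ^ N = 1 := by
    rw [hzdef, ← Complex.exp_nat_mul]
    have e : (N:ℂ) * (((2*Real.pi*(Mz:ℝ)/(N:ℝ)) : ℝ) * Complex.I)
        = (Mz:ℂ) * (2*(Real.pi:ℂ)*Complex.I) := by
      have : ((2*Real.pi*(Mz:ℝ)/(N:ℝ) : ℝ) : ℂ) = 2*(Real.pi:ℂ)*(Mz:ℂ)/(N:ℂ) := by
        push_cast
        ring
      rw [this]
      have hNCne : (N:ℂ) ≠ 0 := by exact_mod_cast (Nat.cast_ne_zero (R := ℝ)).mpr (by omega)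
      field_simp
    rw [e]
    exact Complex.exp_int_mul_two_pi_mul_I Mz
  have hzne : z ≠ 1 := by
    rw [hzdef]
    intro hcon
    rw [Complex.exp_eq_one_iff] at hcon
    obtain ⟨nn, hnn⟩ := hcon
    have hIne : (Complex.I : ℂ) ≠ 0 := Complex.I_ne_zero
    have h' : ((2*Real.pi*(Mz:ℝ)/(N:ℝ) : ℝ) : ℂ) = ((2*Real.pi*(nn:ℝ) : ℝ) : ℂ) := by
      have e2 : ((2*Real.pi*(nn:ℝ) : ℝ) : ℂ) * Complex.I = (nn:ℂ) * (2*(Real.pi:ℂ)*Complex.I) := by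
        push_cast; ring
      apply mul_right_cancel₀ hIne
      rw [hnn, e2]
    have hre : (2*Real.pi*(Mz:ℝ)/(N:ℝ) : ℝ) = 2*Real.pi*(nn:ℝ) := by exact_mod_cast h'
    have hMN : (Mz:ℝ) = (nn:ℝ) * (N:ℝ) := by
      field_simp at hre
      nlinarith [hre]
    have hMNZ : Mz = nn * (N:ℤ) := by exact_mod_cast hMN
    rcases lt_trichotomy nn 0 with h | h | h
    · nlinarith
    · rw [h] at hMNZ; simp at hMNZ; exact h0 hMNZ
    · nlinarith
  calc (∑ t ∈ range N, Complex.exp ((2*Real.pi*(Mz:ℝ)*(t:ℝ)/(N:ℝ) : ℝ) * Complex.I))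
      = ∑ t ∈ range N, z ^ t := sum_congr rfl fun t _ => hterm t
    _ = (z ^ N - 1) / (z - 1) := geom_sum_eq hzne N
    _ = 0 := by rw [hzN]; simp

private lemma cosSum_ne (N : ℕ) (Mz : ℤ) (h0 : Mz ≠ 0) (h1 : -(N:ℤ) < Mz) (h2 : Mz < (N:ℤ)) :
    ∑ t ∈ range N, Real.cos (2*Real.pi*(Mz:ℝ)*(t:ℝ)/(N:ℝ)) = 0 := by
  have h := expSum_ne N Mz h0 h1 h2
  have h2' : (∑ t ∈ range N, Complex.exp ((2*Real.pi*(Mz:ℝ)*(t:ℝ)/(N:ℝ) : ℝ) * Complex.I)).re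
      = ∑ t ∈ range N, Real.cos (2*Real.pi*(Mz:ℝ)*(t:ℝ)/(N:ℝ)) := by
    rw [Complex.re_sum]
    exact sum_congr rfl fun t _ => Complex.exp_ofReal_mul_I_re _
  rw [← h2', h]
  simp

private lemma cosSum_zero (N : ℕ) (Mz : ℤ) (h0 : Mz = 0) :
    ∑ t ∈ range N, Real.cos (2*Real.pi*(Mz:ℝ)*(t:ℝ)/(N:ℝ)) = (N:ℝ) := by
  subst h0
  simp

private lemma key_nonpos (S : Finset ℕ) (M : ℕ → ℤ) (N : ℕ) (j₀ j₁ : ℕ)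
    (hj₀S : j₀ ∈ S) (hj₁S : j₁ ∈ S) (ha : M j₀ ≠ 0) (hj₁ : M j₁ = - M j₀)
    (hinj : ∀ j1 ∈ S, ∀ j2 ∈ S, M j1 = M j2 → j1 = j2)
    (hbnd : ∀ j ∈ S, 2 * |M j| < (N:ℤ)) (hN2 : 2 ≤ N) :
    ∃ φ : ℝ, ∑ j ∈ S, Real.cos ((M j : ℝ) * φ) ≤ 0 := by
  by_contra hcon
  push_neg at hcon
  have hNR : (0:ℝ) < (N:ℝ) := by exact_mod_cast (by omega : 0 < N)
  have hNne : (N:ℝ) ≠ 0 := ne_of_gt hNR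
  have hπ := Real.pi_pos
  set a : ℤ := M j₀ with hadef
  have habs : ∀ j ∈ S, -(N:ℤ) < M j ∧ M j < (N:ℤ) := by
    intro j hj
    have hb := hbnd j hj
    have h1 : |M j| < (N:ℤ) := by nlinarith [abs_nonneg (M j)]
    exact abs_lt.mp h1
  have habs2 : ∀ j ∈ S, (-(N:ℤ) < M j + a ∧ M j + a < (N:ℤ))
      ∧ (-(N:ℤ) < M j - a ∧ M j - a < (N:ℤ)) := by
    intro j hj
    have hb1 := hbnd j hj
    have hb2 := hbnd j₀ hj₀S
    have e1 : |M j + a| ≤ |M j| + |a| := abs_add_le _ _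
    have e2 : |M j - a| ≤ |M j| + |a| := abs_sub _ _
    have h1 : |M j + a| < (N:ℤ) := by linarith
    have h2 : |M j - a| < (N:ℤ) := by linarith
    exact ⟨abs_lt.mp h1, abs_lt.mp h2⟩
  set φt : ℕ → ℝ := fun t => 2*Real.pi*(t:ℝ)/(N:ℝ) with hφtdef
  set RS : ℝ := ∑ t ∈ range N, (∑ j ∈ S, Real.cos ((M j : ℝ) * φt t))
      * (1 - Real.cos ((a:ℝ) * φt t)) with hRSdef
  -- positivity
  have hRSpos : 0 < RS := by
    rw [hRSdef]
    refine Finset.sum_pos' ?_ ?_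
    · intro t _
      have h1 := Real.cos_le_one ((a:ℝ) * φt t)
      exact mul_nonneg (le_of_lt (hcon _)) (by linarith)
    · refine ⟨1, mem_range.mpr (by omega), ?_⟩
      have haR : (a:ℝ) ≠ 0 := Int.cast_ne_zero.mpr ha
      have hx : (a:ℝ) * φt 1 ≠ 0 := by
        rw [hφtdef]
        simp only [Nat.cast_one]
        positivity
      have haN : |(a:ℝ)| < (N:ℝ) := by
        rw [← Int.cast_abs]
        have hb := hbnd j₀ hj₀S
        have : |a| < (N:ℤ) := by nlinarith [abs_nonneg a]
        exact_mod_cast this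
      have hxlt : |(a:ℝ) * φt 1| < 2 * Real.pi := by
        rw [hφtdef]
        simp only [Nat.cast_one, mul_one]
        rw [abs_mul, abs_div]
        have e1 : |(2*Real.pi : ℝ)| = 2*Real.pi := abs_of_pos (by linarith)
        have e2 : |(N:ℝ)| = (N:ℝ) := abs_of_pos hNR
        have hstep : |(a:ℝ)| * (2*Real.pi) / (N:ℝ) < 2*Real.pi := by
          rw [div_lt_iff₀ hNR]
          nlinarith [haN, hπ, abs_nonneg ((a:ℝ))]
        calc |(a:ℝ)| * (|2*Real.pi| / |(N:ℝ)|) = |(a:ℝ)| * (2*Real.pi) / (N:ℝ) := by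
              rw [e1, e2]; ring
          _ < 2*Real.pi := hstep
      have hclt : Real.cos ((a:ℝ) * φt 1) < 1 := by
        rcases lt_or_eq_of_le (Real.cos_le_one ((a:ℝ) * φt 1)) with h | h
        · exact h
        · exfalso
          have hlt1 := abs_lt.mp hxlt
          rw [Real.cos_eq_one_iff_of_lt_of_lt (by linarith [hlt1.1]) (by linarith [hlt1.2])] at h
          exact hx h
      exact mul_pos (hcon _) (by linarith)
  -- expand each term
  have hterm : ∀ t ∈ range N, (∑ j ∈ S, Real.cos ((M j : ℝ) * φt t))
      * (1 - Real.cos ((a:ℝ) * φt t))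
      = ∑ j ∈ S, (Real.cos (2*Real.pi*((M j :ℤ):ℝ)*(t:ℝ)/(N:ℝ))
          - Real.cos (2*Real.pi*((M j + a :ℤ):ℝ)*(t:ℝ)/(N:ℝ))/2
          - Real.cos (2*Real.pi*((M j - a :ℤ):ℝ)*(t:ℝ)/(N:ℝ))/2) := by
    intro t _
    rw [Finset.sum_mul]
    refine sum_congr rfl fun j _ => ?_
    have e1 : (M j : ℝ) * φt t = 2*Real.pi*((M j :ℤ):ℝ)*(t:ℝ)/(N:ℝ) := by
      rw [hφtdef]; push_cast; ring
    have e2 : (a:ℝ) * φt t = 2*Real.pi*((a:ℤ):ℝ)*(t:ℝ)/(N:ℝ) := by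
      rw [hφtdef]; push_cast; ring
    have hsum : 2*Real.pi*((M j + a :ℤ):ℝ)*(t:ℝ)/(N:ℝ)
        = 2*Real.pi*((M j :ℤ):ℝ)*(t:ℝ)/(N:ℝ) + 2*Real.pi*((a:ℤ):ℝ)*(t:ℝ)/(N:ℝ) := by
      push_cast; ring
    have hdiff : 2*Real.pi*((M j - a :ℤ):ℝ)*(t:ℝ)/(N:ℝ)
        = 2*Real.pi*((M j :ℤ):ℝ)*(t:ℝ)/(N:ℝ) - 2*Real.pi*((a:ℤ):ℝ)*(t:ℝ)/(N:ℝ) := by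
      push_cast; ring
    rw [e1, e2, hsum, hdiff, Real.cos_add, Real.cos_sub]
    ring
  have hRS2 : RS = (∑ j ∈ S, ∑ t ∈ range N, Real.cos (2*Real.pi*((M j :ℤ):ℝ)*(t:ℝ)/(N:ℝ)))
      - (∑ j ∈ S, ∑ t ∈ range N, Real.cos (2*Real.pi*((M j + a :ℤ):ℝ)*(t:ℝ)/(N:ℝ)))/2
      - (∑ j ∈ S, ∑ t ∈ range N, Real.cos (2*Real.pi*((M j - a :ℤ):ℝ)*(t:ℝ)/(N:ℝ)))/2 := by
    rw [hRSdef, sum_congr rfl hterm, Finset.sum_comm]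
    rw [Finset.sum_div, Finset.sum_div, ← Finset.sum_sub_distrib, ← Finset.sum_sub_distrib]
    refine sum_congr rfl fun j _ => ?_
    rw [Finset.sum_sub_distrib, Finset.sum_sub_distrib, Finset.sum_div, Finset.sum_div]
  -- evaluate the three sums
  have hS1 : ∑ j ∈ S, (∑ t ∈ range N, Real.cos (2*Real.pi*((M j :ℤ):ℝ)*(t:ℝ)/(N:ℝ)))
      = (N:ℝ) * ((S.filter (fun j => M j = 0)).card : ℝ) := by
    rw [← Finset.sum_filter_add_sum_filter_not S (fun j => M j = 0)]
    have hA : ∑ j ∈ S.filter (fun j => M j = 0),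
        (∑ t ∈ range N, Real.cos (2*Real.pi*((M j :ℤ):ℝ)*(t:ℝ)/(N:ℝ)))
        = ∑ _j ∈ S.filter (fun j => M j = 0), (N:ℝ) := by
      refine sum_congr rfl fun j hj => ?_
      rw [mem_filter] at hj
      exact cosSum_zero N (M j) hj.2
    have hBz : ∑ j ∈ S.filter (fun j => ¬ M j = 0),
        (∑ t ∈ range N, Real.cos (2*Real.pi*((M j :ℤ):ℝ)*(t:ℝ)/(N:ℝ))) = 0 := by
      refine Finset.sum_eq_zero fun j hj => ?_
      rw [mem_filter] at hj
      have hb := habs j hj.1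
      exact cosSum_ne N (M j) hj.2 hb.1 hb.2
    rw [hA, hBz, Finset.sum_const, add_zero, nsmul_eq_mul]
    ring
  have hS2 : ∑ j ∈ S, (∑ t ∈ range N, Real.cos (2*Real.pi*((M j - a :ℤ):ℝ)*(t:ℝ)/(N:ℝ)))
      = (N:ℝ) := by
    rw [Finset.sum_eq_single j₀]
    · have : M j₀ - a = 0 := by rw [hadef]; ring
      rw [this]
      exact cosSum_zero N 0 rfl
    · intro j hj hne
      have hMne : M j - a ≠ 0 := by
        intro hz
        exact hne (hinj j hj j₀ hj₀S (by omega))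
      have hb := (habs2 j hj).2
      exact cosSum_ne N (M j - a) hMne hb.1 hb.2
    · intro hcon2
      exact absurd hj₀S hcon2
  have hS3 : ∑ j ∈ S, (∑ t ∈ range N, Real.cos (2*Real.pi*((M j + a :ℤ):ℝ)*(t:ℝ)/(N:ℝ)))
      = (N:ℝ) := by
    rw [Finset.sum_eq_single j₁]
    · have : M j₁ + a = 0 := by rw [hadef, hj₁]; ring
      rw [this]
      exact cosSum_zero N 0 rfl
    · intro j hj hne
      have hMne : M j + a ≠ 0 := by
        intro hz
        refine hne (hinj j hj j₁ hj₁S ?_)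
        rw [hj₁]
        omega
      have hb := (habs2 j hj).1
      exact cosSum_ne N (M j + a) hMne hb.1 hb.2
    · intro hcon2
      exact absurd hj₁S hcon2
  -- the filter has at most one element
  have hcard : ((S.filter (fun j => M j = 0)).card : ℝ) ≤ 1 := by
    have h1 : (S.filter (fun j => M j = 0)).card ≤ 1 := by
      rw [Finset.card_le_one]
      intro x hx y hy
      rw [mem_filter] at hx hy
      exact hinj x hx.1 y hy.1 (by rw [hx.2, hy.2])
    exact_mod_cast h1
  rw [hS1, hS2, hS3] at hRS2
  have : RS ≤ 0 := by
    rw [hRS2]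
    nlinarith [hNR, hcard]
  linarith

/-- **Theorem.** Palinomials induced by 1089 palintiples have at least one root on the
unit circle. -/
theorem palinomial_root_on_unit_circle (n b : ℤ) (k : ℕ) (d c : ℕ → ℤ)
    (hp : IsPalintiple n b k d) (hc : IsCarries n b k d c)
    (hsym : IsSym k c) (hdvd : n + 1 ∣ b) :
    ∃ z : ℂ, ‖z‖ = 1 ∧
      ∑ j ∈ range (k + 1), ((d j : ℂ) - (n : ℂ) * (d (k - j) : ℂ)) * z ^ j = 0 := by
  obtain ⟨hn, hnb, hk, hdig, hdk0, hd00, hsum⟩ := hp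
  obtain ⟨hc0, hrec⟩ := hc
  obtain ⟨m, hb⟩ := hdvd
  have hbpos : 0 < b := by linarith
  have hn1pos : (0:ℤ) < n + 1 := by linarith
  have hn1ne : (n + 1 : ℤ) ≠ 0 := by linarith
  have hmpos : 0 < m := by
    by_contra hm
    push_neg at hm
    have : (n+1) * m ≤ 0 := mul_nonpos_of_nonneg_of_nonpos (by linarith) hm
    omega
  -- c k = 0
  have hckk : c k = 0 := by
    have h := hsym 0 (Nat.zero_le k)
    rw [hc0, Nat.sub_zero] at h
    exact h.symm
  -- c (k+1) = 0
  have hck1 : c (k+1) = 0 := by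
    have key : ∑ j ∈ range (k+1), (n * d (k-j) + c j) * b^j
        = ∑ j ∈ range (k+1), (d j + b * c (j+1)) * b^j := by
      refine sum_congr rfl fun j hj => ?_
      rw [hrec j (Nat.lt_succ_iff.mp (mem_range.mp hj))]
    have e1 : ∑ j ∈ range (k+1), (n * d (k-j) + c j) * b^j
        = n * (∑ j ∈ range (k+1), d (k-j) * b^j) + ∑ j ∈ range (k+1), c j * b^j := by
      rw [Finset.mul_sum, ← Finset.sum_add_distrib]
      exact sum_congr rfl fun j _ => by ring
    have e2 : ∑ j ∈ range (k+1), (d j + b * c (j+1)) * b^j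
        = (∑ j ∈ range (k+1), d j * b^j) + ∑ j ∈ range (k+1), c (j+1) * b^(j+1) := by
      rw [← Finset.sum_add_distrib]
      exact sum_congr rfl fun j _ => by ring
    have e3 : ∑ j ∈ range (k+2), c j * b^j
        = (∑ j ∈ range (k+1), c (j+1) * b^(j+1)) + c 0 * b^0 :=
      Finset.sum_range_succ' (fun j => c j * b^j) (k+1)
    have e4 : ∑ j ∈ range (k+2), c j * b^j
        = (∑ j ∈ range (k+1), c j * b^j) + c (k+1) * b^(k+1) :=
      Finset.sum_range_succ _ _
    have hbk : (0:ℤ) < b^(k+1) := pow_pos hbpos _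
    have : c (k+1) * b^(k+1) = 0 := by
      rw [e1, e2, hsum] at key
      rw [hc0] at e3
      nlinarith [key, e3, e4]
    exact by
      rcases mul_eq_zero.mp this with h | h
      · exact h
      · exact absurd h (by positivity)
  -- carry bounds
  have hcbnd : ∀ j, j ≤ k + 1 → 0 ≤ c j ∧ c j ≤ n - 1 := by
    intro j
    induction j with
    | zero => intro _; rw [hc0]; constructor <;> linarith
    | succ j ih =>
      intro hj
      have hj' : j ≤ k := by omega
      have h := hrec j hj'
      have hd1 := hdig j hj'
      have hd2 := hdig (k - j) (Nat.sub_le _ _)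
      have ihh := ih (by omega)
      constructor
      · by_contra hlt
        push_neg at hlt
        have hle : c (j+1) ≤ -1 := by omega
        have : b * c (j+1) ≤ b * (-1) := mul_le_mul_of_nonneg_left hle (le_of_lt hbpos)
        nlinarith [hd2.1, ihh.1, hd1.2]
      · by_contra hlt
        push_neg at hlt
        have hle : n ≤ c (j+1) := by omega
        have : b * n ≤ b * c (j+1) := mul_le_mul_of_nonneg_left hle (le_of_lt hbpos)
        nlinarith [hd2.2, ihh.2, hd1.1]
  -- base divisibility : (n-1) * d 0 = m * c 1
  have hbase : (n - 1) * d 0 = m * c 1 := by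
    have h0 := hrec 0 (Nat.zero_le k)
    rw [Nat.sub_zero, hc0] at h0
    have hkk := hrec k le_rfl
    rw [Nat.sub_self, hckk, hck1] at hkk
    have key : (n+1) * ((n-1) * d 0) = (n+1) * (m * c 1) := by
      linear_combination h0 + n * hkk + c 1 * hb
    exact mul_left_cancel₀ hn1ne key
  have hB : (n - 1) ∣ m * c 1 := ⟨d 0, hbase.symm⟩
  -- main recurrence divisibility
  have hREC : ∀ j, j + 1 ≤ k → (n - 1) ∣ (m * (c j + c (j+2)) - c (j+1)) := by
    intro j hj
    have h1 := hrec (j+1) hj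
    have h2 := hrec (k - (j+1)) (Nat.sub_le _ _)
    have e1 : k - (k - (j+1)) = j + 1 := by omega
    rw [e1] at h2
    have e2 : c (k - (j+1)) = c (j+1) := by
      have := hsym (k - (j+1)) (Nat.sub_le _ _)
      rw [e1] at this
      exact this
    have e3 : c (k - (j+1) + 1) = c j := by
      have h' := hsym (k - (j+1) + 1) (by omega)
      have : k - (k - (j+1) + 1) = j := by omega
      rw [this] at h'
      exact h'
    rw [e2, e3] at h2
    have key : (n+1) * ((n-1) * d (j+1)) = (n+1) * (m * c (j+2) + n * (m * c j) - c (j+1)) := by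
      linear_combination h1 + n * h2 + (c (j+2) + n * c j) * hb
    have h4 : (n-1) * d (j+1) = m * c (j+2) + n * (m * c j) - c (j+1) :=
      mul_left_cancel₀ hn1ne key
    exact ⟨d (j+1) - m * c j, by linear_combination (-1 : ℤ) * h4⟩
  -- KEY LEMMA : (n-1) ∣ c i for all i ≤ k
  have hKL : ∀ i, i ≤ k → (n - 1) ∣ c i := by
    intro i
    induction i using Nat.strong_induction_on with
    | _ i ih =>
      intro hik
      match i, hik with
      | 0, _ => rw [hc0]; exact dvd_zero _
      | (i'+1), hik =>
        -- (a) (n-1) ∣ m * c (i'+1)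
        have hmc : (n - 1) ∣ m * c (i'+1) := by
          match i' with
          | 0 => exact hB
          | (i''+1) =>
            have h := hREC i'' (by omega)
            have d1 := ih i'' (by omega) (by omega)
            have d2 := ih (i''+1) (by omega) (by omega)
            have e : m * c (i''+2) = (m * (c i'' + c (i''+2)) - c (i''+1)) - m * c i'' + c (i''+1) := by
              ring
            rw [e]
            exact dvd_add (dvd_sub h (Dvd.dvd.mul_left d1 m)) d2
        -- (b) the inner induction
        have hinner : ∀ t, (i'+1) + t ≤ k →
            (n - 1) ∣ m^t * c ((i'+1) + t) - auxP m (t+1) * c (i'+1) := by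
          intro t
          induction t using Nat.strong_induction_on with
          | _ t iht =>
            intro hle
            match t with
            | 0 =>
              have : m^0 * c ((i'+1) + 0) - auxP m 1 * c (i'+1) = 0 := by
                simp [auxP]
              rw [this]
              exact dvd_zero _
            | 1 =>
              have h := hREC i' (by omega)
              have d1 := ih i' (by omega) (by omega)
              have hP2 : auxP m 2 = 1 := by
                have h : auxP m 2 = auxP m 1 - m^2 * auxP m 0 := rfl
                rw [h]
                simp [auxP]
              have e : m^1 * c ((i'+1) + 1) - auxP m 2 * c (i'+1)
                  = (m * (c i' + c (i'+2)) - c (i'+1)) - m * c i' := by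
                rw [hP2]; ring
              rw [e]
              exact dvd_sub h (Dvd.dvd.mul_left d1 m)
            | (t''+2) =>
              have e := hREC ((i'+1) + t'') (by omega)
              have ht0 := iht t'' (by omega) (by omega)
              have ht1 := iht (t''+1) (by omega) (by omega)
              have hP : auxP m (t''+3) = auxP m (t''+2) - m^2 * auxP m (t''+1) := rfl
              have key : m^(t''+2) * c ((i'+1) + (t''+2)) - auxP m (t''+3) * c (i'+1)
                  = m^(t''+1) * (m * (c ((i'+1) + t'') + c ((i'+1) + t'' + 2)) - c ((i'+1) + t'' + 1))
                    - m^2 * (m^t'' * c ((i'+1) + t'') - auxP m (t''+1) * c (i'+1))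
                    + (m^(t''+1) * c ((i'+1) + (t''+1)) - auxP m (t''+2) * c (i'+1)) := by
                rw [hP]
                have e1 : (i'+1) + (t''+2) = (i'+1) + t'' + 2 := by omega
                have e2 : (i'+1) + (t''+1) = (i'+1) + t'' + 1 := by omega
                rw [e1, e2]; ring
              rw [key]
              exact dvd_add (dvd_sub (Dvd.dvd.mul_left e _) (Dvd.dvd.mul_left ht0 _)) ht1
        -- (c) conclude
        obtain ⟨s, hs⟩ := auxP_mod m (k - (i'+1))
        have h1 := hinner (k - (i'+1)) (by omega)
        have e : (i'+1) + (k - (i'+1)) = k := by omega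
        rw [e] at h1
        have efin : c (i'+1) = -(m^(k - (i'+1)) * c k - auxP m (k - (i'+1) + 1) * c (i'+1))
            - (m * s) * (m * c (i'+1)) := by
          rw [hckk, hs]; ring
        rw [efin]
        exact dvd_sub (dvd_neg.mpr h1) (Dvd.dvd.mul_left hmc (m * s))
  -- every carry is 0 or n-1
  have hext : ∀ j, j ≤ k → c j = 0 ∨ c j = n - 1 := by
    intro j hj
    obtain ⟨t, ht⟩ := hKL j hj
    have hbd := hcbnd j (by omega)
    have hn1 : (0:ℤ) < n - 1 := by linarith
    have ht0 : 0 ≤ t := by nlinarith [hbd.1]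
    have ht1 : t ≤ 1 := by nlinarith [hbd.2]
    interval_cases t
    · left; rw [ht]; ring
    · right; rw [ht]; ring
  -- the support set
  set S : Finset ℕ := (range k).filter (fun j => c (j+1) ≠ 0) with hSdef
  have hSprop : ∀ j ∈ S, j + 2 ≤ k ∧ c (j+1) = n - 1 := by
    intro j hj
    rw [hSdef, mem_filter, mem_range] at hj
    obtain ⟨hjk, hjc⟩ := hj
    have h2 : j + 2 ≤ k := by
      by_contra hcon
      have : j + 1 = k := by omega
      rw [this] at hjc
      exact hjc hckk
    refine ⟨h2, ?_⟩
    rcases hext (j+1) (by omega) with h | h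
    · exact absurd h hjc
    · exact h
  have hSsymm : ∀ j ∈ S, (k - 2 - j) ∈ S := by
    intro j hj
    obtain ⟨h2, hval⟩ := hSprop j hj
    have e : k - 2 - j + 1 = k - (j+1) := by omega
    have hs := hsym (j+1) (by omega)
    rw [hSdef, mem_filter, mem_range]
    constructor
    · omega
    · rw [e, ← hs, hval]
      intro hcon
      omega
  have hSne : S.Nonempty := by
    by_contra hcon
    rw [Finset.not_nonempty_iff_eq_empty, hSdef, Finset.filter_eq_empty_iff] at hcon
    have hcz : ∀ j, j ≤ k + 1 → c j = 0 := by
      intro j hj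
      match j with
      | 0 => exact hc0
      | (j'+1) =>
        rcases Nat.lt_or_ge j' k with h | h
        · have := hcon (mem_range.mpr h)
          simpa using this
        · have : j' + 1 = k + 1 ∨ j' + 1 = k := by omega
          rcases this with h | h
          · rw [h]; exact hck1
          · rw [h]; exact hckk
    have h0 := hrec 0 (Nat.zero_le k)
    rw [Nat.sub_zero, hc0, hcz 1 (by omega)] at h0
    have hkk := hrec k le_rfl
    rw [Nat.sub_self, hckk, hck1] at hkk
    have : (n * n - 1) * d 0 = 0 := by linear_combination h0 + n * hkk
    have hne : (n * n - 1 : ℤ) ≠ 0 := by nlinarith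
    rcases mul_eq_zero.mp this with h | h
    · exact hne h
    · exact hd00 h
  have hk2 : 2 ≤ k := by
    obtain ⟨j, hj⟩ := hSne
    have := (hSprop j hj).1
    omega
  -- frequencies
  set M : ℕ → ℤ := fun j => 2*(j:ℤ) - (k:ℤ) + 2 with hMdef
  have hMinj : ∀ j1 j2 : ℕ, M j1 = M j2 → j1 = j2 := by
    intro j1 j2 h
    rw [hMdef] at h
    simp only at h
    omega
  have hMsymm : ∀ j ∈ S, M (k - 2 - j) = -(M j) := by
    intro j hj
    have h2 := (hSprop j hj).1
    rw [hMdef]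
    simp only
    omega
  have hMbound : ∀ j ∈ S, -((k:ℤ) - 2) ≤ M j ∧ M j ≤ (k:ℤ) - 2 := by
    intro j hj
    have h2 := (hSprop j hj).1
    rw [hMdef]
    simp only
    omega
  -- center degenerate case
  by_cases hall : ∀ j ∈ S, M j = 0
  case pos =>
    exfalso
    obtain ⟨j₁, hj₁⟩ := hSne
    have hMj₁ := hall j₁ hj₁
    have hkeq : k = 2 * j₁ + 2 := by
      rw [hMdef] at hMj₁
      simp only at hMj₁
      omega
    have hnotin : (j₁ + 1) ∉ S := by
      intro hcon
      have := hall (j₁+1) hcon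
      have := hMinj j₁ (j₁+1) (hMj₁.trans this.symm)
      omega
    have hc2 : c (j₁ + 2) = 0 := by
      by_contra hcon
      exact hnotin (by
        rw [hSdef, mem_filter, mem_range]
        exact ⟨by omega, hcon⟩)
    have h := hrec (j₁+1) (by omega)
    have e : k - (j₁+1) = j₁ + 1 := by omega
    rw [e, (hSprop j₁ hj₁).2, hc2] at h
    have hd := hdig (j₁+1) (by omega)
    have hx : (n-1) * (d (j₁+1) + 1) = 0 := by linear_combination h
    have : d (j₁+1) = -1 := by
      have hne : (n - 1 : ℤ) ≠ 0 := by linarith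
      rcases mul_eq_zero.mp hx with hh | hh
      · exact absurd hh hne
      · linarith
    linarith [hd.1]
  case neg =>
  push_neg at hall
  obtain ⟨j₀, hj₀S, hj₀⟩ := hall
  set a : ℤ := M j₀ with hadef
  -- the cosine sum
  set G : ℝ → ℝ := fun φ => ∑ j ∈ S, Real.cos ((M j : ℝ) * φ) with hGdef
  -- pairing lemma
  have hpair : ∀ φ : ℝ, ∑ j ∈ S, Complex.exp ((M j : ℝ) * φ * Complex.I) = ((G φ : ℝ) : ℂ) := by
    intro φ
    have hswap : ∑ j ∈ S, Complex.exp ((M j : ℝ) * φ * Complex.I)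
        = ∑ j ∈ S, Complex.exp (-(M j : ℝ) * φ * Complex.I) := by
      refine Finset.sum_nbij' (fun j => k - 2 - j) (fun j => k - 2 - j) ?_ ?_ ?_ ?_ ?_
      · exact hSsymm
      · exact hSsymm
      · intro j hj; have := (hSprop j hj).1; omega
      · intro j hj; have := (hSprop j hj).1; omega
      · intro j hj
        rw [hMsymm j hj]
        push_cast
        ring_nf
    have h2 : (2:ℂ) * ∑ j ∈ S, Complex.exp ((M j : ℝ) * φ * Complex.I)
        = 2 * ((G φ : ℝ) : ℂ) := by
      rw [two_mul]
      nth_rewrite 2 [hswap]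
      rw [← Finset.sum_add_distrib]
      simp only [hGdef]
      push_cast [Complex.ofReal_cos]
      rw [Finset.mul_sum]
      refine sum_congr rfl fun j _ => ?_
      have h2c := Complex.two_cos (x := ((M j : ℝ) * φ : ℝ))
      push_cast at h2c ⊢
      simp only [neg_mul] at h2c ⊢
      linear_combination -h2c
    have h2ne : (2:ℂ) ≠ 0 := two_ne_zero
    exact mul_left_cancel₀ h2ne h2
  -- existence of a nonpositive value of G
  have hkey : ∃ φ₀ : ℝ, G φ₀ ≤ 0 := by
    have hj₁S := hSsymm j₀ hj₀S
    have hj₁M := hMsymm j₀ hj₀S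
    have hinj' : ∀ j1 ∈ S, ∀ j2 ∈ S, M j1 = M j2 → j1 = j2 :=
      fun j1 _ j2 _ h => hMinj j1 j2 h
    have hbnd : ∀ j ∈ S, 2 * |M j| < ((2*k+1 : ℕ):ℤ) := by
      intro j hj
      have hb := hMbound j hj
      have : |M j| ≤ (k:ℤ) - 2 := abs_le.mpr ⟨hb.1, hb.2⟩
      push_cast
      omega
    obtain ⟨φ₀, hφ₀⟩ := key_nonpos S M (2*k+1) j₀ (k - 2 - j₀) hj₀S hj₁S hj₀ hj₁M hinj' hbnd
      (by omega)
    exact ⟨φ₀, by rw [hGdef]; exact hφ₀⟩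
  -- IVT
  obtain ⟨φ₀, hφ₀⟩ := hkey
  have hGcont : Continuous G := by
    rw [hGdef]
    exact continuous_finset_sum _ fun j _ =>
      Real.continuous_cos.comp (continuous_const.mul continuous_id)
  have hG0 : 0 < G 0 := by
    rw [hGdef]
    simp only [mul_zero, Real.cos_zero]
    rw [Finset.sum_const, nsmul_eq_mul, mul_one]
    exact_mod_cast Finset.card_pos.mpr hSne
  have hivt : ∃ φs, G φs = 0 := by
    have hsub := intermediate_value_uIcc (a := φ₀) (b := 0) (f := G) hGcont.continuousOn
    have h0mem : (0:ℝ) ∈ Set.uIcc (G φ₀) (G 0) := by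
      rw [Set.mem_uIcc]
      left
      exact ⟨hφ₀, le_of_lt hG0⟩
    obtain ⟨φs, _, hφs⟩ := hsub h0mem
    exact ⟨φs, hφs⟩
  obtain ⟨φs, hφs⟩ := hivt
  -- final assembly
  refine ⟨Complex.exp ((2*φs : ℝ) * Complex.I), Complex.norm_exp_ofReal_mul_I _, ?_⟩
  set z : ℂ := Complex.exp ((2*φs : ℝ) * Complex.I) with hzdef
  have hcoef : ∑ j ∈ range (k+1), ((d j : ℂ) - (n:ℂ) * (d (k-j) : ℂ)) * z ^ j
      = ∑ j ∈ range (k+1), ((c j : ℂ) - (b:ℂ) * (c (j+1) : ℂ)) * z ^ j := by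
    refine sum_congr rfl fun j hj => ?_
    have h := hrec j (Nat.lt_succ_iff.mp (mem_range.mp hj))
    have : (d j : ℂ) - (n:ℂ) * (d (k-j) : ℂ) = (c j : ℂ) - (b:ℂ) * (c (j+1) : ℂ) := by
      have hz : d j - n * d (k-j) = c j - b * c (j+1) := by linarith
      exact_mod_cast congrArg (fun x : ℤ => (x : ℂ)) hz
    rw [this]
  rw [hcoef]
  set B₀ : ℂ := ∑ j ∈ range k, (c (j+1) : ℂ) * z ^ j with hB₀def
  have hsplit : ∑ j ∈ range (k+1), ((c j : ℂ) - (b:ℂ) * (c (j+1) : ℂ)) * z ^ j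
      = (z - (b:ℂ)) * B₀ := by
    have hA : ∑ j ∈ range (k+1), (c j : ℂ) * z ^ j = z * B₀ := by
      rw [Finset.sum_range_succ' (fun j => (c j : ℂ) * z ^ j) k]
      rw [hc0]
      push_cast
      rw [hB₀def, Finset.mul_sum]
      simp only [zero_mul, add_zero]
      refine sum_congr rfl fun j _ => by ring
    have hBB : ∑ j ∈ range (k+1), (c (j+1) : ℂ) * z ^ j = B₀ := by
      rw [Finset.sum_range_succ, hck1, hB₀def]
      push_cast
      simp
    calc ∑ j ∈ range (k+1), ((c j : ℂ) - (b:ℂ) * (c (j+1) : ℂ)) * z ^ j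
        = (∑ j ∈ range (k+1), (c j : ℂ) * z ^ j)
          - (b:ℂ) * ∑ j ∈ range (k+1), (c (j+1) : ℂ) * z ^ j := by
          rw [Finset.mul_sum, ← Finset.sum_sub_distrib]
          exact sum_congr rfl fun j _ => by ring
      _ = z * B₀ - (b:ℂ) * B₀ := by rw [hA, hBB]
      _ = (z - (b:ℂ)) * B₀ := by ring
  rw [hsplit]
  have hB₀zero : B₀ = 0 := by
    have hfilter : B₀ = ∑ j ∈ S, (c (j+1) : ℂ) * z ^ j := by
      rw [hB₀def, hSdef]
      rw [← Finset.sum_filter_add_sum_filter_not (range k) (fun j => c (j+1) ≠ 0)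
        (fun j => (c (j+1) : ℂ) * z ^ j)]
      have : ∑ j ∈ (range k).filter (fun j => ¬ c (j+1) ≠ 0), (c (j+1) : ℂ) * z ^ j = 0 := by
        refine Finset.sum_eq_zero fun j hj => ?_
        rw [mem_filter] at hj
        have : c (j+1) = 0 := not_not.mp hj.2
        rw [this]
        push_cast
        ring
      rw [this, add_zero]
    have hzj : ∀ j ∈ S, z ^ j
        = Complex.exp ((((k:ℝ)-2)*φs : ℝ) * Complex.I) * Complex.exp ((M j : ℝ) * φs * Complex.I) := by
      intro j hj
      rw [hzdef, ← Complex.exp_nat_mul, ← Complex.exp_add]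
      congr 1
      push_cast [hMdef]
      ring
    calc B₀ = ∑ j ∈ S, (c (j+1) : ℂ) * z ^ j := hfilter
      _ = ((n:ℂ) - 1) * ∑ j ∈ S, z ^ j := by
          rw [Finset.mul_sum]
          refine sum_congr rfl fun j hj => ?_
          rw [(hSprop j hj).2]
          push_cast
          ring
      _ = ((n:ℂ) - 1) * (Complex.exp ((((k:ℝ)-2)*φs : ℝ) * Complex.I)
            * ∑ j ∈ S, Complex.exp ((M j : ℝ) * φs * Complex.I)) := by
          congr 1
          rw [Finset.mul_sum]
          exact sum_congr rfl hzj
      _ = 0 := by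
          rw [hpair φs, hφs]
          push_cast
          ring
  rw [hB₀zero]
  ring
end
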